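/- arXiv:2406.02800 — 6 statements merged into one kernel-verified Lean document; each statement's English description precedes it below -/
import Mathlib

section
/- For every T > 0, lim_{T → ∞} E[Z_T²] = β²/b². Equivalently, ∫₀^∞ ∫₀^∞ e^{−b(t+s)} · ½ (g(t) + g(s) − g(|t − s|)) ds dt = β²/b². -/
open MeasureTheory Filter Set Real

lemma abs_mul_le_half (x y : ℝ) : |x * y| ≤ (x*x + y*y)/2 := by
  rw [abs_mul]
  nlinarith [sq_nonneg (|x| - |y|), sq_abs x, sq_abs y, abs_nonneg x, abs_nonneg y]

lemma mul_int {Ω : Type*} [MeasurableSpace Ω] {P : Measure Ω} {X Y : Ω → ℝ}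
    (hXm : AEStronglyMeasurable X P) (hYm : AEStronglyMeasurable Y P)
    (hX2 : Integrable (fun ω => X ω * X ω) P) (hY2 : Integrable (fun ω => Y ω * Y ω) P) :
    Integrable (fun ω => X ω * Y ω) P := by
  refine Integrable.mono' ((hX2.add hY2).div_const 2) (hXm.mul hYm) ?_
  exact Eventually.of_forall (fun ω => by
    rw [Real.norm_eq_abs]; exact abs_mul_le_half _ _)

lemma abs_int_mul_le {Ω : Type*} [MeasurableSpace Ω] {P : Measure Ω} {X Y : Ω → ℝ}
    (hXm : AEStronglyMeasurable X P) (hYm : AEStronglyMeasurable Y P)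
    (hX2 : Integrable (fun ω => X ω * X ω) P) (hY2 : Integrable (fun ω => Y ω * Y ω) P) :
    ∫ ω, |X ω * Y ω| ∂P ≤ ((∫ ω, X ω * X ω ∂P) + ∫ ω, Y ω * Y ω ∂P) / 2 := by
  have h1 : ∫ ω, |X ω * Y ω| ∂P ≤ ∫ ω, (X ω * X ω + Y ω * Y ω)/2 ∂P :=
    integral_mono (mul_int hXm hYm hX2 hY2).abs ((hX2.add hY2).div_const 2)
      (fun ω => abs_mul_le_half _ _)
  calc ∫ ω, |X ω * Y ω| ∂P ≤ ∫ ω, (X ω * X ω + Y ω * Y ω)/2 ∂P := h1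
    _ = ((∫ ω, X ω * X ω ∂P) + ∫ ω, Y ω * Y ω ∂P) / 2 := by
        rw [integral_div, integral_add hX2 hY2]

lemma gpos {Ω : Type*} [MeasurableSpace Ω] (P : Measure Ω) [IsProbabilityMeasure P]
    {α2 : ℝ} (hα2 : 0 < α2) {g : ℝ → ℝ}
    (hg_nonneg : ∀ t, 0 ≤ t → 0 ≤ g t) (hg_zero : g 0 = 0)
    (hg_lim : Tendsto g atTop (nhds α2))
    {B : ℝ → Ω → ℝ} (hB_meas : Measurable fun p : ℝ × Ω => B p.1 p.2)
    (hB_cov : ∀ s, 0 ≤ s → ∀ t, 0 ≤ t →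
      ∫ ω, B s ω * B t ω ∂P = (g t + g s - g |t - s|) / 2) :
    ∀ δ, 0 < δ → 0 < g δ := by
  have measB : ∀ t : ℝ, AEStronglyMeasurable (fun ω => B t ω) P := fun t =>
    (hB_meas.comp measurable_prodMk_left).aestronglyMeasurable
  have hvar : ∀ t, 0 ≤ t → Integrable (fun ω => B t ω * B t ω) P →
      ∫ ω, B t ω * B t ω ∂P = g t := by
    intro t ht _
    rw [hB_cov t ht t ht]
    simp [hg_zero]
  have sqInt : ∀ t, 0 ≤ t → g t ≠ 0 → Integrable (fun ω => B t ω * B t ω) P := by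
    intro t ht hne
    by_contra hni
    have h0 : ∫ ω, B t ω * B t ω ∂P = 0 := integral_undef hni
    have h1 := hB_cov t ht t ht
    rw [h0] at h1
    simp [hg_zero] at h1
    exact hne h1.symm
  intro δ hδ
  rcases lt_or_ge 0 (g δ) with h | h
  · exact h
  have hgδ : g δ = 0 := le_antisymm h (hg_nonneg δ hδ.le)
  exfalso
  -- find T₀ beyond which g > α2/2
  have hev : ∀ᶠ t in atTop, α2/2 < g t := hg_lim.eventually (eventually_gt_nhds (by linarith))
  rw [eventually_atTop] at hev
  obtain ⟨t₁, ht₁⟩ := hev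
  set T₀ : ℝ := max t₁ 0 with hT₀def
  have hT₀0 : (0:ℝ) ≤ T₀ := le_max_right _ _
  have hgT : ∀ t, T₀ ≤ t → α2/2 < g t := fun t ht => ht₁ t (le_trans (le_max_left _ _) ht)
  have hgTne : ∀ t, T₀ ≤ t → g t ≠ 0 := fun t ht =>
    (lt_trans (by linarith : (0:ℝ) < α2/2) (hgT t ht)).ne'
  have hTt : ∀ t, T₀ ≤ t → 0 ≤ t := fun t ht => le_trans hT₀0 ht
  have hstep : ∀ t, T₀ ≤ t → (fun ω => B (t+δ) ω) =ᵐ[P] (fun ω => B t ω) := by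
    intro t ht
    have ht0 : 0 ≤ t := hTt t ht
    have htδ : T₀ ≤ t + δ := by linarith
    have htδ0 : 0 ≤ t + δ := by linarith
    have hXX := sqInt (t+δ) htδ0 (hgTne _ htδ)
    have hYY := sqInt t ht0 (hgTne _ ht)
    have hXY : Integrable (fun ω => B (t+δ) ω * B t ω) P :=
      mul_int (measB _) (measB _) hXX hYY
    have hfe : (fun ω => (B (t+δ) ω - B t ω)^2)
        = fun ω => (B (t+δ) ω * B (t+δ) ω - 2*(B (t+δ) ω * B t ω)) + B t ω * B t ω := by
      funext ω; ring
    have hsq : Integrable (fun ω => (B (t+δ) ω - B t ω)^2) P := by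
      rw [hfe]
      exact Integrable.add (by exact hXX.sub (hXY.const_mul 2)) hYY
    have hXYval : ∫ ω, B (t+δ) ω * B t ω ∂P = (g t + g (t+δ)) / 2 := by
      rw [hB_cov (t+δ) htδ0 t ht0]
      have habs : |t - (t+δ)| = δ := by
        rw [abs_sub_comm]; simp [abs_of_pos hδ]
      rw [habs, hgδ]; ring
    have hsub : Integrable (fun ω => B (t+δ) ω * B (t+δ) ω - 2*(B (t+δ) ω * B t ω)) P := by
      exact hXX.sub (hXY.const_mul 2)
    have hval : ∫ ω, (B (t+δ) ω - B t ω)^2 ∂P = 0 := by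
      rw [hfe, integral_add hsub hYY, integral_sub hXX (hXY.const_mul 2), integral_const_mul,
        hvar (t+δ) htδ0 hXX, hvar t ht0 hYY, hXYval]
      ring
    have hae := (integral_eq_zero_iff_of_nonneg (fun ω => sq_nonneg _) hsq).1 hval
    filter_upwards [hae] with ω hω
    have h0 : (B (t+δ) ω - B t ω)^2 = 0 := hω
    have h1 : B (t+δ) ω - B t ω = 0 := by
      exact pow_eq_zero_iff two_ne_zero |>.1 h0
    linarith
  have hchain : ∀ k : ℕ, (fun ω => B (T₀ + k*δ) ω) =ᵐ[P] fun ω => B T₀ ω := by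
    intro k
    induction k with
    | zero => simp
    | succ n ih =>
      have h1 := hstep (T₀ + n*δ)
        (by nlinarith [Nat.cast_nonneg (α := ℝ) n] : T₀ ≤ T₀ + (n:ℝ)*δ)
      have heq : T₀ + ((n+1:ℕ):ℝ)*δ = (T₀ + (n:ℝ)*δ) + δ := by push_cast; ring
      rw [heq]
      exact h1.trans ih
  have hgval : ∀ k : ℕ, g (T₀ + k*δ) = g T₀ := by
    intro k
    have hk0 : 0 ≤ (k:ℝ)*δ := mul_nonneg (Nat.cast_nonneg k) hδ.le
    have h1 : ∫ ω, B (T₀+k*δ) ω * B (T₀+k*δ) ω ∂P = ∫ ω, B T₀ ω * B T₀ ω ∂P :=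
      integral_congr_ae ((hchain k).mul (hchain k))
    rw [hvar _ (by linarith) (sqInt _ (by linarith) (hgTne _ (by linarith))),
      hvar T₀ hT₀0 (sqInt _ hT₀0 (hgTne _ le_rfl))] at h1
    exact h1
  have hgT₀ : g T₀ = α2 := by
    have hlim2 : Tendsto (fun k : ℕ => g (T₀ + k*δ)) atTop (nhds α2) := by
      apply hg_lim.comp
      apply tendsto_atTop_add_const_left
      exact tendsto_natCast_atTop_atTop.atTop_mul_const hδ
    rw [show (fun k : ℕ => g (T₀ + k*δ)) = fun _ : ℕ => g T₀ from funext hgval] at hlim2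
    exact tendsto_nhds_unique tendsto_const_nhds hlim2
  have hgkδ : ∀ k : ℕ, g ((k:ℝ)*δ) = 0 := by
    intro k
    have hk0 : 0 ≤ (k:ℝ)*δ := mul_nonneg (Nat.cast_nonneg k) hδ.le
    have h1 := hB_cov (T₀ + k*δ) (by linarith) T₀ hT₀0
    have h2 : ∫ ω, B (T₀+k*δ) ω * B T₀ ω ∂P = ∫ ω, B T₀ ω * B T₀ ω ∂P :=
      integral_congr_ae ((hchain k).mul EventuallyEq.rfl)
    rw [h2, hvar T₀ hT₀0 (sqInt _ hT₀0 (hgTne _ le_rfl))] at h1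
    have habs : |T₀ - (T₀ + k*δ)| = (k:ℝ)*δ := by
      rw [abs_sub_comm]; simp [abs_of_nonneg hk0]
    rw [habs, hgval k, hgT₀] at h1
    linarith
  have hlim3 : Tendsto (fun k : ℕ => g ((k:ℝ)*δ)) atTop (nhds α2) :=
    hg_lim.comp (tendsto_natCast_atTop_atTop.atTop_mul_const hδ)
  rw [show (fun k : ℕ => g ((k:ℝ)*δ)) = fun _ : ℕ => (0:ℝ) from funext hgkδ] at hlim3
  exact absurd (tendsto_nhds_unique tendsto_const_nhds hlim3) (by linarith)


lemma exp_int_Ioi (b : ℝ) (hb : 0 < b) : ∫ x in Ioi (0:ℝ), Real.exp (-b * x) = 1 / b := by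
  have h := integral_comp_mul_left_Ioi (fun y => Real.exp (-y)) 0 hb
  simp only [mul_zero] at h
  have : (fun x => Real.exp (-b * x)) = fun x => Real.exp (-(b * x)) := by
    funext x; ring_nf
  rw [this]
  rw [h, integral_exp_neg_Ioi]
  simp [smul_eq_mul, one_div]

lemma shift_int (f : ℝ → ℝ) (t : ℝ) :
    ∫ x in Ioi t, f x = ∫ x in Ioi (0:ℝ), f (x + t) := by
  have h := (measurePreserving_add_right (volume : Measure ℝ) t).setIntegral_preimage_emb
    (MeasurableEquiv.addRight t).measurableEmbedding f (Ioi t)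
  rw [← h]
  congr 1
  ext x
  simp [mem_preimage, mem_Ioi]


-- diagonal has measure zero
lemma diag_null : (volume : Measure (ℝ×ℝ)) {p : ℝ×ℝ | p.1 = p.2} = 0 := by
  have hms : MeasurableSet {p : ℝ×ℝ | p.1 = p.2} :=
    measurableSet_eq_fun measurable_fst measurable_snd
  rw [Measure.volume_eq_prod, Measure.prod_apply hms]
  have : ∀ x : ℝ, (Prod.mk x ⁻¹' {p : ℝ×ℝ | p.1 = p.2}) = {x} := by
    intro x; ext y; simp [eq_comm]
  simp [this]

lemma wedge_integral (f : ℝ×ℝ → ℝ)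
    (hf : IntegrableOn f {p : ℝ×ℝ | 0 < p.1 ∧ p.1 < p.2}) :
    ∫ p in {p : ℝ×ℝ | 0 < p.1 ∧ p.1 < p.2}, f p
      = ∫ t in Ioi (0:ℝ), ∫ s in Ioi t, f (t, s) := by
  have hD : MeasurableSet {p : ℝ×ℝ | 0 < p.1 ∧ p.1 < p.2} :=
    (measurableSet_lt measurable_const measurable_fst).inter
      (measurableSet_lt measurable_fst measurable_snd)
  rw [← integral_indicator hD, Measure.volume_eq_prod,
    integral_prod _ ((integrable_indicator_iff hD).2 (by rwa [Measure.volume_eq_prod] at hf))]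
  rw [← integral_indicator measurableSet_Ioi]
  congr 1
  funext t
  by_cases ht : 0 < t
  · rw [indicator_of_mem (show t ∈ Ioi (0:ℝ) from ht), ← integral_indicator measurableSet_Ioi]
    congr 1; funext s
    by_cases hs : t < s
    · rw [indicator_of_mem (show s ∈ Ioi t from hs), indicator_of_mem (show (t,s) ∈ {p : ℝ×ℝ | 0 < p.1 ∧ p.1 < p.2} from ⟨ht, hs⟩)]
    · rw [indicator_of_notMem (show s ∉ Ioi t by simpa using hs), indicator_of_notMem (show (t,s) ∉ {p : ℝ×ℝ | 0 < p.1 ∧ p.1 < p.2} by simp [ht, hs])]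
  · rw [indicator_of_notMem (show t ∉ Ioi (0:ℝ) by simpa using ht)]
    have h0 : ∀ s : ℝ, indicator {p : ℝ×ℝ | 0 < p.1 ∧ p.1 < p.2} f (t, s) = 0 := by
      intro s; exact indicator_of_notMem (by simp [ht]) _
    simp [h0]

lemma square_split (f : ℝ×ℝ → ℝ) (hsym : ∀ p : ℝ×ℝ, f p.swap = f p)
    (hf : IntegrableOn f (Ioi (0:ℝ) ×ˢ Ioi (0:ℝ))) :
    ∫ p in Ioi (0:ℝ) ×ˢ Ioi (0:ℝ), f p
      = 2 * ∫ p in {p : ℝ×ℝ | 0 < p.1 ∧ p.1 < p.2}, f p := by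
  set D : Set (ℝ×ℝ) := {p : ℝ×ℝ | 0 < p.1 ∧ p.1 < p.2} with hDdef
  set D' : Set (ℝ×ℝ) := {p : ℝ×ℝ | 0 < p.2 ∧ p.2 < p.1} with hD'def
  have hD : MeasurableSet D :=
    (measurableSet_lt measurable_const measurable_fst).inter
      (measurableSet_lt measurable_fst measurable_snd)
  have hD' : MeasurableSet D' :=
    (measurableSet_lt measurable_const measurable_snd).inter
      (measurableSet_lt measurable_snd measurable_fst)
  have hDsub : D ⊆ Ioi (0:ℝ) ×ˢ Ioi (0:ℝ) := by
    rintro ⟨x, y⟩ ⟨h1, h2⟩; exact ⟨h1, lt_trans h1 h2⟩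
  have hD'sub : D' ⊆ Ioi (0:ℝ) ×ˢ Ioi (0:ℝ) := by
    rintro ⟨x, y⟩ ⟨h1, h2⟩; exact ⟨lt_trans h1 h2, h1⟩
  have hae : (Ioi (0:ℝ) ×ˢ Ioi (0:ℝ) : Set (ℝ×ℝ)) =ᵐ[(volume : Measure (ℝ×ℝ))] (D ∪ D' : Set (ℝ×ℝ)) := by
    rw [MeasureTheory.ae_eq_set]
    constructor
    · refine measure_mono_null ?_ diag_null
      rintro ⟨x, y⟩ ⟨⟨hx, hy⟩, hn⟩
      simp only [hDdef, hD'def, mem_union, mem_setOf_eq, not_or, not_and] at hn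
      exact le_antisymm (not_lt.1 (hn.2 hy)) (not_lt.1 (hn.1 hx))
    · have hsub : (D ∪ D') \ (Ioi (0:ℝ) ×ˢ Ioi (0:ℝ)) = ∅ := by
        rw [diff_eq_empty]
        exact union_subset hDsub hD'sub
      rw [hsub]; simp
  have hswap : ∫ p in D', f p = ∫ p in D, f p := by
    have hpre : Prod.swap ⁻¹' D = D' := by
      ext ⟨x, y⟩; simp [hDdef, hD'def, Prod.swap]
    have hmp : MeasurePreserving (Prod.swap : ℝ×ℝ → ℝ×ℝ) volume volume := by
      rw [Measure.volume_eq_prod]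
      exact Measure.measurePreserving_swap
    have h2 := hmp.setIntegral_preimage_emb
      (MeasurableEquiv.prodComm : ℝ × ℝ ≃ᵐ ℝ × ℝ).measurableEmbedding f D
    rw [hpre] at h2
    rw [← h2]
    exact setIntegral_congr_fun hD' (fun p _ => (hsym p).symm)
  have hdisj : Disjoint D D' := by
    rw [Set.disjoint_left]
    rintro ⟨x, y⟩ ⟨_, h2⟩ ⟨_, h4⟩
    exact absurd (lt_trans h2 h4) (lt_irrefl _)
  rw [setIntegral_congr_set hae, setIntegral_union hdisj hD' (hf.mono_set hDsub) (hf.mono_set hD'sub), hswap]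
  ring


lemma detval (b C : ℝ) (hb : 0 < b) (G : ℝ → ℝ) (hGc : Continuous G)
    (hGbd : ∀ x, |G x| ≤ C) (hGeven : ∀ x, G (-x) = G x) :
    IntegrableOn (fun p : ℝ×ℝ =>
        Real.exp (-b*(p.1+p.2)) * ((G p.1 + G p.2 - G (p.1-p.2))/2)) (Ioi 0 ×ˢ Ioi 0) ∧
    ∫ p in Ioi (0:ℝ) ×ˢ Ioi (0:ℝ),
        Real.exp (-b*(p.1+p.2)) * ((G p.1 + G p.2 - G (p.1-p.2))/2)
      = (∫ x in Ioi (0:ℝ), Real.exp (-b*x) * G x) / (2*b) := by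
  set u : ℝ → ℝ := fun x => Real.exp (-b*x) with hu
  set w : ℝ → ℝ := fun x => Real.exp (-b*x) * G x with hw
  have hconv : ∀ f : ℝ×ℝ → ℝ, IntegrableOn f (Ioi (0:ℝ) ×ˢ Ioi (0:ℝ)) volume ↔
      Integrable f ((volume.restrict (Ioi 0)).prod (volume.restrict (Ioi 0))) := by
    intro f
    rw [IntegrableOn, Measure.volume_eq_prod, Measure.prod_restrict]
  have hiconv : ∀ f : ℝ×ℝ → ℝ, ∫ p in Ioi (0:ℝ) ×ˢ Ioi (0:ℝ), f p =
      ∫ p, f p ∂((volume.restrict (Ioi 0)).prod (volume.restrict (Ioi 0))) := by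
    intro f
    rw [Measure.volume_eq_prod, Measure.prod_restrict]
  have hu_cont : Continuous u := Real.continuous_exp.comp (continuous_const.mul continuous_id)
  have hw_cont : Continuous w := hu_cont.mul hGc
  have hu_int : IntegrableOn u (Ioi (0:ℝ)) := exp_neg_integrableOn_Ioi 0 hb
  have hu_val : ∫ x in Ioi (0:ℝ), u x = 1/b := exp_int_Ioi b hb
  have hw_int : IntegrableOn w (Ioi (0:ℝ)) := by
    refine Integrable.mono' (hu_int.mul_const C) hw_cont.aestronglyMeasurable.restrict ?_
    refine Eventually.of_forall (fun x => ?_)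
    rw [Real.norm_eq_abs, hw, hu]
    simp only
    rw [abs_mul, abs_of_pos (Real.exp_pos _)]
    exact mul_le_mul_of_nonneg_left (hGbd x) (Real.exp_pos _).le
  set J : ℝ := ∫ x in Ioi (0:ℝ), w x with hJ
  -- the three product pieces
  have hf1_int : IntegrableOn (fun p : ℝ×ℝ => w p.1 * u p.2) (Ioi (0:ℝ) ×ˢ Ioi (0:ℝ)) := by
    rw [hconv]; exact hw_int.mul_prod hu_int
  have hf2_int : IntegrableOn (fun p : ℝ×ℝ => u p.1 * w p.2) (Ioi (0:ℝ) ×ˢ Ioi (0:ℝ)) := by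
    rw [hconv]; exact hu_int.mul_prod hw_int
  have hf3_int : IntegrableOn (fun p : ℝ×ℝ => u p.1 * u p.2 * G (p.1 - p.2))
      (Ioi (0:ℝ) ×ˢ Ioi (0:ℝ)) := by
    rw [hconv]
    refine Integrable.mono' ((hu_int.mul_prod hu_int).mul_const C)
      ?_ (Eventually.of_forall (fun p => ?_))
    · exact ((hu_cont.comp continuous_fst).mul ((hu_cont.comp continuous_snd)) |>.mul
        (hGc.comp (continuous_fst.sub continuous_snd))).aestronglyMeasurable
    · rw [Real.norm_eq_abs, abs_mul, abs_mul, abs_of_pos (Real.exp_pos _),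
        abs_of_pos (Real.exp_pos _)]
      exact mul_le_mul_of_nonneg_left (hGbd _) (by positivity)
  have hf1_val : ∫ p in Ioi (0:ℝ) ×ˢ Ioi (0:ℝ), w p.1 * u p.2 = J * (1/b) := by
    rw [hiconv, integral_prod_mul, ← hJ, ← hu_val]
  have hf2_val : ∫ p in Ioi (0:ℝ) ×ˢ Ioi (0:ℝ), u p.1 * w p.2 = (1/b) * J := by
    rw [hiconv, integral_prod_mul, ← hJ, ← hu_val]
  have hf3_val : ∫ p in Ioi (0:ℝ) ×ˢ Ioi (0:ℝ), u p.1 * u p.2 * G (p.1 - p.2) = J / b := by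
    have hsym : ∀ p : ℝ×ℝ, u p.swap.1 * u p.swap.2 * G (p.swap.1 - p.swap.2)
        = u p.1 * u p.2 * G (p.1 - p.2) := by
      rintro ⟨x, y⟩
      simp only [Prod.swap_prod_mk, Prod.fst, Prod.snd, hu]
      rw [show y - x = -(x-y) by ring, hGeven]
      ring
    rw [square_split _ hsym hf3_int]
    have hDsub : {p : ℝ×ℝ | 0 < p.1 ∧ p.1 < p.2} ⊆ Ioi (0:ℝ) ×ˢ Ioi (0:ℝ) := by
      rintro ⟨x, y⟩ ⟨h1, h2⟩; exact ⟨h1, lt_trans h1 h2⟩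
    rw [wedge_integral _ (hf3_int.mono_set hDsub)]
    have hinner : ∀ t ∈ Ioi (0:ℝ), ∫ s in Ioi t, u t * u s * G (t - s)
        = Real.exp (-(2*b)*t) * J := by
      intro t _
      rw [shift_int (fun s => u t * u s * G (t - s)) t]
      have : (fun x => u t * u (x + t) * G (t - (x + t)))
          = fun x => Real.exp (-(2*b)*t) * w x := by
        funext x
        simp only [hu, hw]
        rw [show t - (x + t) = -x by ring, hGeven,
          show -b*(x+t) = -b*x + -b*t by ring, Real.exp_add,
          show -(2*b)*t = -b*t + -b*t by ring, Real.exp_add]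
        ring
      rw [this, integral_const_mul, ← hJ]
    rw [setIntegral_congr_fun measurableSet_Ioi hinner]
    have : ∫ t in Ioi (0:ℝ), Real.exp (-(2*b)*t) * J
        = (∫ t in Ioi (0:ℝ), Real.exp (-(2*b)*t)) * J := integral_mul_const _ _
    rw [this, exp_int_Ioi (2*b) (by positivity)]
    field_simp
  -- combine
  have hKeq : ∀ p : ℝ×ℝ, Real.exp (-b*(p.1+p.2)) * ((G p.1 + G p.2 - G (p.1-p.2))/2)
      = (w p.1 * u p.2 + u p.1 * w p.2 - u p.1 * u p.2 * G (p.1 - p.2))/2 := by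
    intro p
    simp only [hu, hw]
    rw [show -b*(p.1+p.2) = -b*p.1 + -b*p.2 by ring, Real.exp_add]
    ring
  have hKint : IntegrableOn (fun p : ℝ×ℝ =>
      Real.exp (-b*(p.1+p.2)) * ((G p.1 + G p.2 - G (p.1-p.2))/2)) (Ioi 0 ×ˢ Ioi 0) := by
    have : (fun p : ℝ×ℝ => Real.exp (-b*(p.1+p.2)) * ((G p.1 + G p.2 - G (p.1-p.2))/2))
        = fun p : ℝ×ℝ => (w p.1 * u p.2 + u p.1 * w p.2 - u p.1 * u p.2 * G (p.1 - p.2))/2 :=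
      funext hKeq
    rw [this]
    exact ((hf1_int.add hf2_int).sub hf3_int).div_const 2
  refine ⟨hKint, ?_⟩
  have : (fun p : ℝ×ℝ => Real.exp (-b*(p.1+p.2)) * ((G p.1 + G p.2 - G (p.1-p.2))/2))
      = fun p : ℝ×ℝ => (w p.1 * u p.2 + u p.1 * w p.2 - u p.1 * u p.2 * G (p.1 - p.2))/2 :=
    funext hKeq
  rw [this]
  have hadd : IntegrableOn (fun p : ℝ×ℝ => w p.1 * u p.2 + u p.1 * w p.2)
      (Ioi (0:ℝ) ×ˢ Ioi (0:ℝ)) := by exact hf1_int.add hf2_int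
  rw [integral_div, integral_sub hadd hf3_int,
    integral_add hf1_int hf2_int, hf1_val, hf2_val, hf3_val]
  have hbne : b ≠ 0 := hb.ne'
  have hbne : b ≠ 0 := hb.ne'
  have hbne : b ≠ 0 := hb.ne'
  field_simp
  ring


lemma fubini_step {Ω : Type*} [MeasurableSpace Ω] (P : Measure Ω) [IsProbabilityMeasure P]
    (b C : ℝ) (hb : 0 < b) {g : ℝ → ℝ}
    (hC : ∀ t, 0 ≤ t → |g t| ≤ C) (hg_zero : g 0 = 0)
    {B : ℝ → Ω → ℝ} (hB_meas : Measurable fun p : ℝ × Ω => B p.1 p.2)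
    (hB_cov : ∀ s, 0 ≤ s → ∀ t, 0 ≤ t →
      ∫ ω, B s ω * B t ω ∂P = (g t + g s - g |t - s|) / 2)
    (BsqInt : ∀ t : ℝ, 0 < t → Integrable (fun ω => B t ω * B t ω) P)
    (T : ℝ) (hT : 0 < T) :
    ∫ ω, (∫ t in Ioc (0:ℝ) T, Real.exp (-b*t) * B t ω)^2 ∂P
      = ∫ p in Ioc (0:ℝ) T ×ˢ Ioc (0:ℝ) T,
          Real.exp (-b*(p.1+p.2)) * ((g p.1 + g p.2 - g |p.1-p.2|)/2) := by
  have measB : ∀ t : ℝ, AEStronglyMeasurable (fun ω => B t ω) P := fun t =>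
    (hB_meas.comp measurable_prodMk_left).aestronglyMeasurable
  have hvar : ∀ t, 0 < t → ∫ ω, B t ω * B t ω ∂P = g t := by
    intro t ht
    rw [hB_cov t ht.le t ht.le]
    simp [hg_zero]
  have hC0 : 0 ≤ C := le_trans (abs_nonneg _) (hC 0 le_rfl)
  set μT : Measure ℝ := volume.restrict (Ioc (0:ℝ) T) with hμT
  haveI : IsFiniteMeasure μT := ⟨by
    rw [hμT, Measure.restrict_apply_univ]; exact measure_Ioc_lt_top⟩
  set F : (ℝ×ℝ) → Ω → ℝ := fun p ω =>
    (Real.exp (-b*p.1) * B p.1 ω) * (Real.exp (-b*p.2) * B p.2 ω) with hF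
  have hsq : ∀ ω, (∫ t in Ioc (0:ℝ) T, Real.exp (-b*t) * B t ω)^2
      = ∫ p, F p ω ∂(μT.prod μT) := by
    intro ω
    rw [pow_two, hF]
    rw [← integral_prod_mul (fun t => Real.exp (-b*t) * B t ω) (fun s => Real.exp (-b*s) * B s ω)]
  have hFmeas : AEStronglyMeasurable (Function.uncurry F) ((μT.prod μT).prod P) := by
    apply Measurable.aestronglyMeasurable
    have m1 : Measurable fun q : (ℝ×ℝ)×Ω => B q.1.1 q.2 :=
      hB_meas.comp ((measurable_fst.fst).prodMk measurable_snd)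
    have m2 : Measurable fun q : (ℝ×ℝ)×Ω => B q.1.2 q.2 :=
      hB_meas.comp ((measurable_fst.snd).prodMk measurable_snd)
    have e1 : Measurable fun q : (ℝ×ℝ)×Ω => Real.exp (-b*q.1.1) :=
      Real.measurable_exp.comp (measurable_const.mul measurable_fst.fst)
    have e2 : Measurable fun q : (ℝ×ℝ)×Ω => Real.exp (-b*q.1.2) :=
      Real.measurable_exp.comp (measurable_const.mul measurable_fst.snd)
    exact (e1.mul m1).mul (e2.mul m2)
  have hprodrestrict : μT.prod μT
      = (volume : Measure (ℝ×ℝ)).restrict (Ioc (0:ℝ) T ×ˢ Ioc (0:ℝ) T) := by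
    rw [hμT, Measure.prod_restrict, Measure.volume_eq_prod]
  have hmemae : ∀ᵐ p ∂(μT.prod μT), p ∈ Ioc (0:ℝ) T ×ˢ Ioc (0:ℝ) T := by
    rw [hprodrestrict]
    exact ae_restrict_mem (measurableSet_Ioc.prod measurableSet_Ioc)
  have hslice : ∀ᵐ p ∂(μT.prod μT), Integrable (F p) P := by
    filter_upwards [hmemae] with p hp
    have h1 : 0 < p.1 := hp.1.1
    have h2 : 0 < p.2 := hp.2.1
    have hint : Integrable (fun ω => B p.1 ω * B p.2 ω) P :=
      mul_int (measB _) (measB _) (BsqInt _ h1) (BsqInt _ h2)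
    have := (hint.const_mul (Real.exp (-b*p.1) * Real.exp (-b*p.2)))
    refine this.congr (Eventually.of_forall (fun ω => ?_))
    rw [hF]; ring
  have hintnorm : ∀ p, p ∈ Ioc (0:ℝ) T ×ˢ Ioc (0:ℝ) T → (∫ ω, ‖F p ω‖ ∂P) ≤ C := by
    intro p hp
    have h1 : 0 < p.1 := hp.1.1
    have h2 : 0 < p.2 := hp.2.1
    have habs : ∀ ω, ‖F p ω‖ = (Real.exp (-b*p.1) * Real.exp (-b*p.2)) * |B p.1 ω * B p.2 ω| := by
      intro ω
      rw [hF, Real.norm_eq_abs]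
      simp only
      rw [show Real.exp (-b*p.1) * B p.1 ω * (Real.exp (-b*p.2) * B p.2 ω)
          = (Real.exp (-b*p.1) * Real.exp (-b*p.2)) * (B p.1 ω * B p.2 ω) by ring, abs_mul,
        abs_of_pos (by positivity : (0:ℝ) < Real.exp (-b*p.1) * Real.exp (-b*p.2))]
    calc (∫ ω, ‖F p ω‖ ∂P)
        = (Real.exp (-b*p.1) * Real.exp (-b*p.2)) * ∫ ω, |B p.1 ω * B p.2 ω| ∂P := by
          rw [show (fun ω => ‖F p ω‖) = fun ω =>
            (Real.exp (-b*p.1) * Real.exp (-b*p.2)) * |B p.1 ω * B p.2 ω| from funext habs]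
          exact integral_const_mul _ _
      _ ≤ 1 * ∫ ω, |B p.1 ω * B p.2 ω| ∂P := by
          refine mul_le_mul_of_nonneg_right ?_
            (integral_nonneg (fun ω => abs_nonneg _))
          have e1 : Real.exp (-b*p.1) ≤ 1 := Real.exp_le_one_iff.2 (by nlinarith)
          have e2 : Real.exp (-b*p.2) ≤ 1 := Real.exp_le_one_iff.2 (by nlinarith)
          nlinarith [Real.exp_pos (-b*p.1), Real.exp_pos (-b*p.2)]
      _ ≤ C := by
          rw [one_mul]
          have hle := abs_int_mul_le (measB p.1) (measB p.2) (BsqInt _ h1) (BsqInt _ h2)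
          rw [hvar _ h1, hvar _ h2] at hle
          have g1 : g p.1 ≤ C := le_trans (le_abs_self _) (hC _ h1.le)
          have g2 : g p.2 ≤ C := le_trans (le_abs_self _) (hC _ h2.le)
          linarith
  have hnorm : Integrable (fun p => ∫ ω, ‖F p ω‖ ∂P) (μT.prod μT) := by
    refine Integrable.mono' (integrable_const C) hFmeas.norm.integral_prod_right' ?_
    filter_upwards [hmemae] with p hp
    rw [Real.norm_eq_abs, abs_of_nonneg (integral_nonneg (fun ω => norm_nonneg _))]
    exact hintnorm p hp
  have hFint : Integrable (Function.uncurry F) ((μT.prod μT).prod P) :=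
    (integrable_prod_iff hFmeas).2 ⟨hslice, hnorm⟩
  have hswap := integral_integral_swap hFint
  -- hswap : ∫ p, ∫ ω, F p ω ∂P ∂(μT.prod μT) = ∫ ω, ∫ p, F p ω ∂(μT.prod μT) ∂P
  calc ∫ ω, (∫ t in Ioc (0:ℝ) T, Real.exp (-b*t) * B t ω)^2 ∂P
      = ∫ ω, ∫ p, F p ω ∂(μT.prod μT) ∂P := by
        exact integral_congr_ae (Eventually.of_forall (fun ω => hsq ω))
    _ = ∫ p, ∫ ω, F p ω ∂P ∂(μT.prod μT) := hswap.symm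
    _ = ∫ p in Ioc (0:ℝ) T ×ˢ Ioc (0:ℝ) T,
          Real.exp (-b*(p.1+p.2)) * ((g p.1 + g p.2 - g |p.1-p.2|)/2) := by
        rw [hprodrestrict]
        refine setIntegral_congr_fun (measurableSet_Ioc.prod measurableSet_Ioc) ?_
        intro p hp
        have h1 : 0 < p.1 := hp.1.1
        have h2 : 0 < p.2 := hp.2.1
        have hFe : (fun ω => F p ω) = fun ω =>
            (Real.exp (-b*p.1) * Real.exp (-b*p.2)) * (B p.1 ω * B p.2 ω) := by
          funext ω; rw [hF]; ring
        simp only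
        rw [hFe, integral_const_mul, hB_cov p.1 h1.le p.2 h2.le,
          ← Real.exp_add, show -b*p.1 + -b*p.2 = -b*(p.1+p.2) by ring,
          abs_sub_comm p.2 p.1]
        ring


lemma tendsto_sq_integral (f : ℝ×ℝ → ℝ) (hf : IntegrableOn f (Ioi (0:ℝ) ×ˢ Ioi (0:ℝ))) :
    Tendsto (fun T => ∫ p in Ioc (0:ℝ) T ×ˢ Ioc (0:ℝ) T, f p) atTop
      (nhds (∫ p in Ioi (0:ℝ) ×ˢ Ioi (0:ℝ), f p)) := by
  set S : Set (ℝ×ℝ) := Ioi (0:ℝ) ×ˢ Ioi (0:ℝ) with hS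
  have hsub : ∀ T : ℝ, (Ioc (0:ℝ) T ×ˢ Ioc (0:ℝ) T) ⊆ S := fun T =>
    prod_mono Ioc_subset_Ioi_self Ioc_subset_Ioi_self
  have key : ∀ T : ℝ, ∫ p in Ioc (0:ℝ) T ×ˢ Ioc (0:ℝ) T, f p
      = ∫ p in S, (Ioc (0:ℝ) T ×ˢ Ioc (0:ℝ) T).indicator f p := by
    intro T
    rw [setIntegral_indicator (measurableSet_Ioc.prod measurableSet_Ioc),
      inter_eq_self_of_subset_right (hsub T)]
  rw [show (fun T => ∫ p in Ioc (0:ℝ) T ×ˢ Ioc (0:ℝ) T, f p)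
    = fun T => ∫ p in S, (Ioc (0:ℝ) T ×ˢ Ioc (0:ℝ) T).indicator f p from funext key]
  refine tendsto_integral_filter_of_dominated_convergence (fun p => ‖f p‖)
    (Eventually.of_forall (fun T =>
      hf.aestronglyMeasurable.indicator (measurableSet_Ioc.prod measurableSet_Ioc)))
    (Eventually.of_forall (fun T => Eventually.of_forall (fun p =>
      norm_indicator_le_norm_self f p))) hf.norm ?_
  filter_upwards [ae_restrict_mem (measurableSet_Ioi.prod measurableSet_Ioi)] with p hp
  refine tendsto_const_nhds.congr' ?_
  filter_upwards [eventually_ge_atTop (max p.1 p.2)] with T hT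
  rw [indicator_of_mem]
  exact ⟨⟨hp.1, le_trans (le_max_left _ _) hT⟩, ⟨hp.2, le_trans (le_max_right _ _) hT⟩⟩

theorem var_Z_limit
    {Ω : Type*} [MeasurableSpace Ω] (P : Measure Ω) [IsProbabilityMeasure P]
    (b α2 β2 : ℝ) (hb : 0 < b) (hα2 : 0 < α2)
    (g : ℝ → ℝ)
    (hg_cont : ContinuousOn g (Set.Ici 0))
    (hg_bdd : ∃ C, ∀ t, 0 ≤ t → |g t| ≤ C)
    (hg_nonneg : ∀ t, 0 ≤ t → 0 ≤ g t)
    (hg_zero : g 0 = 0)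
    (hg_lim : Tendsto g atTop (nhds α2))
    (hβ2 : β2 = b / 2 * ∫ u in Set.Ioi (0:ℝ), Real.exp (-b * u) * g u)
    (B : ℝ → Ω → ℝ)
    (hB_meas : Measurable fun p : ℝ × Ω => B p.1 p.2)
    (hB_cont : ∀ᵐ ω ∂P, Continuous fun t => B t ω)
    (hB_zero : ∀ ω, B 0 ω = 0)
    (hB_mean : ∀ t, 0 ≤ t → ∫ ω, B t ω ∂P = 0)
    (hB_cov : ∀ s, 0 ≤ s → ∀ t, 0 ≤ t →
      ∫ ω, B s ω * B t ω ∂P = (g t + g s - g |t - s|) / 2)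
    (Z : ℝ → Ω → ℝ)
    (hZ : ∀ T ω, Z T ω = ∫ t in (0:ℝ)..T, Real.exp (-b * t) * B t ω)
    :
    Tendsto (fun T => ∫ ω, (Z T ω) ^ 2 ∂P) atTop (nhds (β2 / b ^ 2)) ∧
    (∫ t in Set.Ioi (0:ℝ), ∫ s in Set.Ioi (0:ℝ),
        Real.exp (-b * (t + s)) * ((g t + g s - g |t - s|) / 2)) = β2 / b ^ 2 := by
  classical
  obtain ⟨C, hC⟩ := hg_bdd
  have hC0 : 0 ≤ C := le_trans (abs_nonneg _) (hC 0 le_rfl)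
  have hbne : b ≠ 0 := hb.ne'
  -- positivity of g on (0, ∞)
  have hgpos : ∀ δ : ℝ, 0 < δ → 0 < g δ :=
    gpos P hα2 hg_nonneg hg_zero hg_lim hB_meas hB_cov
  -- square integrability of B t for t > 0
  have BsqInt : ∀ t : ℝ, 0 < t → Integrable (fun ω => B t ω * B t ω) P := by
    intro t ht
    by_contra hni
    have h0 : ∫ ω, B t ω * B t ω ∂P = 0 := integral_undef hni
    have h1 := hB_cov t ht.le t ht.le
    rw [h0] at h1
    simp [hg_zero] at h1
    exact absurd h1.symm (hgpos t ht).ne'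
  -- the symmetrized continuous version of g
  set G : ℝ → ℝ := fun x => g |x| with hG
  have hGc : Continuous G :=
    hg_cont.comp_continuous continuous_abs (fun x => abs_nonneg x)
  have hGbd : ∀ x, |G x| ≤ C := fun x => hC _ (abs_nonneg x)
  have hGeven : ∀ x, G (-x) = G x := by intro x; simp [hG, abs_neg]
  obtain ⟨hKint, hKval⟩ := detval b C hb G hGc hGbd hGeven
  set Kc : ℝ×ℝ → ℝ := fun p =>
    Real.exp (-b*(p.1+p.2)) * ((G p.1 + G p.2 - G (p.1-p.2))/2) with hKc
  -- the value of the integral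
  have hJeq : ∫ x in Ioi (0:ℝ), Real.exp (-b*x) * G x
      = ∫ u in Ioi (0:ℝ), Real.exp (-b * u) * g u := by
    refine setIntegral_congr_fun measurableSet_Ioi (fun x hx => ?_)
    simp only [hG]
    rw [abs_of_pos hx]
  have hvalue : ∫ p in Ioi (0:ℝ) ×ˢ Ioi (0:ℝ), Kc p = β2 / b^2 := by
    rw [hKc, hKval, hJeq, hβ2]
    field_simp
  -- second conjunct
  have hiter : (∫ t in Set.Ioi (0:ℝ), ∫ s in Set.Ioi (0:ℝ),
      Real.exp (-b * (t + s)) * ((g t + g s - g |t - s|) / 2))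
      = ∫ p in Ioi (0:ℝ) ×ˢ Ioi (0:ℝ), Kc p := by
    have hKint' : IntegrableOn Kc (Ioi (0:ℝ) ×ˢ Ioi (0:ℝ))
        ((volume : Measure ℝ).prod (volume : Measure ℝ)) := by
      rw [IntegrableOn, ← Measure.volume_eq_prod]
      exact hKint
    rw [show (∫ p in Ioi (0:ℝ) ×ˢ Ioi (0:ℝ), Kc p)
      = ∫ p in Ioi (0:ℝ) ×ˢ Ioi (0:ℝ), Kc p
          ∂((volume : Measure ℝ).prod (volume : Measure ℝ)) by rw [← Measure.volume_eq_prod],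
      setIntegral_prod Kc hKint']
    refine setIntegral_congr_fun measurableSet_Ioi (fun t ht => ?_)
    refine setIntegral_congr_fun measurableSet_Ioi (fun s hs => ?_)
    simp only [hKc, hG]
    rw [abs_of_pos (show (0:ℝ) < t from ht), abs_of_pos (show (0:ℝ) < s from hs)]
  constructor
  · -- first conjunct
    have htendsto := tendsto_sq_integral Kc hKint
    rw [hvalue] at htendsto
    refine htendsto.congr' ?_
    filter_upwards [eventually_gt_atTop (0:ℝ)] with T hT
    have hZT : ∀ ω, Z T ω = ∫ t in Ioc (0:ℝ) T, Real.exp (-b*t) * B t ω := by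
      intro ω
      rw [hZ T ω, intervalIntegral.integral_of_le hT.le]
    have h1 : ∫ ω, (Z T ω)^2 ∂P
        = ∫ ω, (∫ t in Ioc (0:ℝ) T, Real.exp (-b*t) * B t ω)^2 ∂P := by
      refine integral_congr_ae (Eventually.of_forall (fun ω => ?_))
      simp only [hZT]
    rw [h1, fubini_step P b C hb hC hg_zero hB_meas hB_cov BsqInt T hT]
    refine setIntegral_congr_fun (measurableSet_Ioc.prod measurableSet_Ioc) (fun p hp => ?_)
    simp only [hKc, hG]
    rw [abs_of_pos hp.1.1, abs_of_pos hp.2.1]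
  · rw [hiter, hvalue]
end

section
/- lim_{T → ∞} E[Z_T V_T] = 0. -/
open MeasureTheory Filter

private lemma aux_pos
    {Ω : Type*} [MeasurableSpace Ω] (P : Measure Ω) [IsProbabilityMeasure P]
    (α2 : ℝ) (hα2 : 0 < α2)
    (g : ℝ → ℝ)
    (hg_cont : ContinuousOn g (Set.Ici 0))
    (hg_nonneg : ∀ t, 0 ≤ t → 0 ≤ g t)
    (hg_zero : g 0 = 0)
    (hg_lim : Tendsto g atTop (nhds α2))
    (B : ℝ → Ω → ℝ)
    (hB_meas : Measurable fun p : ℝ × Ω => B p.1 p.2)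
    (hB_cont : ∀ᵐ ω ∂P, Continuous fun t => B t ω)
    (hB_cov : ∀ s, 0 ≤ s → ∀ t, 0 ≤ t →
      ∫ ω, B s ω * B t ω ∂P = (g t + g s - g |t - s|) / 2) :
    ∀ t : ℝ, 0 < t → 0 < g t := by
  have hBm : ∀ t : ℝ, Measurable fun ω => B t ω := fun t =>
    hB_meas.comp (measurable_const.prodMk measurable_id)
  -- self-covariance formula
  have hcovt : ∀ t : ℝ, 0 ≤ t → ∫ ω, B t ω * B t ω ∂P = g t := by
    intro t ht
    rw [hB_cov t ht t ht]
    simp [hg_zero]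
  -- integrability of the square when g t ≠ 0
  have hsq : ∀ t : ℝ, 0 ≤ t → g t ≠ 0 → Integrable (fun ω => B t ω * B t ω) P := by
    intro t ht hne
    by_contra hni
    exact hne ((hcovt t ht).symm.trans (integral_undef hni))
  -- lintegral formula when square integrable
  have hL2 : ∀ t : ℝ, 0 ≤ t → Integrable (fun ω => B t ω * B t ω) P →
      ∫⁻ ω, ENNReal.ofReal (B t ω * B t ω) ∂P = ENNReal.ofReal (g t) := by
    intro t ht hint
    rw [← ofReal_integral_eq_lintegral_ofReal hint (ae_of_all _ fun ω => mul_self_nonneg _),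
      hcovt t ht]
  intro t0 ht0
  by_contra hng
  have hgt0 : g t0 = 0 := le_antisymm (not_lt.mp hng) (hg_nonneg t0 ht0.le)
  set A := {u : ℝ | t0 ≤ u ∧ 0 < g u} with hA
  have hAne : A.Nonempty := by
    have h1 : ∀ᶠ x in atTop, α2/2 < g x := hg_lim.eventually (eventually_gt_nhds (half_lt_self hα2))
    obtain ⟨u, hu1, hu2⟩ := (h1.and (eventually_ge_atTop t0)).exists
    exact ⟨u, hu2, lt_trans (half_pos hα2) hu1⟩
  have hAbdd : BddBelow A := ⟨t0, fun u hu => hu.1⟩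
  set c := sInf A with hc
  have hc_ge : t0 ≤ c := le_csInf hAne (fun u hu => hu.1)
  have hc_pos : 0 < c := lt_of_lt_of_le ht0 hc_ge
  have hzero_lt : ∀ u, t0 ≤ u → u < c → g u = 0 := by
    intro u h1 h2
    have hu : u ∉ A := fun hu => absurd (csInf_le hAbdd hu) (not_le.mpr h2)
    have : ¬ (0 < g u) := fun h => hu ⟨h1, h⟩
    exact le_antisymm (not_lt.mp this) (hg_nonneg u (le_trans ht0.le h1))
  -- g c = 0
  have hgc : g c = 0 := by
    rcases eq_or_lt_of_le hc_ge with h | h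
    · rw [← h]; exact hgt0
    · have hne : (Set.Ico t0 c).Nonempty := ⟨t0, le_refl _, h⟩
      have hcl : c ∈ closure (Set.Ico t0 c) := by
        rw [closure_Ico (ne_of_lt h)]
        exact Set.right_mem_Icc.mpr (le_of_lt h)
      have hnb : (nhdsWithin c (Set.Ico t0 c)).NeBot := mem_closure_iff_nhdsWithin_neBot.mp hcl
      have htend : Tendsto g (nhdsWithin c (Set.Ico t0 c)) (nhds (g c)) := by
        apply (hg_cont c hc_pos.le).tendsto.mono_left
        apply nhdsWithin_mono c
        intro x hx
        exact le_trans ht0.le (le_trans hx.1 (le_refl _))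
      have heq : Tendsto g (nhdsWithin c (Set.Ico t0 c)) (nhds 0) := by
        apply Tendsto.congr' _ tendsto_const_nhds
        filter_upwards [self_mem_nhdsWithin] with x hx
        exact (hzero_lt x hx.1 hx.2).symm
      exact tendsto_nhds_unique htend heq
  -- sequence in A tending to c
  obtain ⟨v, _, hv_tend, hv_mem⟩ := exists_seq_tendsto_sInf hAne hAbdd
  have hv_pos : ∀ n, 0 < g (v n) := fun n => (hv_mem n).2
  have hv_nonneg : ∀ n, (0:ℝ) ≤ v n := fun n => le_trans ht0.le (hv_mem n).1
  -- g (v n) → 0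
  have hgv : Tendsto (fun n => g (v n)) atTop (nhds 0) := by
    rw [← hgc]
    apply ((hg_cont c hc_pos.le).tendsto).comp
    rw [tendsto_nhdsWithin_iff]
    exact ⟨hv_tend, Eventually.of_forall fun n => hv_nonneg n⟩
  -- Fatou
  have hBc0 : ∀ᵐ ω ∂P, B c ω = 0 := by
    have hfm : ∀ n : ℕ, Measurable fun ω => ENNReal.ofReal (B (v n) ω * B (v n) ω) :=
      fun n => ((hBm (v n)).mul (hBm (v n))).ennreal_ofReal
    have hfatou := lintegral_liminf_le (μ := P) (u := atTop) hfm
    have hlim : ∀ᵐ ω ∂P,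
        liminf (fun n => ENNReal.ofReal (B (v n) ω * B (v n) ω)) atTop
          = ENNReal.ofReal (B c ω * B c ω) := by
      filter_upwards [hB_cont] with ω hω
      have h1 : Tendsto (fun n => B (v n) ω) atTop (nhds (B c ω)) :=
        (hω.tendsto c).comp hv_tend
      exact ((ENNReal.continuous_ofReal.tendsto _).comp (h1.mul h1)).liminf_eq
    have hval : (fun n => ∫⁻ ω, ENNReal.ofReal (B (v n) ω * B (v n) ω) ∂P)
        = fun n => ENNReal.ofReal (g (v n)) := by
      funext n
      exact hL2 (v n) (hv_nonneg n) (hsq (v n) (hv_nonneg n) (ne_of_gt (hv_pos n)))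
    have hlim2 : liminf (fun n => ∫⁻ ω, ENNReal.ofReal (B (v n) ω * B (v n) ω) ∂P) atTop = 0 := by
      rw [hval]
      have : Tendsto (fun n => ENNReal.ofReal (g (v n))) atTop (nhds 0) := by
        have := (ENNReal.continuous_ofReal.tendsto 0).comp hgv
        simpa [Function.comp_def] using this
      exact this.liminf_eq
    have hle : ∫⁻ ω, ENNReal.ofReal (B c ω * B c ω) ∂P = 0 := by
      have := (lintegral_congr_ae hlim).symm.trans_le (hfatou.trans_eq hlim2)
      exact le_antisymm this (by positivity)
    have := (lintegral_eq_zero_iff ((hBm c).mul (hBm c)).ennreal_ofReal).mp hle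
    filter_upwards [this] with ω hω
    have : B c ω * B c ω ≤ 0 := by
      by_contra hpos
      simp only [Pi.zero_apply] at hω
      exact (ENNReal.ofReal_pos.mpr (not_le.mp hpos)).ne' hω
    nlinarith [mul_self_nonneg (B c ω)]
  -- periodicity
  have hper : ∀ x : ℝ, 0 ≤ x → g (x + c) = g x := by
    intro x hx
    have hcov := hB_cov c hc_pos.le (x + c) (by linarith)
    have hz : ∫ ω, B c ω * B (x + c) ω ∂P = 0 := by
      rw [integral_congr_ae (g := fun _ => (0:ℝ))]
      · simp
      · filter_upwards [hBc0] with ω hω; rw [hω, zero_mul]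
    rw [hz] at hcov
    have habs : |x + c - c| = x := by rw [add_sub_cancel_right, abs_of_nonneg hx]
    rw [habs, hgc] at hcov
    linarith
  -- g t0 = α2
  have hconst : ∀ n : ℕ, g (t0 + n * c) = g t0 := by
    intro n
    induction n with
    | zero => simp
    | succ k ih =>
      have : t0 + ((k:ℝ) + 1) * c = (t0 + k * c) + c := by ring
      rw [Nat.cast_succ, this, hper (t0 + k * c) (by positivity), ih]
  have htend : Tendsto (fun n : ℕ => g (t0 + n * c)) atTop (nhds α2) := by
    apply hg_lim.comp
    apply tendsto_atTop_add_const_left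
    exact Tendsto.atTop_mul_const hc_pos tendsto_natCast_atTop_atTop
  have : g t0 = α2 := tendsto_nhds_unique (tendsto_const_nhds : Tendsto (fun _ : ℕ => g t0) atTop (nhds (g t0))) (by simpa [hconst] using htend)
  rw [hgt0] at this
  exact absurd this.symm (ne_of_gt hα2)

private lemma aux_int
    {Ω : Type*} [MeasurableSpace Ω] (P : Measure Ω) [IsProbabilityMeasure P]
    (C : ℝ) (g : ℝ → ℝ)
    (hC : ∀ t, 0 ≤ t → |g t| ≤ C)
    (hg_zero : g 0 = 0)
    (B : ℝ → Ω → ℝ)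
    (hB_meas : Measurable fun p : ℝ × Ω => B p.1 p.2)
    (hB_zero : ∀ ω, B 0 ω = 0)
    (hB_cov : ∀ s, 0 ≤ s → ∀ t, 0 ≤ t →
      ∫ ω, B s ω * B t ω ∂P = (g t + g s - g |t - s|) / 2)
    (hgpos : ∀ t : ℝ, 0 < t → 0 < g t) :
    (∀ t s : ℝ, 0 ≤ t → 0 ≤ s → ∫⁻ ω, ↑‖B t ω * B s ω‖₊ ∂P ≤ ENNReal.ofReal (2*C))
    ∧ (∀ t s : ℝ, 0 ≤ t → 0 ≤ s → Integrable (fun ω => B t ω * B s ω) P) := by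
  have hBm : ∀ t : ℝ, Measurable fun ω => B t ω := fun t =>
    hB_meas.comp (measurable_const.prodMk measurable_id)
  have hcovt : ∀ t : ℝ, 0 ≤ t → ∫ ω, B t ω * B t ω ∂P = g t := by
    intro t ht
    rw [hB_cov t ht t ht]; simp [hg_zero]
  have hsq : ∀ t : ℝ, 0 ≤ t → Integrable (fun ω => B t ω * B t ω) P := by
    intro t ht
    rcases eq_or_lt_of_le ht with h | h
    · have : (fun ω => B t ω * B t ω) = fun _ => (0:ℝ) := by
        funext ω; rw [← h, hB_zero, mul_zero]
      rw [this]; exact integrable_const 0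
    · by_contra hni
      exact (ne_of_gt (hgpos t h)) ((hcovt t ht).symm.trans (integral_undef hni))
  have hL2 : ∀ t : ℝ, 0 ≤ t → ∫⁻ ω, ENNReal.ofReal (B t ω * B t ω) ∂P = ENNReal.ofReal (g t) := by
    intro t ht
    rw [← ofReal_integral_eq_lintegral_ofReal (hsq t ht) (ae_of_all _ fun ω => mul_self_nonneg _),
      hcovt t ht]
  have key : ∀ t s : ℝ, 0 ≤ t → 0 ≤ s →
      ∫⁻ ω, ↑‖B t ω * B s ω‖₊ ∂P ≤ ENNReal.ofReal (2*C) := by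
    intro t s ht hs
    have hptwise : ∀ ω, (↑‖B t ω * B s ω‖₊ : ENNReal)
        ≤ ENNReal.ofReal (B t ω * B t ω) + ENNReal.ofReal (B s ω * B s ω) := by
      intro ω
      rw [← enorm_eq_nnnorm, Real.enorm_eq_ofReal_abs,
        ← ENNReal.ofReal_add (mul_self_nonneg _) (mul_self_nonneg _)]
      apply ENNReal.ofReal_le_ofReal
      rw [abs_mul]
      nlinarith [sq_nonneg (|B t ω| - |B s ω|), abs_mul_abs_self (B t ω),
        abs_mul_abs_self (B s ω), abs_nonneg (B t ω), abs_nonneg (B s ω)]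
    calc ∫⁻ ω, ↑‖B t ω * B s ω‖₊ ∂P
        ≤ ∫⁻ ω, (ENNReal.ofReal (B t ω * B t ω) + ENNReal.ofReal (B s ω * B s ω)) ∂P :=
          lintegral_mono hptwise
      _ = ENNReal.ofReal (g t) + ENNReal.ofReal (g s) := by
          rw [lintegral_add_left (show Measurable fun ω => ENNReal.ofReal (B t ω * B t ω) from ((hBm t).mul (hBm t)).ennreal_ofReal), hL2 t ht, hL2 s hs]
      _ ≤ ENNReal.ofReal C + ENNReal.ofReal C := by
          gcongr
          · exact le_of_abs_le (hC t ht)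
          · exact le_of_abs_le (hC s hs)
      _ = ENNReal.ofReal (2*C) := by
          rw [← ENNReal.ofReal_add (le_trans (abs_nonneg _) (hC 0 le_rfl)) (le_trans (abs_nonneg _) (hC 0 le_rfl))]
          ring_nf
  refine ⟨key, fun t s ht hs => ?_⟩
  refine ⟨((hBm t).mul (hBm s)).aestronglyMeasurable, ?_⟩
  have : HasFiniteIntegral (fun ω => B t ω * B s ω) P ↔
      ∫⁻ ω, ↑‖B t ω * B s ω‖₊ ∂P < ⊤ := Iff.rfl
  rw [this]
  exact lt_of_le_of_lt (key t s ht hs) ENNReal.ofReal_lt_top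

private lemma aux_fubini
    {Ω : Type*} [MeasurableSpace Ω] (P : Measure Ω) [IsProbabilityMeasure P]
    (b C T : ℝ) (hb : 0 < b) (hC : 0 ≤ C) (hT : 0 < T)
    (B : ℝ → Ω → ℝ)
    (hB_meas : Measurable fun p : ℝ × Ω => B p.1 p.2)
    (F : ℝ → ℝ → ℝ)
    (hF_cont : Continuous fun p : ℝ × ℝ => F p.1 p.2)
    (hF_bdd : ∀ t s, |F t s| ≤ C)
    (hcov : ∀ t s : ℝ, 0 ≤ t → 0 ≤ s → ∫ ω, B t ω * B s ω ∂P = F t s)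
    (hmulle : ∀ t s : ℝ, 0 ≤ t → 0 ≤ s →
      ∫⁻ ω, ↑‖B t ω * B s ω‖₊ ∂P ≤ ENNReal.ofReal C) :
    (∫ ω, (∫ t in Set.Ioc (0:ℝ) T, Real.exp (-b*t) * B t ω) * B T ω ∂P
      = ∫ t in Set.Ioc (0:ℝ) T, Real.exp (-b*t) * F t T)
    ∧ Integrable (fun ω => (∫ t in Set.Ioc (0:ℝ) T, Real.exp (-b*t) * B t ω) * B T ω) P
    ∧ (∫ ω, (∫ t in Set.Ioc (0:ℝ) T, Real.exp (-b*t) * B t ω)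
          * (∫ s in Set.Ioc (0:ℝ) T, Real.exp (b*s) * B s ω) ∂P
      = ∫ t in Set.Ioc (0:ℝ) T, ∫ s in Set.Ioc (0:ℝ) T, Real.exp (-b*t) * Real.exp (b*s) * F t s)
    ∧ Integrable (fun ω => (∫ t in Set.Ioc (0:ℝ) T, Real.exp (-b*t) * B t ω)
          * (∫ s in Set.Ioc (0:ℝ) T, Real.exp (b*s) * B s ω)) P := by
  have hBm : ∀ t : ℝ, Measurable fun ω => B t ω := fun t =>
    hB_meas.comp (measurable_const.prodMk measurable_id)
  set I : Set ℝ := Set.Ioc (0:ℝ) T with hI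
  set μ : Measure ℝ := volume.restrict I with hμ
  haveI hμfin : IsFiniteMeasure μ := by
    constructor
    rw [hμ, Measure.restrict_apply_univ]
    exact measure_Ioc_lt_top
  have hμuniv : μ Set.univ ≤ ENNReal.ofReal T := by
    rw [hμ, Measure.restrict_apply_univ, hI, Real.volume_Ioc]
    exact ENNReal.ofReal_le_ofReal (by linarith)
  have hexp1 : ∀ t : ℝ, t ∈ I → (↑‖Real.exp (-b*t)‖₊ : ENNReal) ≤ 1 := by
    intro t ht
    rw [← enorm_eq_nnnorm, Real.enorm_eq_ofReal_abs, abs_of_pos (Real.exp_pos _), ← ENNReal.ofReal_one]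
    exact ENNReal.ofReal_le_ofReal (Real.exp_le_one_iff.mpr (by nlinarith [ht.1]))
  have hexp2 : ∀ s : ℝ, s ∈ I → (↑‖Real.exp (b*s)‖₊ : ENNReal) ≤ ENNReal.ofReal (Real.exp (b*T)) := by
    intro s hs
    rw [← enorm_eq_nnnorm, Real.enorm_eq_ofReal_abs, abs_of_pos (Real.exp_pos _)]
    exact ENNReal.ofReal_le_ofReal (Real.exp_le_exp.mpr (by nlinarith [hs.2]))
  -- Part A
  have hmeasA : Measurable fun p : ℝ × Ω => Real.exp (-b*p.1) * B p.1 p.2 * B T p.2 := by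
    apply Measurable.mul
    · exact ((Real.continuous_exp.comp (continuous_const.mul continuous_id)).measurable.comp
        measurable_fst).mul hB_meas
    · exact (hBm T).comp measurable_snd
  have hintA : Integrable (fun p : ℝ × Ω => Real.exp (-b*p.1) * B p.1 p.2 * B T p.2) (μ.prod P) := by
    refine ⟨hmeasA.aestronglyMeasurable, ?_⟩
    have hrfl : HasFiniteIntegral (fun p : ℝ × Ω => Real.exp (-b*p.1) * B p.1 p.2 * B T p.2) (μ.prod P) ↔
        ∫⁻ p : ℝ × Ω, ↑‖Real.exp (-b*p.1) * B p.1 p.2 * B T p.2‖₊ ∂(μ.prod P) < ⊤ := Iff.rfl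
    rw [hrfl, lintegral_prod _ hmeasA.nnnorm.coe_nnreal_ennreal.aemeasurable]
    have hbnd : ∀ᵐ t ∂μ, (∫⁻ ω, ↑‖Real.exp (-b*t) * B t ω * B T ω‖₊ ∂P) ≤ ENNReal.ofReal C := by
      filter_upwards [ae_restrict_mem measurableSet_Ioc] with t ht
      have : ∀ ω, (↑‖Real.exp (-b*t) * B t ω * B T ω‖₊ : ENNReal)
          = ↑‖Real.exp (-b*t)‖₊ * ↑‖B t ω * B T ω‖₊ := by
        intro ω; rw [mul_assoc, nnnorm_mul, ENNReal.coe_mul]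
      calc ∫⁻ ω, ↑‖Real.exp (-b*t) * B t ω * B T ω‖₊ ∂P
          = ↑‖Real.exp (-b*t)‖₊ * ∫⁻ ω, ↑‖B t ω * B T ω‖₊ ∂P := by
            rw [← lintegral_const_mul _ (show Measurable fun ω => (‖B t ω * B T ω‖₊ : ENNReal) from ((hBm t).mul (hBm T)).nnnorm.coe_nnreal_ennreal)]
            exact lintegral_congr fun ω => this ω
        _ ≤ 1 * ENNReal.ofReal C := by
            exact mul_le_mul' (hexp1 t ht) (hmulle t T (le_of_lt ht.1) hT.le)
        _ = ENNReal.ofReal C := one_mul _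
    calc ∫⁻ t, (∫⁻ ω, ↑‖Real.exp (-b*t) * B t ω * B T ω‖₊ ∂P) ∂μ
        ≤ ∫⁻ _, ENNReal.ofReal C ∂μ := lintegral_mono_ae hbnd
      _ = ENNReal.ofReal C * μ Set.univ := by rw [lintegral_const]
      _ ≤ ENNReal.ofReal C * ENNReal.ofReal T := by gcongr
      _ < ⊤ := ENNReal.mul_lt_top ENNReal.ofReal_lt_top ENNReal.ofReal_lt_top
  have step1 : ∀ ω, (∫ t in I, Real.exp (-b*t) * B t ω) * B T ω
      = ∫ t, Real.exp (-b*t) * B t ω * B T ω ∂μ := by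
    intro ω; rw [← integral_mul_const]
  have hA : ∫ ω, (∫ t in I, Real.exp (-b*t) * B t ω) * B T ω ∂P
      = ∫ t in I, Real.exp (-b*t) * F t T := by
    rw [integral_congr_ae (ae_of_all _ step1)]
    rw [← integral_integral_swap hintA]
    apply integral_congr_ae
    filter_upwards [ae_restrict_mem measurableSet_Ioc] with t ht
    simp only [mul_assoc]
    rw [integral_const_mul, hcov t T (le_of_lt ht.1) hT.le]
  have hAint : Integrable (fun ω => (∫ t in I, Real.exp (-b*t) * B t ω) * B T ω) P := by
    exact hintA.integral_prod_right.congr (Eventually.of_forall fun ω => (step1 ω).symm)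
  -- Part B
  have hmeasB : Measurable fun q : (ℝ × ℝ) × Ω =>
      Real.exp (-b*q.1.1) * Real.exp (b*q.1.2) * (B q.1.1 q.2 * B q.1.2 q.2) := by
    apply Measurable.mul
    · apply Measurable.mul
      · exact (Real.continuous_exp.comp (continuous_const.mul continuous_id)).measurable.comp
          (measurable_fst.comp measurable_fst)
      · exact (Real.continuous_exp.comp (continuous_const.mul continuous_id)).measurable.comp
          (measurable_snd.comp measurable_fst)
    · exact (hB_meas.comp ((measurable_fst.comp measurable_fst).prodMk measurable_snd)).mul
        (hB_meas.comp ((measurable_snd.comp measurable_fst).prodMk measurable_snd))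
  have hae2 : ∀ᵐ p ∂(μ.prod μ), p ∈ I ×ˢ I := by
    rw [hμ, Measure.prod_restrict]
    exact ae_restrict_mem (measurableSet_Ioc.prod measurableSet_Ioc)
  have hintB : Integrable (fun q : (ℝ × ℝ) × Ω =>
      Real.exp (-b*q.1.1) * Real.exp (b*q.1.2) * (B q.1.1 q.2 * B q.1.2 q.2))
      ((μ.prod μ).prod P) := by
    refine ⟨hmeasB.aestronglyMeasurable, ?_⟩
    have hrfl : HasFiniteIntegral (fun q : (ℝ × ℝ) × Ω =>
        Real.exp (-b*q.1.1) * Real.exp (b*q.1.2) * (B q.1.1 q.2 * B q.1.2 q.2)) ((μ.prod μ).prod P) ↔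
        ∫⁻ q : (ℝ × ℝ) × Ω, ↑‖Real.exp (-b*q.1.1) * Real.exp (b*q.1.2) * (B q.1.1 q.2 * B q.1.2 q.2)‖₊
          ∂((μ.prod μ).prod P) < ⊤ := Iff.rfl
    rw [hrfl, lintegral_prod _ hmeasB.nnnorm.coe_nnreal_ennreal.aemeasurable]
    have hbnd : ∀ᵐ p ∂(μ.prod μ),
        (∫⁻ ω, ↑‖Real.exp (-b*p.1) * Real.exp (b*p.2) * (B p.1 ω * B p.2 ω)‖₊ ∂P)
          ≤ ENNReal.ofReal (Real.exp (b*T)) * ENNReal.ofReal C := by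
      filter_upwards [hae2] with p hp
      calc ∫⁻ ω, ↑‖Real.exp (-b*p.1) * Real.exp (b*p.2) * (B p.1 ω * B p.2 ω)‖₊ ∂P
          = ↑‖Real.exp (-b*p.1) * Real.exp (b*p.2)‖₊ * ∫⁻ ω, ↑‖B p.1 ω * B p.2 ω‖₊ ∂P := by
            rw [← lintegral_const_mul _ (show Measurable fun ω => (‖B p.1 ω * B p.2 ω‖₊ : ENNReal) from ((hBm p.1).mul (hBm p.2)).nnnorm.coe_nnreal_ennreal)]
            exact lintegral_congr fun ω => by rw [nnnorm_mul, ENNReal.coe_mul]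
        _ ≤ (1 * ENNReal.ofReal (Real.exp (b*T))) * ENNReal.ofReal C := by
            apply mul_le_mul'
            · rw [nnnorm_mul, ENNReal.coe_mul]
              exact mul_le_mul' (hexp1 p.1 hp.1) (hexp2 p.2 hp.2)
            · exact hmulle p.1 p.2 (le_of_lt hp.1.1) (le_of_lt hp.2.1)
        _ = ENNReal.ofReal (Real.exp (b*T)) * ENNReal.ofReal C := by rw [one_mul]
    calc ∫⁻ p, (∫⁻ ω, ↑‖Real.exp (-b*p.1) * Real.exp (b*p.2) * (B p.1 ω * B p.2 ω)‖₊ ∂P) ∂(μ.prod μ)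
        ≤ ∫⁻ _, ENNReal.ofReal (Real.exp (b*T)) * ENNReal.ofReal C ∂(μ.prod μ) := lintegral_mono_ae hbnd
      _ = ENNReal.ofReal (Real.exp (b*T)) * ENNReal.ofReal C * (μ.prod μ) Set.univ := by
          rw [lintegral_const]
      _ < ⊤ := by
          apply ENNReal.mul_lt_top
          · exact ENNReal.mul_lt_top ENNReal.ofReal_lt_top ENNReal.ofReal_lt_top
          · rw [← Set.univ_prod_univ, Measure.prod_prod]
            exact ENNReal.mul_lt_top (lt_of_le_of_lt hμuniv ENNReal.ofReal_lt_top)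
              (lt_of_le_of_lt hμuniv ENNReal.ofReal_lt_top)
  have step1B : ∀ ω, (∫ t in I, Real.exp (-b*t) * B t ω) * (∫ s in I, Real.exp (b*s) * B s ω)
      = ∫ p : ℝ × ℝ, Real.exp (-b*p.1) * Real.exp (b*p.2) * (B p.1 ω * B p.2 ω) ∂(μ.prod μ) := by
    intro ω
    rw [← integral_prod_mul (fun t => Real.exp (-b*t) * B t ω) (fun s => Real.exp (b*s) * B s ω)]
    apply integral_congr_ae
    apply ae_of_all
    intro p
    ring
  have hB : ∫ ω, (∫ t in I, Real.exp (-b*t) * B t ω) * (∫ s in I, Real.exp (b*s) * B s ω) ∂P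
      = ∫ t in I, ∫ s in I, Real.exp (-b*t) * Real.exp (b*s) * F t s := by
    rw [integral_congr_ae (ae_of_all _ step1B)]
    rw [← integral_integral_swap hintB]
    have inner : ∫ p : ℝ × ℝ, (∫ ω, Real.exp (-b*p.1) * Real.exp (b*p.2) * (B p.1 ω * B p.2 ω) ∂P) ∂(μ.prod μ)
        = ∫ p : ℝ × ℝ, Real.exp (-b*p.1) * Real.exp (b*p.2) * F p.1 p.2 ∂(μ.prod μ) := by
      apply integral_congr_ae
      filter_upwards [hae2] with p hp
      rw [integral_const_mul, hcov p.1 p.2 (le_of_lt hp.1.1) (le_of_lt hp.2.1)]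
    rw [inner]
    -- now iterate the deterministic integral
    have hintD : Integrable (fun p : ℝ × ℝ => Real.exp (-b*p.1) * Real.exp (b*p.2) * F p.1 p.2) (μ.prod μ) := by
      haveI : IsFiniteMeasure (μ.prod μ) := by infer_instance
      apply Integrable.mono (integrable_const (Real.exp (b*T) * C))
      · apply Continuous.aestronglyMeasurable
        exact ((Real.continuous_exp.comp (continuous_const.mul continuous_fst)).mul
          (Real.continuous_exp.comp (continuous_const.mul continuous_snd))).mul hF_cont
      · filter_upwards [hae2] with p hp
        have h1 : |Real.exp (-b*p.1)| ≤ 1 := by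
          rw [abs_of_pos (Real.exp_pos _)]
          exact Real.exp_le_one_iff.mpr (by nlinarith [hp.1.1])
        have h2 : |Real.exp (b*p.2)| ≤ Real.exp (b*T) := by
          rw [abs_of_pos (Real.exp_pos _)]
          exact Real.exp_le_exp.mpr (by nlinarith [hp.2.2])
        have h3 : |F p.1 p.2| ≤ C := hF_bdd p.1 p.2
        have habs : |Real.exp (-b*p.1) * Real.exp (b*p.2) * F p.1 p.2|
            = |Real.exp (-b*p.1)| * |Real.exp (b*p.2)| * |F p.1 p.2| := by
          rw [abs_mul, abs_mul]
        rw [Real.norm_eq_abs, Real.norm_eq_abs, habs]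
        have : |Real.exp (-b*p.1)| * |Real.exp (b*p.2)| * |F p.1 p.2| ≤ 1 * Real.exp (b*T) * C := by
          apply mul_le_mul (mul_le_mul h1 h2 (abs_nonneg _) zero_le_one) h3 (abs_nonneg _)
          positivity
        apply le_trans this
        rw [one_mul, abs_of_nonneg (by positivity)]
    rw [integral_prod _ hintD]
  have hBint : Integrable (fun ω => (∫ t in I, Real.exp (-b*t) * B t ω)
      * (∫ s in I, Real.exp (b*s) * B s ω)) P :=
    hintB.integral_prod_right.congr (Eventually.of_forall fun ω => (step1B ω).symm)
  exact ⟨hA, hAint, hB, hBint⟩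

private lemma aux_lim (b C : ℝ) (hb : 0 < b) (hC : 0 ≤ C)
    (F : ℝ → ℝ → ℝ)
    (hF_cont : Continuous fun p : ℝ × ℝ => F p.1 p.2)
    (hF_bdd : ∀ t s, |F t s| ≤ C)
    (hF_lim : ∀ t ε : ℝ, 0 < ε → ∃ M : ℝ, ∀ s T : ℝ, M + t ≤ s → s ≤ T → |F t T - F t s| ≤ ε) :
    Tendsto (fun T => ∫ t in Set.Ioc (0:ℝ) T,
      Real.exp (-b*t) * (F t T - b * Real.exp (-b*T) * ∫ s in Set.Ioc (0:ℝ) T, Real.exp (b*s) * F t s))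
      atTop (nhds 0) := by
  have hbne : b ≠ 0 := hb.ne'
  have hFcont1 : ∀ t, Continuous fun s => F t s := fun t =>
    hF_cont.comp (continuous_const.prodMk continuous_id)
  have hexpc : Continuous fun s : ℝ => Real.exp (b*s) :=
    Real.continuous_exp.comp (continuous_const.mul continuous_id)
  have hexpint : ∀ a a' : ℝ, ∫ s in a..a', Real.exp (b*s) = (Real.exp (b*a') - Real.exp (b*a))/b := by
    intro a a'
    rw [intervalIntegral.integral_comp_mul_left (fun x => Real.exp x) hbne, integral_exp,
      smul_eq_mul]
    ring
  have hbnd : ∀ (K : ℝ) (h : ℝ → ℝ) (a a' : ℝ), a ≤ a' → Continuous h →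
      (∀ s, a ≤ s → s ≤ a' → |h s| ≤ K) →
      |∫ s in a..a', Real.exp (b*s) * h s| ≤ K * ((Real.exp (b*a') - Real.exp (b*a))/b) := by
    intro K h a a' haa hcont hK
    have h1 : |∫ s in a..a', Real.exp (b*s) * h s| ≤ ∫ s in a..a', |Real.exp (b*s) * h s| :=
      intervalIntegral.abs_integral_le_integral_abs haa
    have h2 : ∫ s in a..a', |Real.exp (b*s) * h s| ≤ ∫ s in a..a', K * Real.exp (b*s) := by
      apply intervalIntegral.integral_mono_on haa
      · exact ((hexpc.mul hcont).abs).intervalIntegrable _ _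
      · exact (continuous_const.mul hexpc).intervalIntegrable _ _
      · intro s hs
        rw [abs_mul, abs_of_pos (Real.exp_pos _)]
        calc Real.exp (b*s) * |h s| ≤ Real.exp (b*s) * K :=
              mul_le_mul_of_nonneg_left (hK s hs.1 hs.2) (Real.exp_pos _).le
          _ = K * Real.exp (b*s) := mul_comm _ _
    calc |∫ s in a..a', Real.exp (b*s) * h s| ≤ ∫ s in a..a', K * Real.exp (b*s) := le_trans h1 h2
      _ = K * ((Real.exp (b*a') - Real.exp (b*a))/b) := by
          rw [intervalIntegral.integral_const_mul, hexpint]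
  have hsetint : ∀ t T : ℝ, 0 ≤ T → ∫ s in Set.Ioc (0:ℝ) T, Real.exp (b*s) * F t s
      = ∫ s in (0:ℝ)..T, Real.exp (b*s) * F t s := fun t T hT =>
    (intervalIntegral.integral_of_le hT).symm
  set Φ : ℝ → ℝ → ℝ := fun T t =>
    F t T - b * Real.exp (-b*T) * ∫ s in Set.Ioc (0:ℝ) T, Real.exp (b*s) * F t s with hΦdef
  -- boundedness of Φ
  have hΦbdd : ∀ T t : ℝ, 0 ≤ T → |Φ T t| ≤ 2*C := by
    intro T t hT
    have hI : |∫ s in Set.Ioc (0:ℝ) T, Real.exp (b*s) * F t s|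
        ≤ C * ((Real.exp (b*T) - Real.exp (b*0))/b) := by
      rw [hsetint t T hT]
      exact hbnd C (fun s => F t s) 0 T hT (hFcont1 t) (fun s _ _ => hF_bdd t s)
    have hE : Real.exp (-b*T) * Real.exp (b*T) = 1 := by
      rw [← Real.exp_add]; ring_nf; exact Real.exp_zero
    have hE1pos : 0 < Real.exp (-b*T) := Real.exp_pos _
    have hE1le : Real.exp (-b*T) ≤ 1 := Real.exp_le_one_iff.mpr (by nlinarith)
    have hbinv : b * b⁻¹ = 1 := mul_inv_cancel₀ hbne
    have hkey : b * Real.exp (-b*T) * (C * ((Real.exp (b*T) - Real.exp (b*0))/b))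
        = C - C * Real.exp (-b*T) := by
      rw [mul_zero, Real.exp_zero]
      linear_combination C * hE + (C * Real.exp (-b*T) * (Real.exp (b*T) - 1)) * hbinv
    have habs : |Φ T t| ≤ |F t T| + b * Real.exp (-b*T) * |∫ s in Set.Ioc (0:ℝ) T, Real.exp (b*s) * F t s| := by
      rw [hΦdef]
      simp only
      calc |F t T - b * Real.exp (-b*T) * ∫ s in Set.Ioc (0:ℝ) T, Real.exp (b*s) * F t s|
          ≤ |F t T| + |b * Real.exp (-b*T) * ∫ s in Set.Ioc (0:ℝ) T, Real.exp (b*s) * F t s| :=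
            abs_sub _ _
        _ = |F t T| + b * Real.exp (-b*T) * |∫ s in Set.Ioc (0:ℝ) T, Real.exp (b*s) * F t s| := by
            rw [abs_mul, abs_mul, abs_of_pos hb, abs_of_pos hE1pos]
    have hFb := hF_bdd t T
    have hmul := mul_le_mul_of_nonneg_left hI
      (show (0:ℝ) ≤ b * Real.exp (-b*T) by positivity)
    have hCE1 : 0 ≤ C * Real.exp (-b*T) := by positivity
    linarith [habs, hFb, hmul, hkey]
  -- pointwise limit of Φ
  have hΦ0 : ∀ t : ℝ, Tendsto (fun T => Φ T t) atTop (nhds 0) := by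
    intro t
    rw [NormedAddCommGroup.tendsto_nhds_zero]
    intro ε hε
    obtain ⟨M1, hM1⟩ := hF_lim t (ε/4) (by positivity)
    set c : ℝ := max (M1 + t) 0 with hcdef
    have hc0 : 0 ≤ c := le_max_right _ _
    have hdecay : Tendsto (fun T => (C + 2*C*Real.exp (b*c) + 1) * Real.exp (-b*T)) atTop (nhds 0) := by
      have h1 : Tendsto (fun T : ℝ => Real.exp (-b*T)) atTop (nhds 0) := by
        have h2 : Tendsto (fun T : ℝ => b * T) atTop atTop := Tendsto.const_mul_atTop hb tendsto_id
        have h3 : Tendsto (fun T : ℝ => -(b * T)) atTop atBot := tendsto_neg_atBot_iff.mpr h2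
        have h4 : (fun T : ℝ => Real.exp (-b*T)) = Real.exp ∘ fun T : ℝ => -(b*T) := by
          funext T; simp [neg_mul]
        rw [h4]
        exact Real.tendsto_exp_atBot.comp h3
      simpa using h1.const_mul (C + 2*C*Real.exp (b*c) + 1)
    have hdecay_ev : ∀ᶠ T in atTop, (C + 2*C*Real.exp (b*c) + 1) * Real.exp (-b*T) < ε/2 :=
      hdecay.eventually (eventually_lt_nhds (by positivity))
    filter_upwards [eventually_ge_atTop c, hdecay_ev] with T hTc hTdec
    have hT0 : 0 ≤ T := le_trans hc0 hTc
    have hiiF : ∀ a a' : ℝ, IntervalIntegrable (fun s => Real.exp (b*s) * (F t T - F t s)) volume a a' :=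
      fun a a' => (hexpc.mul (continuous_const.sub (hFcont1 t))).intervalIntegrable _ _
    have h1 : (∫ s in (0:ℝ)..c, Real.exp (b*s) * (F t T - F t s))
        + (∫ s in c..T, Real.exp (b*s) * (F t T - F t s))
        = ∫ s in (0:ℝ)..T, Real.exp (b*s) * (F t T - F t s) :=
      intervalIntegral.integral_add_adjacent_intervals (hiiF 0 c) (hiiF c T)
    have h2 : ∫ s in (0:ℝ)..T, Real.exp (b*s) * (F t T - F t s)
        = F t T * ((Real.exp (b*T) - Real.exp (b*0))/b) - ∫ s in (0:ℝ)..T, Real.exp (b*s) * F t s := by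
      have : (fun s => Real.exp (b*s) * (F t T - F t s))
          = fun s => F t T * Real.exp (b*s) - Real.exp (b*s) * F t s := by
        funext s; ring
      rw [this, intervalIntegral.integral_sub
        (show IntervalIntegrable (fun s => F t T * Real.exp (b*s)) volume 0 T from
          (continuous_const.mul hexpc).intervalIntegrable _ _)
        (show IntervalIntegrable (fun s => Real.exp (b*s) * F t s) volume 0 T from
          (hexpc.mul (hFcont1 t)).intervalIntegrable _ _),
        intervalIntegral.integral_const_mul, hexpint]
    have hE : Real.exp (-b*T) * Real.exp (b*T) = 1 := by
      rw [← Real.exp_add]; ring_nf; exact Real.exp_zero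
    have hid : Φ T t = Real.exp (-b*T) * F t T
        + b * Real.exp (-b*T) * ((∫ s in (0:ℝ)..c, Real.exp (b*s) * (F t T - F t s))
          + (∫ s in c..T, Real.exp (b*s) * (F t T - F t s))) := by
      have hbinv : b * b⁻¹ = 1 := mul_inv_cancel₀ hbne
      rw [hΦdef]
      simp only
      rw [hsetint t T hT0, h1, h2, mul_zero, Real.exp_zero]
      linear_combination (-(F t T)) * hE
        + (-(F t T * Real.exp (-b*T) * (Real.exp (b*T) - 1))) * hbinv
    have hI1 : |∫ s in (0:ℝ)..c, Real.exp (b*s) * (F t T - F t s)|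
        ≤ (2*C) * ((Real.exp (b*c) - Real.exp (b*0))/b) := by
      apply hbnd (2*C) _ 0 c hc0 (continuous_const.sub (hFcont1 t))
      intro s _ _
      calc |F t T - F t s| ≤ |F t T| + |F t s| := abs_sub _ _
        _ ≤ 2*C := by have := hF_bdd t T; have := hF_bdd t s; linarith
    have hI2 : |∫ s in c..T, Real.exp (b*s) * (F t T - F t s)|
        ≤ (ε/4) * ((Real.exp (b*T) - Real.exp (b*c))/b) := by
      apply hbnd (ε/4) _ c T hTc (continuous_const.sub (hFcont1 t))
      intro s hs1 hs2
      exact hM1 s T (le_trans (le_max_left _ _) hs1) hs2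
    rw [Real.norm_eq_abs, hid]
    have hE1pos : 0 < Real.exp (-b*T) := Real.exp_pos _
    have hE2pos : 0 < Real.exp (b*T) := Real.exp_pos _
    have hEcpos : 0 < Real.exp (b*c) := Real.exp_pos _
    have h0 : Real.exp (b*0) = 1 := by norm_num
    have hFb := hF_bdd t T
    have habs1 : |Real.exp (-b*T) * F t T| ≤ Real.exp (-b*T) * C := by
      rw [abs_mul, abs_of_pos hE1pos]
      exact mul_le_mul_of_nonneg_left hFb hE1pos.le
    calc |Real.exp (-b*T) * F t T + b * Real.exp (-b*T) * (_ + _)|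
        ≤ |Real.exp (-b*T) * F t T| + |b * Real.exp (-b*T)| * |(∫ s in (0:ℝ)..c, Real.exp (b*s) * (F t T - F t s)) + (∫ s in c..T, Real.exp (b*s) * (F t T - F t s))| := by
          rw [← abs_mul]; exact abs_add_le _ _
      _ ≤ Real.exp (-b*T) * C + (b * Real.exp (-b*T)) * ((2*C) * ((Real.exp (b*c) - Real.exp (b*0))/b) + (ε/4) * ((Real.exp (b*T) - Real.exp (b*c))/b)) := by
          apply add_le_add habs1
          rw [abs_of_pos (by positivity : (0:ℝ) < b * Real.exp (-b*T))]
          apply mul_le_mul_of_nonneg_left _ (by positivity)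
          calc |(∫ s in (0:ℝ)..c, Real.exp (b*s) * (F t T - F t s)) + (∫ s in c..T, Real.exp (b*s) * (F t T - F t s))|
              ≤ |∫ s in (0:ℝ)..c, Real.exp (b*s) * (F t T - F t s)| + |∫ s in c..T, Real.exp (b*s) * (F t T - F t s)| := abs_add_le _ _
            _ ≤ (2*C) * ((Real.exp (b*c) - Real.exp (b*0))/b) + (ε/4) * ((Real.exp (b*T) - Real.exp (b*c))/b) := add_le_add hI1 hI2
      _ < ε := by
          rw [h0]
          have hexpand : Real.exp (-b*T) * C
              + (b * Real.exp (-b*T)) * ((2*C) * ((Real.exp (b*c) - 1)/b) + (ε/4) * ((Real.exp (b*T) - Real.exp (b*c))/b))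
              = (C + 2*C*Real.exp (b*c)) * Real.exp (-b*T) - 2*C*Real.exp (-b*T)
                + (ε/4) * (Real.exp (-b*T) * Real.exp (b*T)) - (ε/4) * Real.exp (-b*T) * Real.exp (b*c) := by
            have hbinv : b * b⁻¹ = 1 := mul_inv_cancel₀ hbne
            linear_combination (Real.exp (-b*T) * (2*C*(Real.exp (b*c) - 1)
              + (ε/4)*(Real.exp (b*T) - Real.exp (b*c)))) * hbinv
          rw [hexpand, hE]
          nlinarith [hTdec, hε, mul_pos hE1pos hEcpos, mul_nonneg hC hE1pos.le,
            mul_nonneg (mul_nonneg hC hEcpos.le) hE1pos.le,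
            mul_nonneg (mul_nonneg hε.le hE1pos.le) hEcpos.le, hE1pos.le]
  -- measurability
  have hFcont2 : ∀ T : ℝ, Continuous fun t => F t T := fun T =>
    hF_cont.comp (continuous_id.prodMk continuous_const)
  have hΦmeas : ∀ T : ℝ, AEStronglyMeasurable (fun t => Real.exp (-b*t) * Φ T t) volume := by
    intro T
    have h1 : StronglyMeasurable fun t => ∫ s in Set.Ioc (0:ℝ) T, Real.exp (b*s) * F t s :=
      StronglyMeasurable.integral_prod_right
        (f := fun t s => Real.exp (b*s) * F t s)
        ((hexpc.comp continuous_snd).mul hF_cont).stronglyMeasurable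
    exact ((Real.continuous_exp.comp (continuous_const.mul continuous_id)).stronglyMeasurable.mul
      ((hFcont2 T).stronglyMeasurable.sub (stronglyMeasurable_const.mul h1))).aestronglyMeasurable
  -- dominated convergence
  have key : Tendsto (fun T => ∫ t, (Set.Ioc (0:ℝ) T).indicator
      (fun t => Real.exp (-b*t) * Φ T t) t ∂volume) atTop (nhds 0) := by
    have hmeas' : ∀ᶠ T in atTop, AEStronglyMeasurable
        ((Set.Ioc (0:ℝ) T).indicator (fun t => Real.exp (-b*t) * Φ T t)) volume :=
      Eventually.of_forall fun T => (hΦmeas T).indicator measurableSet_Ioc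
    have hint' : Integrable ((Set.Ioi (0:ℝ)).indicator (fun t => 2*C * Real.exp (-b*t))) volume := by
      apply IntegrableOn.integrable_indicator _ measurableSet_Ioi
      exact (exp_neg_integrableOn_Ioi 0 hb).const_mul (2*C)
    have hbound' : ∀ᶠ T in atTop, ∀ᵐ t ∂volume,
        ‖(Set.Ioc (0:ℝ) T).indicator (fun t => Real.exp (-b*t) * Φ T t) t‖
          ≤ (Set.Ioi (0:ℝ)).indicator (fun t => 2*C * Real.exp (-b*t)) t := by
      filter_upwards [eventually_ge_atTop (0:ℝ)] with T hT
      apply ae_of_all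
      intro t
      by_cases ht : t ∈ Set.Ioc (0:ℝ) T
      · rw [Set.indicator_of_mem ht, Set.indicator_of_mem (Set.mem_Ioi.mpr ht.1)]
        rw [Real.norm_eq_abs, abs_mul, abs_of_pos (Real.exp_pos _)]
        calc Real.exp (-b*t) * |Φ T t| ≤ Real.exp (-b*t) * (2*C) :=
              mul_le_mul_of_nonneg_left (hΦbdd T t hT) (Real.exp_pos _).le
          _ = 2*C*Real.exp (-b*t) := mul_comm _ _
      · rw [Set.indicator_of_notMem ht, norm_zero]
        apply Set.indicator_nonneg
        intro x _
        positivity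
    have hptw' : ∀ᵐ t ∂(volume : Measure ℝ), Tendsto
        (fun T => (Set.Ioc (0:ℝ) T).indicator (fun t => Real.exp (-b*t) * Φ T t) t)
        atTop (nhds ((fun _ => (0:ℝ)) t)) := by
      apply ae_of_all
      intro t
      by_cases ht : 0 < t
      · have h1 : Tendsto (fun T => Real.exp (-b*t) * Φ T t) atTop (nhds 0) := by
          simpa using (hΦ0 t).const_mul (Real.exp (-b*t))
        refine Tendsto.congr' ?_ h1
        filter_upwards [eventually_ge_atTop t] with T hT
        exact (Set.indicator_of_mem (Set.mem_Ioc.mpr ⟨ht, hT⟩) (fun t => Real.exp (-b*t) * Φ T t)).symm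
      · refine Tendsto.congr' ?_ tendsto_const_nhds
        apply Eventually.of_forall
        intro T
        exact (Set.indicator_of_notMem (fun hmem => ht hmem.1) (fun t => Real.exp (-b*t) * Φ T t)).symm
    have := tendsto_integral_filter_of_dominated_convergence
      ((Set.Ioi (0:ℝ)).indicator (fun t => 2*C * Real.exp (-b*t)))
      hmeas' hbound' hint' hptw'
    simpa using this
  have hrw : (fun T => ∫ t in Set.Ioc (0:ℝ) T,
      Real.exp (-b*t) * (F t T - b * Real.exp (-b*T) * ∫ s in Set.Ioc (0:ℝ) T, Real.exp (b*s) * F t s))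
      = fun T => ∫ t, (Set.Ioc (0:ℝ) T).indicator (fun t => Real.exp (-b*t) * Φ T t) t ∂volume := by
    funext T
    rw [integral_indicator measurableSet_Ioc]
  rw [hrw]
  exact key


theorem cov_ZV_limit
    {Ω : Type*} [MeasurableSpace Ω] (P : Measure Ω) [IsProbabilityMeasure P]
    (b α2 β2 : ℝ) (hb : 0 < b) (hα2 : 0 < α2)
    (g : ℝ → ℝ)
    (hg_cont : ContinuousOn g (Set.Ici 0))
    (hg_bdd : ∃ C, ∀ t, 0 ≤ t → |g t| ≤ C)
    (hg_nonneg : ∀ t, 0 ≤ t → 0 ≤ g t)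
    (hg_zero : g 0 = 0)
    (hg_lim : Tendsto g atTop (nhds α2))
    (hβ2 : β2 = b / 2 * ∫ u in Set.Ioi (0:ℝ), Real.exp (-b * u) * g u)
    (B : ℝ → Ω → ℝ)
    (hB_meas : Measurable fun p : ℝ × Ω => B p.1 p.2)
    (hB_cont : ∀ᵐ ω ∂P, Continuous fun t => B t ω)
    (hB_zero : ∀ ω, B 0 ω = 0)
    (hB_mean : ∀ t, 0 ≤ t → ∫ ω, B t ω ∂P = 0)
    (hB_cov : ∀ s, 0 ≤ s → ∀ t, 0 ≤ t →
      ∫ ω, B s ω * B t ω ∂P = (g t + g s - g |t - s|) / 2)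
    (Z : ℝ → Ω → ℝ)
    (hZ : ∀ T ω, Z T ω = ∫ t in (0:ℝ)..T, Real.exp (-b * t) * B t ω)
    (U : ℝ → Ω → ℝ)
    (hU : ∀ T ω, U T ω = Real.exp (-b * T) * ∫ t in (0:ℝ)..T, Real.exp (b * t) * B t ω)
    (V : ℝ → Ω → ℝ)
    (hV : ∀ T ω, V T ω = B T ω - b * U T ω)
    :
    Tendsto (fun T => ∫ ω, Z T ω * V T ω ∂P) atTop (nhds 0) := by
  obtain ⟨C, hC⟩ := hg_bdd
  have hC0 : 0 ≤ C := le_trans (abs_nonneg _) (hC 0 le_rfl)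
  have hgpos : ∀ t : ℝ, 0 < t → 0 < g t :=
    aux_pos P α2 hα2 g hg_cont hg_nonneg hg_zero hg_lim B hB_meas hB_cont hB_cov
  obtain ⟨hmulle, hint_mul⟩ :=
    aux_int P C g hC hg_zero B hB_meas hB_zero hB_cov hgpos
  -- continuous extension of g and the covariance kernel F
  set G : ℝ → ℝ := fun x => g (max x 0) with hGdef
  have hG_cont : Continuous G :=
    hg_cont.comp_continuous (continuous_id.max continuous_const) (fun x => Set.mem_Ici.mpr (le_max_right _ _))
  have hG_eq : ∀ x : ℝ, 0 ≤ x → G x = g x := by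
    intro x hx
    rw [hGdef]
    simp [max_eq_left hx]
  have hG_lim : Tendsto G atTop (nhds α2) := by
    apply hg_lim.congr'
    filter_upwards [eventually_ge_atTop (0:ℝ)] with x hx
    exact (hG_eq x hx).symm
  have hG_bdd : ∀ x : ℝ, |G x| ≤ C := fun x => hC _ (le_max_right _ _)
  set F : ℝ → ℝ → ℝ := fun t s => (G t + G s - G |t - s|)/2 with hFdef
  have hF_cont : Continuous fun p : ℝ × ℝ => F p.1 p.2 := by
    apply Continuous.div_const
    exact ((hG_cont.comp continuous_fst).add (hG_cont.comp continuous_snd)).sub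
      (hG_cont.comp ((continuous_fst.sub continuous_snd).abs))
  have hF_bdd : ∀ t s : ℝ, |F t s| ≤ 2*C := by
    intro t s
    rw [hFdef]
    simp only
    rw [abs_div, abs_two]
    have h1 := hG_bdd t
    have h2 := hG_bdd s
    have h3 := hG_bdd |t - s|
    have h4 : |G t + G s - G (|t - s|)| ≤ |G t + G s| + |G (|t - s|)| := abs_sub _ _
    have h5 : |G t + G s| ≤ |G t| + |G s| := abs_add_le _ _
    linarith
  have hcov : ∀ t s : ℝ, 0 ≤ t → 0 ≤ s → ∫ ω, B t ω * B s ω ∂P = F t s := by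
    intro t s ht hs
    rw [hB_cov t ht s hs, hFdef]
    simp only
    rw [hG_eq t ht, hG_eq s hs, hG_eq _ (abs_nonneg _), abs_sub_comm t s]
    ring
  -- uniform-limit property of F
  have hF_lim : ∀ t ε : ℝ, 0 < ε → ∃ M : ℝ, ∀ s T : ℝ, M + t ≤ s → s ≤ T → |F t T - F t s| ≤ ε := by
    intro t ε hε
    obtain ⟨N, hN⟩ := Metric.tendsto_atTop.mp hG_lim (ε/2) (by positivity)
    refine ⟨|t| + max N 0, ?_⟩
    intro s T hs hsT
    have h1 : ∀ x : ℝ, N ≤ x → |G x - α2| < ε/2 := by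
      intro x hx
      have := hN x hx
      rwa [Real.dist_eq] at this
    have habs1 : -|t| ≤ t := neg_abs_le t
    have habs2 : t ≤ |t| := le_abs_self t
    have hm1 : N ≤ max N 0 := le_max_left _ _
    have hm2 : (0:ℝ) ≤ max N 0 := le_max_right _ _
    have hsN : N ≤ s := by linarith
    have hTN : N ≤ T := by linarith
    have hstN : N ≤ s - t := by linarith
    have hTtN : N ≤ T - t := by linarith
    have habsT : |t - T| = T - t := by rw [abs_sub_comm]; exact abs_of_nonneg (by linarith)
    have habss : |t - s| = s - t := by rw [abs_sub_comm]; exact abs_of_nonneg (by linarith)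
    rw [hFdef]
    simp only
    rw [habsT, habss]
    have e1 : |G T - G s| < ε := by
      calc |G T - G s| = |(G T - α2) - (G s - α2)| := by ring_nf
        _ ≤ |G T - α2| + |G s - α2| := abs_sub _ _
        _ < ε := by linarith [h1 T hTN, h1 s hsN]
    have e2 : |G (T - t) - G (s - t)| < ε := by
      calc |G (T - t) - G (s - t)| = |(G (T - t) - α2) - (G (s - t) - α2)| := by ring_nf
        _ ≤ |G (T - t) - α2| + |G (s - t) - α2| := abs_sub _ _
        _ < ε := by linarith [h1 (T - t) hTtN, h1 (s - t) hstN]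
    have hre : (G t + G T - G (T - t))/2 - (G t + G s - G (s - t))/2
        = ((G T - G s) - (G (T - t) - G (s - t)))/2 := by ring
    rw [hre, abs_div, abs_two]
    have h6 : |(G T - G s) - (G (T - t) - G (s - t))| ≤ |G T - G s| + |G (T - t) - G (s - t)| :=
      abs_sub _ _
    linarith
  -- the main identity
  have hmainT : ∀ T : ℝ, 0 < T → ∫ ω, Z T ω * V T ω ∂P
      = ∫ t in Set.Ioc (0:ℝ) T, Real.exp (-b*t)
          * (F t T - b * Real.exp (-b*T) * ∫ s in Set.Ioc (0:ℝ) T, Real.exp (b*s) * F t s) := by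
    intro T hT
    obtain ⟨hA, hAint, hB2, hBint⟩ :=
      aux_fubini P b (2*C) T hb (by linarith) hT B hB_meas F hF_cont hF_bdd hcov hmulle
    have hptw : (fun ω => Z T ω * V T ω) = fun ω =>
        (∫ t in Set.Ioc (0:ℝ) T, Real.exp (-b*t) * B t ω) * B T ω
        - b * Real.exp (-b*T) * ((∫ t in Set.Ioc (0:ℝ) T, Real.exp (-b*t) * B t ω)
            * (∫ s in Set.Ioc (0:ℝ) T, Real.exp (b*s) * B s ω)) := by
      funext ω
      rw [hV T ω, hU T ω, hZ T ω, intervalIntegral.integral_of_le hT.le,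
        intervalIntegral.integral_of_le hT.le]
      ring
    rw [hptw, integral_sub hAint (hBint.const_mul (b * Real.exp (-b*T))),
      integral_const_mul, hA, hB2]
    have hDD : ∫ t in Set.Ioc (0:ℝ) T, ∫ s in Set.Ioc (0:ℝ) T, Real.exp (-b*t) * Real.exp (b*s) * F t s
        = ∫ t in Set.Ioc (0:ℝ) T, Real.exp (-b*t) * ∫ s in Set.Ioc (0:ℝ) T, Real.exp (b*s) * F t s := by
      apply integral_congr_ae
      apply ae_of_all
      intro t
      simp only [mul_assoc]
      rw [integral_const_mul]
    rw [hDD]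
    have hexpc : Continuous fun s : ℝ => Real.exp (b*s) :=
      Real.continuous_exp.comp (continuous_const.mul continuous_id)
    have hexpc' : Continuous fun t : ℝ => Real.exp (-b*t) :=
      Real.continuous_exp.comp (continuous_const.mul continuous_id)
    have hd1 : IntegrableOn (fun t => Real.exp (-b*t) * F t T) (Set.Ioc (0:ℝ) T) volume :=
      (hexpc'.mul (hF_cont.comp (continuous_id.prodMk continuous_const))).integrableOn_Ioc
    have hd2 : IntegrableOn (fun t => Real.exp (-b*t)
        * ∫ s in Set.Ioc (0:ℝ) T, Real.exp (b*s) * F t s) (Set.Ioc (0:ℝ) T) volume := by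
      have hsm : StronglyMeasurable fun t => ∫ s in Set.Ioc (0:ℝ) T, Real.exp (b*s) * F t s :=
        StronglyMeasurable.integral_prod_right
          (f := fun t s => Real.exp (b*s) * F t s)
          ((hexpc.comp continuous_snd).mul hF_cont).stronglyMeasurable
      apply Integrable.mono (integrable_const (Real.exp (b*T) * (2*C) * T))
      · exact (hexpc'.stronglyMeasurable.mul hsm).aestronglyMeasurable
      · filter_upwards [ae_restrict_mem measurableSet_Ioc] with t ht
        have hIb : ‖∫ s in Set.Ioc (0:ℝ) T, Real.exp (b*s) * F t s‖ ≤ (Real.exp (b*T) * (2*C)) * T := by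
          have := norm_setIntegral_le_of_norm_le_const (C := Real.exp (b*T) * (2*C))
            (f := fun s => Real.exp (b*s) * F t s) (s := Set.Ioc (0:ℝ) T) (μ := volume)
            measure_Ioc_lt_top ?_
          · calc ‖∫ s in Set.Ioc (0:ℝ) T, Real.exp (b*s) * F t s‖
                ≤ Real.exp (b*T) * (2*C) * (volume (Set.Ioc (0:ℝ) T)).toReal := this
              _ = (Real.exp (b*T) * (2*C)) * T := by
                  rw [Real.volume_Ioc, ENNReal.toReal_ofReal (by linarith)]
                  ring
          · intro s hs
            rw [Real.norm_eq_abs, abs_mul, abs_of_pos (Real.exp_pos _)]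
            have hFb := hF_bdd t s
            have : Real.exp (b*s) ≤ Real.exp (b*T) := Real.exp_le_exp.mpr (by nlinarith [hs.2])
            nlinarith [abs_nonneg (F t s), Real.exp_pos (b*s)]
        have he1 : Real.exp (-b*t) ≤ 1 := Real.exp_le_one_iff.mpr (by nlinarith [ht.1])
        rw [Real.norm_eq_abs, abs_mul, abs_of_pos (Real.exp_pos _), Real.norm_eq_abs] at *
        have habs0 : (0:ℝ) ≤ |∫ s in Set.Ioc (0:ℝ) T, Real.exp (b*s) * F t s| := abs_nonneg _
        calc Real.exp (-b*t) * |∫ s in Set.Ioc (0:ℝ) T, Real.exp (b*s) * F t s|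
            ≤ 1 * (Real.exp (b*T) * (2*C) * T) := by
              apply mul_le_mul he1 hIb habs0 zero_le_one
          _ = |Real.exp (b*T) * (2*C) * T| := by
              rw [one_mul, abs_of_nonneg (by positivity)]
    have hre : ∫ t in Set.Ioc (0:ℝ) T, Real.exp (-b*t)
        * (F t T - b * Real.exp (-b*T) * ∫ s in Set.Ioc (0:ℝ) T, Real.exp (b*s) * F t s)
        = ∫ t in Set.Ioc (0:ℝ) T, (Real.exp (-b*t) * F t T
          - (b * Real.exp (-b*T)) * (Real.exp (-b*t) * ∫ s in Set.Ioc (0:ℝ) T, Real.exp (b*s) * F t s)) := by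
      apply integral_congr_ae
      apply ae_of_all
      intro t
      ring
    rw [hre, integral_sub hd1 (hd2.const_mul (b * Real.exp (-b*T))), integral_const_mul]
  -- conclusion
  have htendF := aux_lim b (2*C) hb (by linarith) F hF_cont hF_bdd hF_lim
  apply Tendsto.congr' _ htendF
  filter_upwards [eventually_gt_atTop (0:ℝ)] with T hT
  exact (hmainT T hT).symm
end

section
/- lim_{T → ∞} E[Z_T B_T] = β²/b. -/
open MeasureTheory Filter

theorem cov_ZB_limit
    {Ω : Type*} [MeasurableSpace Ω] (P : Measure Ω) [IsProbabilityMeasure P]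
    (b α2 β2 : ℝ) (hb : 0 < b) (hα2 : 0 < α2)
    (g : ℝ → ℝ)
    (hg_cont : ContinuousOn g (Set.Ici 0))
    (hg_bdd : ∃ C, ∀ t, 0 ≤ t → |g t| ≤ C)
    (hg_nonneg : ∀ t, 0 ≤ t → 0 ≤ g t)
    (hg_zero : g 0 = 0)
    (hg_lim : Tendsto g atTop (nhds α2))
    (hβ2 : β2 = b / 2 * ∫ u in Set.Ioi (0:ℝ), Real.exp (-b * u) * g u)
    (B : ℝ → Ω → ℝ)
    (hB_meas : Measurable fun p : ℝ × Ω => B p.1 p.2)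
    (hB_cont : ∀ᵐ ω ∂P, Continuous fun t => B t ω)
    (hB_zero : ∀ ω, B 0 ω = 0)
    (hB_mean : ∀ t, 0 ≤ t → ∫ ω, B t ω ∂P = 0)
    (hB_cov : ∀ s, 0 ≤ s → ∀ t, 0 ≤ t →
      ∫ ω, B s ω * B t ω ∂P = (g t + g s - g |t - s|) / 2)
    (Z : ℝ → Ω → ℝ)
    (hZ : ∀ T ω, Z T ω = ∫ t in (0:ℝ)..T, Real.exp (-b * t) * B t ω)
    :
    Tendsto (fun T => ∫ ω, Z T ω * B T ω ∂P) atTop (nhds (β2 / b)) := by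
  classical
  obtain ⟨C, hC⟩ := hg_bdd
  have hC0 : (0:ℝ) ≤ C := le_trans (abs_nonneg _) (hC 0 le_rfl)
  -- measurability of sections
  have hBt_meas : ∀ t, Measurable (B t) := fun t =>
    hB_meas.comp (measurable_prodMk_left)
  -- G : continuous global extension of g
  set G : ℝ → ℝ := fun t => g (max t 0) with hGdef
  have hG_cont : Continuous G :=
    hg_cont.comp_continuous (continuous_id.max continuous_const)
      (fun x => Set.mem_Ici.mpr (le_max_right _ _))
  have hG_eq : ∀ t, 0 ≤ t → G t = g t := by
    intro t ht; simp only [hGdef, max_eq_left ht]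
  have hG_bdd : ∀ t, |G t| ≤ C := fun t => hC _ (le_max_right _ _)
  have hG_lim : Tendsto G atTop (nhds α2) := by
    refine Tendsto.congr' ?_ hg_lim
    filter_upwards [eventually_ge_atTop (0:ℝ)] with t ht
    exact (hG_eq t ht).symm
  -- self-covariance value
  have hcov_self : ∀ t, 0 ≤ t → ∫ ω, B t ω * B t ω ∂P = g t := by
    intro t ht
    rw [hB_cov t ht t ht]
    simp [sub_self, abs_zero, hg_zero]
  -- integrability of squares where g t ≠ 0
  have hsq_int : ∀ t, 0 ≤ t → g t ≠ 0 → Integrable (fun ω => B t ω * B t ω) P := by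
    intro t ht hne
    by_contra hni
    have h0 := integral_undef hni
    rw [hcov_self t ht] at h0
    exact hne h0
  have hlin : ∀ t, 0 ≤ t → g t ≠ 0 →
      ∫⁻ ω, ENNReal.ofReal (B t ω * B t ω) ∂P = ENNReal.ofReal (g t) := by
    intro t ht hne
    rw [← ofReal_integral_eq_lintegral_ofReal (hsq_int t ht hne)
      (Filter.Eventually.of_forall fun ω => mul_self_nonneg _), hcov_self t ht]
  -- ========== Part A : g is positive on (0, ∞) ==========
  obtain ⟨Tb, hTb⟩ := eventually_atTop.mp
    (hg_lim.eventually (eventually_gt_nhds (by linarith : α2 / 2 < α2)))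
  have hgpos : ∀ t, 0 < t → 0 < g t := by
    intro t ht
    rcases (hg_nonneg t ht.le).lt_or_eq with hlt | heq
    · exact hlt
    exfalso
    set S := {u : ℝ | 0 ≤ u ∧ g u = 0} with hSdef
    have hSne : S.Nonempty := ⟨t, ht.le, heq.symm⟩
    have hSbdd : BddAbove S := by
      refine ⟨Tb, fun u hu => ?_⟩
      by_contra hc
      push_neg at hc
      have h2 := hTb u hc.le
      rw [hu.2] at h2
      linarith
    set t₁ := sSup S with ht₁def
    have hmemle : ∀ u ∈ S, u ≤ t₁ := fun u hu => le_csSup hSbdd hu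
    have ht₁pos : 0 < t₁ := lt_of_lt_of_le ht (hmemle t ⟨ht.le, heq.symm⟩)
    obtain ⟨u, -, hu_tend, hu_mem⟩ := exists_seq_tendsto_sSup hSne hSbdd
    have hgt₁ : g t₁ = 0 := by
      have hcw : ContinuousWithinAt g (Set.Ici 0) t₁ := hg_cont t₁ ht₁pos.le
      have h3 : Tendsto (fun n => g (u n)) atTop (nhds (g t₁)) :=
        hcw.tendsto.comp (tendsto_nhdsWithin_iff.mpr
          ⟨hu_tend, Filter.Eventually.of_forall fun n => (hu_mem n).1⟩)
      have h4 : (fun n => g (u n)) = fun _ => (0:ℝ) := funext fun n => (hu_mem n).2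
      rw [h4] at h3
      exact tendsto_nhds_unique h3 tendsto_const_nhds
    -- approximating sequence from the right
    set s : ℕ → ℝ := fun n => t₁ + 1 / (n + 1) with hsdef
    have hs_gt : ∀ n, t₁ < s n := by
      intro n
      have : (0:ℝ) < 1 / ((n:ℝ) + 1) := by positivity
      simpa [hsdef] using this
    have hs_pos : ∀ n, 0 < s n := fun n => ht₁pos.trans (hs_gt n)
    have hs_g_ne : ∀ n, g (s n) ≠ 0 := by
      intro n hgz
      exact absurd (hmemle _ ⟨(hs_pos n).le, hgz⟩) (not_le.mpr (hs_gt n))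
    have hs_tend : Tendsto s atTop (nhds t₁) := by
      have h5 : Tendsto (fun n : ℕ => 1 / ((n:ℝ) + 1)) atTop (nhds 0) :=
        tendsto_one_div_add_atTop_nhds_zero_nat
      have h6 : Tendsto (fun n : ℕ => t₁ + 1 / ((n:ℝ) + 1)) atTop (nhds (t₁ + 0)) :=
        tendsto_const_nhds.add h5
      simpa [hsdef] using h6
    have hgs_tend : Tendsto (fun n => g (s n)) atTop (nhds 0) := by
      have hcw : ContinuousWithinAt g (Set.Ici 0) t₁ := hg_cont t₁ ht₁pos.le
      have h6 := hcw.tendsto.comp (tendsto_nhdsWithin_iff.mpr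
        ⟨hs_tend, Filter.Eventually.of_forall fun n => (hs_pos n).le⟩)
      rwa [hgt₁] at h6
    -- Fatou: B t₁ = 0 a.e.
    have hB1 : ∀ᵐ ω ∂P, B t₁ ω = 0 := by
      have h0 : ∫⁻ ω, ENNReal.ofReal (B t₁ ω * B t₁ ω) ∂P = 0 := by
        refine le_antisymm ?_ zero_le
        have hcongr : ∫⁻ ω, ENNReal.ofReal (B t₁ ω * B t₁ ω) ∂P
            = ∫⁻ ω, liminf (fun n => ENNReal.ofReal (B (s n) ω * B (s n) ω)) atTop ∂P := by
          refine lintegral_congr_ae ?_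
          filter_upwards [hB_cont] with ω hω
          have h1 : Tendsto (fun n => B (s n) ω) atTop (nhds (B t₁ ω)) :=
            (hω.tendsto t₁).comp hs_tend
          have h2 : Tendsto (fun n => ENNReal.ofReal (B (s n) ω * B (s n) ω)) atTop
              (nhds (ENNReal.ofReal (B t₁ ω * B t₁ ω))) :=
            (ENNReal.continuous_ofReal.tendsto _).comp (h1.mul h1)
          exact h2.liminf_eq.symm
        calc ∫⁻ ω, ENNReal.ofReal (B t₁ ω * B t₁ ω) ∂P
            = ∫⁻ ω, liminf (fun n => ENNReal.ofReal (B (s n) ω * B (s n) ω)) atTop ∂P := hcongr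
          _ ≤ liminf (fun n => ∫⁻ ω, ENNReal.ofReal (B (s n) ω * B (s n) ω) ∂P) atTop :=
              lintegral_liminf_le' (fun n =>
                (((hBt_meas (s n)).mul (hBt_meas (s n))).ennreal_ofReal).aemeasurable)
          _ = liminf (fun n => ENNReal.ofReal (g (s n))) atTop := by
              simp only [fun n => hlin (s n) (hs_pos n).le (hs_g_ne n)]
          _ = 0 := by
              have h7 : Tendsto (fun n => ENNReal.ofReal (g (s n))) atTop (nhds 0) := by
                have := (ENNReal.continuous_ofReal.tendsto 0).comp hgs_tend
                simpa [Function.comp_def] using this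
              exact h7.liminf_eq
      have h8 := (lintegral_eq_zero_iff'
        ((((hBt_meas t₁).mul (hBt_meas t₁)).ennreal_ofReal).aemeasurable)).mp h0
      filter_upwards [h8] with ω hω
      have h9 : ENNReal.ofReal (B t₁ ω * B t₁ ω) = 0 := hω
      rw [ENNReal.ofReal_eq_zero] at h9
      exact mul_self_eq_zero.mp (le_antisymm h9 (mul_self_nonneg _))
    -- shift identity for g
    have hshift : ∀ v, 0 ≤ v → g v = g |v - t₁| := by
      intro v hv
      have hcv := hB_cov t₁ ht₁pos.le v hv
      have hz : ∫ ω, B t₁ ω * B v ω ∂P = 0 := by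
        have heq0 : (fun ω => B t₁ ω * B v ω) =ᵐ[P] fun _ => (0:ℝ) := by
          filter_upwards [hB1] with ω hω
          rw [hω, zero_mul]
        rw [integral_congr_ae heq0, integral_zero]
      rw [hz, hgt₁] at hcv
      linarith
    have hmul : ∀ n : ℕ, g ((n:ℝ) * t₁) = 0 := by
      intro n
      induction n with
      | zero => simpa using hg_zero
      | succ k ih =>
          have hnn : (0:ℝ) ≤ ((k:ℝ) + 1) * t₁ := by positivity
          have h10 := hshift (((k:ℝ) + 1) * t₁) hnn
          have habs : |((k:ℝ) + 1) * t₁ - t₁| = (k:ℝ) * t₁ := by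
            rw [abs_of_nonneg (by nlinarith : (0:ℝ) ≤ ((k:ℝ) + 1) * t₁ - t₁)]
            ring
          push_cast
          rw [h10, habs]
          exact ih
    have htend : Tendsto (fun n : ℕ => g ((n:ℝ) * t₁)) atTop (nhds α2) :=
      hg_lim.comp (Tendsto.atTop_mul_const ht₁pos tendsto_natCast_atTop_atTop)
    have htend0 : Tendsto (fun _ : ℕ => (0:ℝ)) atTop (nhds α2) := by
      refine Tendsto.congr ?_ htend
      intro n; exact hmul n
    have := tendsto_nhds_unique htend0 tendsto_const_nhds
    linarith
  -- ========== Part B : Fubini identity ==========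
  have keyeq : ∀ T : ℝ, 0 < T →
      ∫ ω, Z T ω * B T ω ∂P
        = ∫ t in Set.Ioc (0:ℝ) T, Real.exp (-b * t) * ((g T + g t - g (T - t)) / 2) := by
    intro T hT
    have hTm : Measurable (B T) := hBt_meas T
    have hFmeas : Measurable (Function.uncurry fun t ω =>
        Real.exp (-b * t) * (B t ω * B T ω)) := by
      have h1 : Measurable fun p : ℝ × Ω => Real.exp (-b * p.1) :=
        (measurable_fst.const_mul (-b)).exp
      exact h1.mul (hB_meas.mul (hTm.comp measurable_snd))
    have hfin : Integrable (Function.uncurry fun t ω =>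
        Real.exp (-b * t) * (B t ω * B T ω))
        ((volume.restrict (Set.Ioc (0:ℝ) T)).prod P) := by
      refine ⟨hFmeas.aestronglyMeasurable, ?_⟩
      rw [hasFiniteIntegral_iff_norm]
      have hprod := lintegral_prod
        (μ := volume.restrict (Set.Ioc (0:ℝ) T)) (ν := P)
        (fun p : ℝ × Ω => ENNReal.ofReal
          ‖Real.exp (-b * p.1) * (B p.1 p.2 * B T p.2)‖)
        (hFmeas.norm.ennreal_ofReal.aemeasurable)
      rw [show (fun p : ℝ × Ω => ENNReal.ofReal
          ‖(Function.uncurry fun t ω => Real.exp (-b * t) * (B t ω * B T ω)) p‖)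
          = fun p : ℝ × Ω => ENNReal.ofReal
            ‖Real.exp (-b * p.1) * (B p.1 p.2 * B T p.2)‖ from rfl, hprod]
      have hinner : ∀ t, 0 < t → t ≤ T →
          ∫⁻ ω, ENNReal.ofReal ‖Real.exp (-b * t) * (B t ω * B T ω)‖ ∂P
            ≤ ENNReal.ofReal C + ENNReal.ofReal C := by
        intro t ht htT
        have hb1 : ∀ ω, ‖Real.exp (-b * t) * (B t ω * B T ω)‖
            ≤ B t ω * B t ω + B T ω * B T ω := by
          intro ω
          have he : Real.exp (-b * t) ≤ 1 := Real.exp_le_one_iff.mpr (by nlinarith)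
          have he0 : (0:ℝ) < Real.exp (-b * t) := Real.exp_pos _
          rw [Real.norm_eq_abs, abs_mul, abs_of_pos he0]
          calc Real.exp (-b * t) * |B t ω * B T ω| ≤ 1 * |B t ω * B T ω| :=
                mul_le_mul_of_nonneg_right he (abs_nonneg _)
            _ = |B t ω| * |B T ω| := by rw [one_mul, abs_mul]
            _ ≤ B t ω * B t ω + B T ω * B T ω := by
                nlinarith [sq_nonneg (|B t ω| - |B T ω|), abs_nonneg (B t ω),
                  abs_nonneg (B T ω), abs_mul_abs_self (B t ω), abs_mul_abs_self (B T ω)]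
        calc ∫⁻ ω, ENNReal.ofReal ‖Real.exp (-b * t) * (B t ω * B T ω)‖ ∂P
            ≤ ∫⁻ ω, (ENNReal.ofReal (B t ω * B t ω)
                + ENNReal.ofReal (B T ω * B T ω)) ∂P := by
              refine lintegral_mono fun ω => ?_
              exact le_trans (ENNReal.ofReal_le_ofReal (hb1 ω)) ENNReal.ofReal_add_le
          _ = ENNReal.ofReal (g t) + ENNReal.ofReal (g T) := by
              rw [lintegral_add_left (f := fun ω => ENNReal.ofReal (B t ω * B t ω)) (((hBt_meas t).mul (hBt_meas t)).ennreal_ofReal),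
                hlin t ht.le (ne_of_gt (hgpos t ht)), hlin T hT.le (ne_of_gt (hgpos T hT))]
          _ ≤ ENNReal.ofReal C + ENNReal.ofReal C := by
              gcongr
              · exact le_trans (le_abs_self _) (hC _ ht.le)
              · exact le_trans (le_abs_self _) (hC _ hT.le)
      refine lt_of_le_of_lt (lintegral_mono_ae
        (g := fun _ => ENNReal.ofReal C + ENNReal.ofReal C) ?_) ?_
      · filter_upwards [ae_restrict_mem measurableSet_Ioc] with t ht
        exact hinner t ht.1 ht.2
      · rw [lintegral_const]
        have hμ : (volume.restrict (Set.Ioc (0:ℝ) T)) Set.univ = ENNReal.ofReal (T - 0) := by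
          rw [Measure.restrict_apply_univ, Real.volume_Ioc]
        rw [hμ]
        exact ENNReal.mul_lt_top (by simp) (by simp)
    have hswap := integral_integral_swap
      (f := fun t ω => Real.exp (-b * t) * (B t ω * B T ω)) hfin
    have hZeq : ∀ ω, Z T ω * B T ω
        = ∫ t in Set.Ioc (0:ℝ) T, Real.exp (-b * t) * (B t ω * B T ω) := by
      intro ω
      rw [hZ T ω, ← intervalIntegral.integral_mul_const,
        intervalIntegral.integral_of_le hT.le]
      simp only [mul_assoc]
    calc ∫ ω, Z T ω * B T ω ∂P
        = ∫ ω, (∫ t in Set.Ioc (0:ℝ) T, Real.exp (-b * t) * (B t ω * B T ω)) ∂P :=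
          integral_congr_ae (Filter.Eventually.of_forall fun ω => hZeq ω)
      _ = ∫ t in Set.Ioc (0:ℝ) T, (∫ ω, Real.exp (-b * t) * (B t ω * B T ω) ∂P) := hswap.symm
      _ = ∫ t in Set.Ioc (0:ℝ) T, Real.exp (-b * t) * ((g T + g t - g (T - t)) / 2) := by
          refine setIntegral_congr_ae measurableSet_Ioc
            (Filter.Eventually.of_forall fun t ht => ?_)
          rw [integral_const_mul, hB_cov t ht.1.le T hT.le,
            abs_of_nonneg (sub_nonneg.mpr ht.2)]
  -- ========== Part C : the limit ==========
  have hexpint : IntegrableOn (fun u => Real.exp (-b * u)) (Set.Ioi (0:ℝ)) volume :=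
    exp_neg_integrableOn_Ioi 0 hb
  have hexp_cont : Continuous fun u : ℝ => Real.exp (-b * u) :=
    (Real.continuous_exp.comp (continuous_const.mul continuous_id))
  have hIexp : ∫ u in Set.Ioi (0:ℝ), Real.exp (-b * u) = 1 / b := by
    have hderiv : ∀ x ∈ Set.Ioi (0:ℝ),
        HasDerivAt (fun u => -Real.exp (-b * u) / b) (Real.exp (-b * x)) x := by
      intro x _
      have h1 : HasDerivAt (fun u : ℝ => -b * u) (-b) x := by
        simpa using (hasDerivAt_id x).const_mul (-b)
      have h2 := h1.exp
      have h3 := (h2.div_const b).neg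
      have h4 : HasDerivAt (fun u => -Real.exp (-b * u) / b)
          (-(Real.exp (-b * x) * -b / b)) x := by
        simpa [neg_div, Pi.neg_def] using h3
      have h5 : -(Real.exp (-b * x) * -b / b) = Real.exp (-b * x) := by
        field_simp
      rwa [h5] at h4
    have hcont : ContinuousWithinAt (fun u => -Real.exp (-b * u) / b) (Set.Ici 0) 0 :=
      ((hexp_cont.neg).div_const b).continuousWithinAt
    have htd : Tendsto (fun u => -Real.exp (-b * u) / b) atTop (nhds 0) := by
      have h0 : Tendsto (fun u : ℝ => Real.exp (-b * u)) atTop (nhds 0) := by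
        have h1 : Tendsto (fun u : ℝ => b * u) atTop atTop :=
          Tendsto.const_mul_atTop hb tendsto_id
        have h2 : Tendsto (fun u : ℝ => -(b * u)) atTop atBot :=
          tendsto_neg_atTop_atBot.comp h1
        have h3 := Real.tendsto_exp_atBot.comp h2
        have h4 : (Real.exp ∘ fun u : ℝ => -(b * u)) = fun u : ℝ => Real.exp (-b * u) := by
          funext u; simp [Function.comp, neg_mul]
        rwa [h4] at h3
      have := (h0.neg).div_const b
      simpa using this
    have hval := integral_Ioi_of_hasDerivAt_of_tendsto hcont hderiv hexpint htd
    rw [hval]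
    simp only [mul_zero, Real.exp_zero]
    ring
  have hA : Tendsto (fun T => ∫ t in Set.Ioc (0:ℝ) T, Real.exp (-b * t)) atTop
      (nhds (1 / b)) := by
    have h1 := intervalIntegral_tendsto_integral_Ioi (μ := volume) 0 hexpint tendsto_id
    rw [hIexp] at h1
    refine Tendsto.congr' ?_ h1
    filter_upwards [eventually_ge_atTop (0:ℝ)] with T hT
    exact intervalIntegral.integral_of_le hT
  have hGint : IntegrableOn (fun u => Real.exp (-b * u) * G u) (Set.Ioi (0:ℝ)) volume := by
    refine Integrable.mono' (hexpint.const_mul C)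
      ((hexp_cont.mul hG_cont).aestronglyMeasurable) ?_
    refine Filter.Eventually.of_forall fun u => ?_
    rw [Real.norm_eq_abs, abs_mul, abs_of_pos (Real.exp_pos _)]
    calc Real.exp (-b * u) * |G u| ≤ Real.exp (-b * u) * C := by
          gcongr; exact hG_bdd u
      _ = C * Real.exp (-b * u) := mul_comm _ _
  have hJeq : ∫ u in Set.Ioi (0:ℝ), Real.exp (-b * u) * G u
      = ∫ u in Set.Ioi (0:ℝ), Real.exp (-b * u) * g u :=
    setIntegral_congr_fun measurableSet_Ioi (fun u hu => by
      rw [hG_eq u (le_of_lt hu)])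
  have hI2 : Tendsto (fun T => ∫ t in Set.Ioc (0:ℝ) T, Real.exp (-b * t) * G t) atTop
      (nhds (∫ u in Set.Ioi (0:ℝ), Real.exp (-b * u) * g u)) := by
    have h1 := intervalIntegral_tendsto_integral_Ioi (μ := volume) 0 hGint tendsto_id
    rw [hJeq] at h1
    refine Tendsto.congr' ?_ h1
    filter_upwards [eventually_ge_atTop (0:ℝ)] with T hT
    exact intervalIntegral.integral_of_le hT
  have hI3 : Tendsto (fun T => ∫ t in Set.Ioc (0:ℝ) T, Real.exp (-b * t) * G (T - t))
      atTop (nhds (α2 * (1 / b))) := by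
    have hlimint : ∫ t in Set.Ioi (0:ℝ), (Real.exp (-b * t) * α2) = α2 * (1 / b) := by
      rw [integral_mul_const, hIexp]
      ring
    have hmeasF : ∀ᶠ (T : ℝ) in atTop, AEStronglyMeasurable
        (fun t => Set.indicator (Set.Ioc (0:ℝ) T)
          (fun u => Real.exp (-b * u) * G (T - u)) t)
        (volume.restrict (Set.Ioi (0:ℝ))) :=
      Filter.Eventually.of_forall fun T =>
        ((hexp_cont.mul (hG_cont.comp
          (continuous_const.sub continuous_id))).aestronglyMeasurable).indicator
          measurableSet_Ioc
    have hboundF : ∀ᶠ (T : ℝ) in atTop, ∀ᵐ t ∂(volume.restrict (Set.Ioi (0:ℝ))),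
        ‖Set.indicator (Set.Ioc (0:ℝ) T) (fun u => Real.exp (-b * u) * G (T - u)) t‖
          ≤ C * Real.exp (-b * t) := by
      refine Filter.Eventually.of_forall fun T => Filter.Eventually.of_forall fun t => ?_
      by_cases ht : t ∈ Set.Ioc (0:ℝ) T
      · rw [Set.indicator_of_mem ht, Real.norm_eq_abs, abs_mul,
          abs_of_pos (Real.exp_pos _)]
        calc Real.exp (-b * t) * |G (T - t)| ≤ Real.exp (-b * t) * C := by
              gcongr; exact hG_bdd _
          _ = C * Real.exp (-b * t) := mul_comm _ _
      · rw [Set.indicator_of_notMem ht]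
        simp only [norm_zero]
        positivity
    have hptw : ∀ᵐ t ∂(volume.restrict (Set.Ioi (0:ℝ))),
        Tendsto (fun T : ℝ => Set.indicator (Set.Ioc (0:ℝ) T)
          (fun u => Real.exp (-b * u) * G (T - u)) t) atTop
          (nhds (Real.exp (-b * t) * α2)) := by
      filter_upwards [ae_restrict_mem measurableSet_Ioi] with t ht
      have h1 : Tendsto (fun T : ℝ => T - t) atTop atTop := by
        have := tendsto_atTop_add_const_right atTop (-t) (tendsto_id (α := ℝ))
        simpa [sub_eq_add_neg] using this
      have h2 : Tendsto (fun T => Real.exp (-b * t) * G (T - t)) atTop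
          (nhds (Real.exp (-b * t) * α2)) :=
        tendsto_const_nhds.mul (hG_lim.comp h1)
      refine Tendsto.congr' ?_ h2
      filter_upwards [eventually_ge_atTop t] with T hT
      exact (Set.indicator_of_mem (Set.mem_Ioc.mpr ⟨Set.mem_Ioi.mp ht, hT⟩)
        (fun u => Real.exp (-b * u) * G (T - u))).symm
    have hdct := tendsto_integral_filter_of_dominated_convergence
      (μ := volume.restrict (Set.Ioi (0:ℝ))) (l := atTop)
      (F := fun T t => Set.indicator (Set.Ioc (0:ℝ) T)
        (fun u => Real.exp (-b * u) * G (T - u)) t)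
      (f := fun t => Real.exp (-b * t) * α2)
      (fun t => C * Real.exp (-b * t))
      hmeasF hboundF (hexpint.const_mul C) hptw
    rw [hlimint] at hdct
    refine Tendsto.congr' ?_ hdct
    refine Filter.Eventually.of_forall fun T => ?_
    show ∫ t in Set.Ioi (0:ℝ), (Set.Ioc (0:ℝ) T).indicator
        (fun u => Real.exp (-b * u) * G (T - u)) t
      = ∫ t in Set.Ioc (0:ℝ) T, Real.exp (-b * t) * G (T - t)
    rw [integral_indicator measurableSet_Ioc, Measure.restrict_restrict measurableSet_Ioc,
      Set.inter_eq_self_of_subset_left Set.Ioc_subset_Ioi_self]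
  -- combination identity
  have hcomb : ∀ T : ℝ, 0 < T →
      ∫ t in Set.Ioc (0:ℝ) T, Real.exp (-b * t) * ((g T + g t - g (T - t)) / 2)
      = (g T * (∫ t in Set.Ioc (0:ℝ) T, Real.exp (-b * t))
          + (∫ t in Set.Ioc (0:ℝ) T, Real.exp (-b * t) * G t)
          - (∫ t in Set.Ioc (0:ℝ) T, Real.exp (-b * t) * G (T - t))) / 2 := by
    intro T hT
    have h1 : ∫ t in Set.Ioc (0:ℝ) T, Real.exp (-b * t) * ((g T + g t - g (T - t)) / 2)
        = ∫ t in Set.Ioc (0:ℝ) T, (g T * Real.exp (-b * t)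
            + Real.exp (-b * t) * G t - Real.exp (-b * t) * G (T - t)) / 2 := by
      refine setIntegral_congr_fun measurableSet_Ioc fun t ht => ?_
      rw [hG_eq t ht.1.le, hG_eq (T - t) (by linarith [ht.2] : (0:ℝ) ≤ T - t)]
      ring
    have hie : IntegrableOn (fun t => Real.exp (-b * t)) (Set.Ioc (0:ℝ) T) volume :=
      hexp_cont.integrableOn_Ioc
    have hie1 : IntegrableOn (fun t => g T * Real.exp (-b * t)) (Set.Ioc (0:ℝ) T) volume :=
      hie.const_mul (g T)
    have hie2 : IntegrableOn (fun t => Real.exp (-b * t) * G t) (Set.Ioc (0:ℝ) T) volume :=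
      (hexp_cont.mul hG_cont).integrableOn_Ioc
    have hie3 : IntegrableOn (fun t => Real.exp (-b * t) * G (T - t))
        (Set.Ioc (0:ℝ) T) volume :=
      (hexp_cont.mul (hG_cont.comp (continuous_const.sub continuous_id))).integrableOn_Ioc
    have hie12 : IntegrableOn (fun t => g T * Real.exp (-b * t)
        + Real.exp (-b * t) * G t) (Set.Ioc (0:ℝ) T) volume := hie1.add hie2
    rw [h1, integral_div, integral_sub hie12 hie3, integral_add hie1 hie2,
      integral_const_mul]
  -- assemble the limit
  have hmain : Tendsto (fun T => (g T * (∫ t in Set.Ioc (0:ℝ) T, Real.exp (-b * t))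
      + (∫ t in Set.Ioc (0:ℝ) T, Real.exp (-b * t) * G t)
      - (∫ t in Set.Ioc (0:ℝ) T, Real.exp (-b * t) * G (T - t))) / 2) atTop
      (nhds (β2 / b)) := by
    have h := (((hg_lim.mul hA).add hI2).sub hI3).div_const 2
    have hval : (α2 * (1 / b) + (∫ u in Set.Ioi (0:ℝ), Real.exp (-b * u) * g u)
        - α2 * (1 / b)) / 2 = β2 / b := by
      rw [hβ2]
      field_simp
      ring
    rwa [hval] at h
  have hΦ : Tendsto (fun T => ∫ t in Set.Ioc (0:ℝ) T,
      Real.exp (-b * t) * ((g T + g t - g (T - t)) / 2)) atTop (nhds (β2 / b)) := by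
    refine Tendsto.congr' ?_ hmain
    filter_upwards [eventually_gt_atTop (0:ℝ)] with T hT
    exact (hcomb T hT).symm
  refine Tendsto.congr' ?_ hΦ
  filter_upwards [eventually_gt_atTop (0:ℝ)] with T hT
  exact (keyeq T hT).symm
end

section
/- lim_{T → ∞} E[B_T U_T] = (α² − β²)/b. -/
open MeasureTheory Filter

theorem cov_BU_limit
    {Ω : Type*} [MeasurableSpace Ω] (P : Measure Ω) [IsProbabilityMeasure P]
    (b α2 β2 : ℝ) (hb : 0 < b) (hα2 : 0 < α2)
    (g : ℝ → ℝ)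
    (hg_cont : ContinuousOn g (Set.Ici 0))
    (hg_bdd : ∃ C, ∀ t, 0 ≤ t → |g t| ≤ C)
    (hg_nonneg : ∀ t, 0 ≤ t → 0 ≤ g t)
    (hg_zero : g 0 = 0)
    (hg_lim : Tendsto g atTop (nhds α2))
    (hβ2 : β2 = b / 2 * ∫ u in Set.Ioi (0:ℝ), Real.exp (-b * u) * g u)
    (B : ℝ → Ω → ℝ)
    (hB_meas : Measurable fun p : ℝ × Ω => B p.1 p.2)
    (hB_cont : ∀ᵐ ω ∂P, Continuous fun t => B t ω)
    (hB_zero : ∀ ω, B 0 ω = 0)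
    (hB_mean : ∀ t, 0 ≤ t → ∫ ω, B t ω ∂P = 0)
    (hB_cov : ∀ s, 0 ≤ s → ∀ t, 0 ≤ t →
      ∫ ω, B s ω * B t ω ∂P = (g t + g s - g |t - s|) / 2)
    (U : ℝ → Ω → ℝ)
    (hU : ∀ T ω, U T ω = Real.exp (-b * T) * ∫ t in (0:ℝ)..T, Real.exp (b * t) * B t ω)
    :
    Tendsto (fun T => ∫ ω, B T ω * U T ω ∂P) atTop (nhds ((α2 - β2) / b)) := by
  classical
  obtain ⟨C, hC⟩ := hg_bdd
  have hC0 : (0:ℝ) ≤ C := le_trans (abs_nonneg _) (hC 0 le_rfl)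
  have hgle : ∀ t, 0 ≤ t → g t ≤ C := fun t ht => (abs_le.1 (hC t ht)).2
  have meas : ∀ t : ℝ, Measurable (B t) := fun t =>
    hB_meas.comp (measurable_const.prodMk measurable_id)
  -- elementary inequality
  have ineq : ∀ x y ε : ℝ, 0 < ε → |x * y| ≤ x * x / (2 * ε) + ε / 2 * (y * y) := by
    intro x y ε hε
    have h1 : 2 * ε * |x * y| ≤ x * x + ε ^ 2 * (y * y) := by
      nlinarith [sq_nonneg (|x| - ε * |y|), sq_abs x, sq_abs y, abs_mul x y,
        abs_nonneg x, abs_nonneg y]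
    have h2ε : (0:ℝ) < 2 * ε := by linarith
    rw [← sub_nonneg]
    have h3 : x * x / (2 * ε) + ε / 2 * (y * y) - |x * y|
        = (x * x + ε ^ 2 * (y * y) - 2 * ε * |x * y|) / (2 * ε) := by
      field_simp
    rw [h3]
    apply div_nonneg _ h2ε.le
    linarith
  -- variance identity
  have hvar : ∀ t : ℝ, 0 ≤ t → ∫ ω, B t ω * B t ω ∂P = g t := by
    intro t ht
    have h := hB_cov t ht t ht
    rw [sub_self, abs_zero, hg_zero] at h
    rw [h]; ring
  have hsq' : ∀ t : ℝ, 0 ≤ t → g t ≠ 0 → Integrable (fun ω => B t ω * B t ω) P := by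
    intro t ht hgt
    by_contra hcon
    exact hgt ((hvar t ht).symm.trans (integral_undef hcon))
  -- rigidity : g does not vanish on (0, ∞)
  have gpos : ∀ t : ℝ, 0 < t → g t ≠ 0 := by
    intro t0 ht0 hg0
    obtain ⟨R, hR⟩ := eventually_atTop.mp (hg_lim.eventually (lt_mem_nhds (half_lt_self hα2)))
    set S : Set ℝ := {s : ℝ | 0 < s ∧ g s = 0} with hSdef
    have hmemS : t0 ∈ S := ⟨ht0, hg0⟩
    have hbdd : BddAbove S := by
      refine ⟨R, fun s hs => ?_⟩
      by_contra hsR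
      push_neg at hsR
      have h := hR s hsR.le
      rw [hs.2] at h
      linarith
    set c := sSup S with hcdef
    have hc_pos : 0 < c := lt_of_lt_of_le ht0 (le_csSup hbdd hmemS)
    have hgc : g c = 0 := by
      obtain ⟨u, -, hut, hum⟩ := exists_seq_tendsto_sSup ⟨t0, hmemS⟩ hbdd
      have h1 : Tendsto (fun n => g (u n)) atTop (nhds (g c)) := by
        refine (hg_cont c hc_pos.le).tendsto.comp ?_
        rw [tendsto_nhdsWithin_iff]
        exact ⟨hut, Eventually.of_forall fun n => Set.mem_Ici.mpr (hum n).1.le⟩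
      have h2 : (fun n => g (u n)) = fun _ => (0:ℝ) := funext fun n => (hum n).2
      rw [h2] at h1
      exact tendsto_nhds_unique h1 tendsto_const_nhds
    set v : ℕ → ℝ := fun n => c + 1 / ((n:ℝ) + 1) with hvdef
    have hv_pos : ∀ n, 0 < v n := fun n => add_pos hc_pos (by positivity)
    have hv_gt : ∀ n, c < v n := fun n => lt_add_of_pos_right c (by positivity)
    have hv_ne : ∀ n, g (v n) ≠ 0 := by
      intro n hgv
      exact absurd (le_csSup hbdd ⟨hv_pos n, hgv⟩) (not_le.2 (hv_gt n))
    have hv_tend : Tendsto v atTop (nhds c) := by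
      have h : Tendsto (fun n : ℕ => c + 1 / ((n:ℝ) + 1)) atTop (nhds (c + 0)) :=
        Tendsto.add tendsto_const_nhds tendsto_one_div_add_atTop_nhds_zero_nat
      rw [hvdef]
      simpa using h
    have hgv_tend : Tendsto (fun n => g (v n)) atTop (nhds 0) := by
      rw [← hgc]
      refine (hg_cont c hc_pos.le).tendsto.comp ?_
      rw [tendsto_nhdsWithin_iff]
      exact ⟨hv_tend, Eventually.of_forall fun n => Set.mem_Ici.mpr (hv_pos n).le⟩
    have key : ∀ t : ℝ, 0 ≤ t → g t ≠ 0 → g t = g |t - c| := by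
      intro t ht hgt
      have hint_t := hsq' t ht hgt
      have hintv : ∀ n, Integrable (fun ω => B (v n) ω * B (v n) ω) P :=
        fun n => hsq' (v n) (hv_pos n).le (hv_ne n)
      have hb_eps : ∀ ε : ℝ, 0 < ε → ∀ n : ℕ,
          |(g t + g (v n) - g |t - v n|) / 2| ≤ g (v n) / (2 * ε) + ε / 2 * g t := by
        intro ε hε n
        have hcov := hB_cov (v n) (hv_pos n).le t ht
        have hdom : Integrable
            (fun ω => B (v n) ω * B (v n) ω / (2 * ε) + ε / 2 * (B t ω * B t ω)) P :=
          ((hintv n).div_const _).add (hint_t.const_mul _)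
        have hprod : Integrable (fun ω => B (v n) ω * B t ω) P := by
          refine Integrable.mono' hdom (((meas (v n)).mul (meas t)).aestronglyMeasurable)
            (Eventually.of_forall fun ω => ?_)
          rw [Real.norm_eq_abs]
          exact ineq _ _ ε hε
        have hcalc : ∫ ω, (B (v n) ω * B (v n) ω / (2 * ε) + ε / 2 * (B t ω * B t ω)) ∂P
            = g (v n) / (2 * ε) + ε / 2 * g t := by
          rw [integral_add ((hintv n).div_const _) (hint_t.const_mul _), integral_div,
            integral_const_mul, hvar (v n) (hv_pos n).le, hvar t ht]
        calc |(g t + g (v n) - g |t - v n|) / 2|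
            = |∫ ω, B (v n) ω * B t ω ∂P| := by rw [hcov]
          _ ≤ ∫ ω, |B (v n) ω * B t ω| ∂P :=
              norm_integral_le_integral_norm (μ := P) (fun ω => B (v n) ω * B t ω)
          _ ≤ ∫ ω, (B (v n) ω * B (v n) ω / (2 * ε) + ε / 2 * (B t ω * B t ω)) ∂P :=
              integral_mono hprod.abs hdom (fun ω => ineq _ _ ε hε)
          _ = _ := hcalc
      have habs_seq : Tendsto (fun n => |(g t + g (v n) - g |t - v n|) / 2|) atTop
          (nhds |(g t + 0 - g |t - c|) / 2|) := by
        have h2 : Tendsto (fun n => g |t - v n|) atTop (nhds (g |t - c|)) := by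
          refine (hg_cont |t - c| (Set.mem_Ici.mpr (abs_nonneg _))).tendsto.comp ?_
          rw [tendsto_nhdsWithin_iff]
          refine ⟨?_, Eventually.of_forall fun n => Set.mem_Ici.mpr (abs_nonneg _)⟩
          exact (continuous_abs.tendsto _).comp (tendsto_const_nhds.sub hv_tend)
        exact (continuous_abs.tendsto _).comp
          (((tendsto_const_nhds.add hgv_tend).sub h2).div_const 2)
      have hle : ∀ ε : ℝ, 0 < ε → |(g t + 0 - g |t - c|) / 2| ≤ 0 / (2 * ε) + ε / 2 * g t := by
        intro ε hε
        refine le_of_tendsto_of_tendsto' habs_seq ?_ (hb_eps ε hε)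
        exact (hgv_tend.div_const _).add tendsto_const_nhds
      have hgt0 : 0 ≤ g t := hg_nonneg t ht
      have hzero : |(g t - g |t - c|) / 2| ≤ 0 := by
        by_contra hpos
        push_neg at hpos
        set A := |(g t - g |t - c|) / 2| with hAdef
        have hA : ∀ ε : ℝ, 0 < ε → A ≤ ε / 2 * g t := by
          intro ε hε
          have h := hle ε hε
          rw [zero_div, zero_add] at h
          simpa [hAdef, add_zero] using h
        have h1 := hA (A / (g t + 1)) (div_pos hpos (by linarith))
        have h2 : A / (g t + 1) / 2 * g t = A * g t / (2 * (g t + 1)) := by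
          have h7 : g t + 1 ≠ 0 := ne_of_gt (by linarith)
          field_simp
        rw [h2, le_div_iff₀ (by positivity)] at h1
        nlinarith [mul_nonneg hpos.le hgt0]
      have h4 : g t - g |t - c| = 0 := by
        have h5 := abs_nonneg ((g t - g |t - c|) / 2)
        have h6 : |(g t - g |t - c|) / 2| = 0 := le_antisymm hzero h5
        rw [abs_eq_zero] at h6
        linarith
      linarith
    have hmulzero : ∀ k : ℕ, g ((k:ℝ) * c) = 0 := by
      intro k
      induction k with
      | zero => simpa using hg_zero
      | succ k ih =>
        by_contra hne
        have h1 : (0:ℝ) ≤ ((k+1 : ℕ):ℝ) * c := mul_nonneg (Nat.cast_nonneg _) hc_pos.le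
        have h2 := key _ h1 hne
        have h3 : |((k+1 : ℕ):ℝ) * c - c| = (k:ℝ) * c := by
          push_cast
          rw [show ((k:ℝ) + 1) * c - c = (k:ℝ) * c from by ring]
          exact abs_of_nonneg (mul_nonneg (Nat.cast_nonneg _) hc_pos.le)
        rw [h3, ih] at h2
        exact hne h2
    have hlim2 : Tendsto (fun n : ℕ => g ((n:ℝ) * c)) atTop (nhds α2) :=
      hg_lim.comp (tendsto_natCast_atTop_atTop.atTop_mul_const hc_pos)
    have hconst : (fun n : ℕ => g ((n:ℝ) * c)) = fun _ => (0:ℝ) := funext fun n => hmulzero n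
    rw [hconst] at hlim2
    exact absurd (tendsto_nhds_unique hlim2 tendsto_const_nhds) (by linarith)
  -- square integrability everywhere
  have hsq : ∀ t : ℝ, 0 ≤ t → Integrable (fun ω => B t ω * B t ω) P := by
    intro t ht
    rcases ht.eq_or_lt with h | h
    · have h2 : (fun ω => B t ω * B t ω) = fun _ => (0:ℝ) := funext fun ω => by
        rw [← h, hB_zero]; ring
      rw [h2]; exact integrable_const 0
    · exact hsq' t ht (gpos t h)
  have hmul : ∀ s : ℝ, 0 ≤ s → ∀ t : ℝ, 0 ≤ t → Integrable (fun ω => B s ω * B t ω) P := by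
    intro s hs t ht
    refine Integrable.mono' (((hsq s hs).add (hsq t ht)).div_const 2)
      (((meas s).mul (meas t)).aestronglyMeasurable) (Eventually.of_forall fun ω => ?_)
    rw [Real.norm_eq_abs]
    have h := ineq (B s ω) (B t ω) 1 one_pos
    calc |B s ω * B t ω| ≤ B s ω * B s ω / (2*1) + 1/2 * (B t ω * B t ω) := h
      _ = (B s ω * B s ω + B t ω * B t ω) / 2 := by ring
  have habs : ∀ s : ℝ, 0 ≤ s → ∀ t : ℝ, 0 ≤ t → ∫ ω, |B s ω * B t ω| ∂P ≤ C := by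
    intro s hs t ht
    have h1 : ∫ ω, |B s ω * B t ω| ∂P ≤ ∫ ω, (B s ω * B s ω + B t ω * B t ω) / 2 ∂P := by
      refine integral_mono (hmul s hs t ht).abs (((hsq s hs).add (hsq t ht)).div_const 2)
        fun ω => ?_
      have h := ineq (B s ω) (B t ω) 1 one_pos
      calc |B s ω * B t ω| ≤ B s ω * B s ω / (2*1) + 1/2 * (B t ω * B t ω) := h
        _ = (B s ω * B s ω + B t ω * B t ω) / 2 := by ring
    rw [integral_div, integral_add (hsq s hs) (hsq t ht), hvar s hs, hvar t ht] at h1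
    have h2 := hgle s hs
    have h3 := hgle t ht
    linarith
  -- Fubini
  have main_eq : ∀ T : ℝ, 0 < T → ∫ ω, B T ω * U T ω ∂P =
      Real.exp (-b * T) *
        ∫ t in Set.Ioc (0:ℝ) T, Real.exp (b * t) * ((g T + g t - g (T - t)) / 2) := by
    intro T hT
    have hTnn : (0:ℝ) ≤ T := hT.le
    have hunc : Function.uncurry (fun (t : ℝ) (ω : Ω) => Real.exp (b * t) * B t ω * B T ω)
        = fun p : ℝ × Ω => Real.exp (b * p.1) * B p.1 p.2 * B T p.2 := rfl
    have hmeasP : AEStronglyMeasurable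
        (Function.uncurry fun (t : ℝ) (ω : Ω) => Real.exp (b * t) * B t ω * B T ω)
        ((volume.restrict (Set.Ioc (0:ℝ) T)).prod P) := by
      rw [hunc]
      exact (((Real.measurable_exp.comp (measurable_fst.const_mul b)).mul hB_meas).mul
        ((meas T).comp measurable_snd)).aestronglyMeasurable
    have hFint : Integrable (Function.uncurry fun (t : ℝ) (ω : Ω) =>
        Real.exp (b * t) * B t ω * B T ω)
        ((volume.restrict (Set.Ioc (0:ℝ) T)).prod P) := by
      rw [integrable_prod_iff hmeasP]
      constructor
      · refine Eventually.mono (ae_restrict_mem measurableSet_Ioc) fun t ht => ?_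
        simp only [Function.uncurry]
        have h2 : (fun ω => Real.exp (b * t) * B t ω * B T ω)
            = fun ω => Real.exp (b * t) * (B t ω * B T ω) := funext fun ω => mul_assoc _ _ _
        rw [h2]
        exact (hmul t ht.1.le T hTnn).const_mul _
      · refine Integrable.mono' (integrable_const (Real.exp (b * T) * C))
          hmeasP.norm.integral_prod_right' ?_
        refine Eventually.mono (ae_restrict_mem measurableSet_Ioc) fun t ht => ?_
        simp only [Function.uncurry]
        have hnn : 0 ≤ ∫ ω, ‖Real.exp (b * t) * B t ω * B T ω‖ ∂P :=
          integral_nonneg fun ω => norm_nonneg _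
        rw [Real.norm_eq_abs, abs_of_nonneg hnn]
        have heq : (fun ω => ‖Real.exp (b * t) * B t ω * B T ω‖)
            = fun ω => Real.exp (b * t) * |B t ω * B T ω| := funext fun ω => by
          rw [Real.norm_eq_abs, mul_assoc, abs_mul, abs_of_pos (Real.exp_pos _)]
        calc ∫ ω, ‖Real.exp (b * t) * B t ω * B T ω‖ ∂P
            = Real.exp (b * t) * ∫ ω, |B t ω * B T ω| ∂P := by rw [heq, integral_const_mul]
          _ ≤ Real.exp (b * T) * C := by
              refine mul_le_mul (Real.exp_le_exp.2 ?_) (habs t ht.1.le T hTnn)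
                (integral_nonneg fun ω => abs_nonneg _) (Real.exp_pos _).le
              nlinarith [ht.2]
    have hstep : ∀ ω, B T ω * U T ω =
        Real.exp (-b * T) * ∫ t in Set.Ioc (0:ℝ) T, Real.exp (b * t) * B t ω * B T ω := by
      intro ω
      have h2 : (∫ t in Set.Ioc (0:ℝ) T, Real.exp (b * t) * B t ω) * B T ω
          = ∫ t in Set.Ioc (0:ℝ) T, Real.exp (b * t) * B t ω * B T ω :=
        (integral_mul_const _ _).symm
      rw [hU T ω, intervalIntegral.integral_of_le hTnn, ← h2]
      ring
    calc ∫ ω, B T ω * U T ω ∂P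
        = ∫ ω, (Real.exp (-b * T) *
            ∫ t in Set.Ioc (0:ℝ) T, Real.exp (b * t) * B t ω * B T ω) ∂P := by
          exact integral_congr_ae (Eventually.of_forall fun ω => hstep ω)
      _ = Real.exp (-b * T) * ∫ ω, (∫ t in Set.Ioc (0:ℝ) T,
            Real.exp (b * t) * B t ω * B T ω) ∂P := integral_const_mul _ _
      _ = Real.exp (-b * T) * ∫ t in Set.Ioc (0:ℝ) T,
            (∫ ω, Real.exp (b * t) * B t ω * B T ω ∂P) := by
          congr 1
          exact (integral_integral_swap hFint).symm
      _ = Real.exp (-b * T) * ∫ t in Set.Ioc (0:ℝ) T,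
            Real.exp (b * t) * ((g T + g t - g (T - t)) / 2) := by
          congr 1
          refine setIntegral_congr_fun measurableSet_Ioc fun t ht => ?_
          have h2 : (fun ω => Real.exp (b * t) * B t ω * B T ω)
              = fun ω => Real.exp (b * t) * (B t ω * B T ω) := funext fun ω => mul_assoc _ _ _
          rw [h2, integral_const_mul, hB_cov t ht.1.le T hTnn,
            abs_of_nonneg (sub_nonneg.2 ht.2)]
  -- limit computation
  have hexp0 : Tendsto (fun T : ℝ => Real.exp (-b * T)) atTop (nhds 0) := by
    have h1 : Tendsto (fun T : ℝ => b * T) atTop atTop :=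
      Tendsto.const_mul_atTop hb tendsto_id
    have h2 := Real.tendsto_exp_neg_atTop_nhds_zero.comp h1
    exact Tendsto.congr (fun T => by simp [Function.comp, neg_mul]) h2
  have hIexp : ∫ u in Set.Ioi (0:ℝ), Real.exp (-b * u) = 1 / b := by
    have hderiv : ∀ x ∈ Set.Ioi (0:ℝ),
        HasDerivAt (fun u => -Real.exp (-b * u) / b) (Real.exp (-b * x)) x := by
      intro x _
      have h1 : HasDerivAt (fun u : ℝ => -b * u) (-b) x := by
        simpa using (hasDerivAt_id x).const_mul (-b)
      have h2 := (h1.exp.neg).div_const b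
      exact h2.congr_deriv (by rw [mul_neg, neg_neg, mul_div_cancel_right₀ _ hb.ne'])
    have hcont : ContinuousWithinAt (fun u => -Real.exp (-b * u) / b) (Set.Ici 0) 0 :=
      Continuous.continuousWithinAt
        ((Real.continuous_exp.comp (continuous_const.mul continuous_id)).neg.div_const b)
    have htend : Tendsto (fun u : ℝ => -Real.exp (-b * u) / b) atTop (nhds 0) := by
      have h3 := (hexp0.neg).div_const b
      simpa using h3
    have h4 := integral_Ioi_of_hasDerivAt_of_tendsto hcont hderiv
      (exp_neg_integrableOn_Ioi 0 hb) htend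
    rw [h4, mul_zero, Real.exp_zero]
    ring
  have hdct2 : Tendsto (fun T : ℝ => ∫ u in Set.Ioi (0:ℝ),
      Set.indicator (Set.Ioc (0:ℝ) T) (fun u => Real.exp (-b * u) * g (T - u)) u) atTop
      (nhds (α2 * (1 / b))) := by
    have hval : ∫ u in Set.Ioi (0:ℝ), Real.exp (-b * u) * α2 = α2 * (1 / b) := by
      rw [integral_mul_const, hIexp]
      ring
    rw [← hval]
    refine tendsto_integral_filter_of_dominated_convergence (fun u => C * Real.exp (-b * u))
      ?_ ?_ ?_ ?_
    · filter_upwards [eventually_gt_atTop (0:ℝ)] with T hT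
      rw [aestronglyMeasurable_indicator_iff measurableSet_Ioc,
        Measure.restrict_restrict measurableSet_Ioc,
        Set.inter_eq_self_of_subset_left Set.Ioc_subset_Ioi_self]
      refine ContinuousOn.aestronglyMeasurable ?_ measurableSet_Ioc
      refine ((Real.continuous_exp.comp (continuous_const.mul continuous_id)).continuousOn).mul ?_
      exact hg_cont.comp (continuous_const.sub continuous_id).continuousOn
        fun u hu => Set.mem_Ici.mpr (sub_nonneg.2 hu.2)
    · filter_upwards [eventually_gt_atTop (0:ℝ)] with T hT
      refine Eventually.of_forall fun u => ?_
      by_cases hu : u ∈ Set.Ioc (0:ℝ) T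
      · rw [Set.indicator_of_mem hu, Real.norm_eq_abs, abs_mul,
          abs_of_pos (Real.exp_pos _), mul_comm]
        exact mul_le_mul_of_nonneg_right (hC (T - u) (sub_nonneg.2 hu.2)) (Real.exp_pos _).le
      · rw [Set.indicator_of_notMem hu, norm_zero]
        positivity
    · exact (exp_neg_integrableOn_Ioi 0 hb).const_mul C
    · filter_upwards [ae_restrict_mem measurableSet_Ioi] with u hu
      have hbase : Tendsto (fun T : ℝ => Real.exp (-b * u) * g (T + -u)) atTop
          (nhds (Real.exp (-b * u) * α2)) :=
        (hg_lim.comp (tendsto_atTop_add_const_right atTop (-u) tendsto_id)).const_mul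
          (Real.exp (-b * u))
      refine Tendsto.congr' ?_ hbase
      filter_upwards [eventually_ge_atTop u] with T hT
      rw [Set.indicator_of_mem (Set.mem_Ioc.mpr ⟨hu, hT⟩), sub_eq_add_neg]
  have hdct3 : Tendsto (fun T : ℝ => ∫ u in Set.Ioi (0:ℝ),
      Set.indicator (Set.Ioc (0:ℝ) T) (fun u => Real.exp (-b * u) * g u) u) atTop
      (nhds (∫ u in Set.Ioi (0:ℝ), Real.exp (-b * u) * g u)) := by
    refine tendsto_integral_filter_of_dominated_convergence (fun u => C * Real.exp (-b * u))
      ?_ ?_ ?_ ?_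
    · filter_upwards [eventually_gt_atTop (0:ℝ)] with T hT
      rw [aestronglyMeasurable_indicator_iff measurableSet_Ioc,
        Measure.restrict_restrict measurableSet_Ioc,
        Set.inter_eq_self_of_subset_left Set.Ioc_subset_Ioi_self]
      refine ContinuousOn.aestronglyMeasurable ?_ measurableSet_Ioc
      exact ((Real.continuous_exp.comp (continuous_const.mul continuous_id)).continuousOn).mul
        (hg_cont.mono fun u hu => Set.mem_Ici.mpr hu.1.le)
    · filter_upwards [eventually_gt_atTop (0:ℝ)] with T hT
      refine Eventually.of_forall fun u => ?_
      by_cases hu : u ∈ Set.Ioc (0:ℝ) T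
      · rw [Set.indicator_of_mem hu, Real.norm_eq_abs, abs_mul,
          abs_of_pos (Real.exp_pos _), mul_comm]
        exact mul_le_mul_of_nonneg_right (hC u hu.1.le) (Real.exp_pos _).le
      · rw [Set.indicator_of_notMem hu, norm_zero]
        positivity
    · exact (exp_neg_integrableOn_Ioi 0 hb).const_mul C
    · filter_upwards [ae_restrict_mem measurableSet_Ioi] with u hu
      refine Tendsto.congr' ?_ (tendsto_const_nhds (x := Real.exp (-b * u) * g u))
      filter_upwards [eventually_ge_atTop u] with T hT
      rw [Set.indicator_of_mem (Set.mem_Ioc.mpr ⟨hu, hT⟩)]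
  have haux : ∀ T : ℝ, 0 < T →
      Real.exp (-b * T) *
          (∫ t in Set.Ioc (0:ℝ) T, Real.exp (b * t) * ((g T + g t - g (T - t)) / 2))
      = g T / 2 * ((1 - Real.exp (-b * T)) / b)
        + (∫ u in Set.Ioi (0:ℝ), Set.indicator (Set.Ioc (0:ℝ) T)
            (fun u => Real.exp (-b * u) * g (T - u)) u) / 2
        - (∫ u in Set.Ioi (0:ℝ), Set.indicator (Set.Ioc (0:ℝ) T)
            (fun u => Real.exp (-b * u) * g u) u) / 2 := by
    intro T hT
    have hTnn : (0:ℝ) ≤ T := hT.le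
    have hindic : ∀ f : ℝ → ℝ, ∫ u in Set.Ioi (0:ℝ), Set.indicator (Set.Ioc (0:ℝ) T) f u
        = ∫ u in Set.Ioc (0:ℝ) T, f u := by
      intro f
      rw [integral_indicator measurableSet_Ioc,
        Measure.restrict_restrict measurableSet_Ioc,
        Set.inter_eq_self_of_subset_left Set.Ioc_subset_Ioi_self]
    have hcont_exp : Continuous fun t : ℝ => Real.exp (b * t) :=
      Real.continuous_exp.comp (continuous_const.mul continuous_id)
    have huIcc : Set.uIcc (0:ℝ) T = Set.Icc 0 T := Set.uIcc_of_le hTnn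
    have hint1 : IntervalIntegrable (fun t => Real.exp (b * t)) volume 0 T :=
      hcont_exp.intervalIntegrable _ _
    have hint2 : IntervalIntegrable (fun t => Real.exp (b * t) * g t) volume 0 T := by
      apply ContinuousOn.intervalIntegrable
      rw [huIcc]
      exact hcont_exp.continuousOn.mul (hg_cont.mono fun x hx => Set.mem_Ici.mpr hx.1)
    have hint3 : IntervalIntegrable (fun t => Real.exp (b * t) * g (T - t)) volume 0 T := by
      apply ContinuousOn.intervalIntegrable
      rw [huIcc]
      exact hcont_exp.continuousOn.mul (hg_cont.comp
        (continuous_const.sub continuous_id).continuousOn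
        fun x hx => Set.mem_Ici.mpr (sub_nonneg.2 hx.2))
    have hI1 : ∫ t in (0:ℝ)..T, Real.exp (b * t) = (Real.exp (b * T) - 1) / b := by
      have h5 := intervalIntegral.integral_comp_mul_left (a := 0) (b := T) Real.exp
        (ne_of_gt hb)
      rw [h5, mul_zero, integral_exp, Real.exp_zero, smul_eq_mul]
      field_simp
    have hsub2 := intervalIntegral.integral_comp_sub_left (a := 0) (b := T)
      (fun x => Real.exp (b * x) * g x) T
    simp only [sub_self, sub_zero] at hsub2
    have hsub3 := intervalIntegral.integral_comp_sub_left (a := 0) (b := T)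
      (fun x => Real.exp (b * (T - x)) * g x) T
    simp only [sub_self, sub_zero, sub_sub_cancel] at hsub3
    have hI2 : Real.exp (-b * T) * (∫ t in (0:ℝ)..T, Real.exp (b * t) * g t)
        = ∫ u in Set.Ioi (0:ℝ), Set.indicator (Set.Ioc (0:ℝ) T)
            (fun u => Real.exp (-b * u) * g (T - u)) u := by
      rw [hindic]
      calc Real.exp (-b * T) * (∫ t in (0:ℝ)..T, Real.exp (b * t) * g t)
          = Real.exp (-b * T) * ∫ x in (0:ℝ)..T, Real.exp (b * (T - x)) * g (T - x) := by
            rw [← hsub2]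
        _ = ∫ x in (0:ℝ)..T, Real.exp (-b * T) * (Real.exp (b * (T - x)) * g (T - x)) :=
            (intervalIntegral.integral_const_mul _ _).symm
        _ = ∫ x in (0:ℝ)..T, Real.exp (-b * x) * g (T - x) := by
            refine intervalIntegral.integral_congr fun x _ => ?_
            rw [← mul_assoc, ← Real.exp_add,
              show -b * T + b * (T - x) = -b * x from by ring]
        _ = ∫ u in Set.Ioc (0:ℝ) T, Real.exp (-b * u) * g (T - u) :=
            intervalIntegral.integral_of_le hTnn
    have hI3 : Real.exp (-b * T) * (∫ t in (0:ℝ)..T, Real.exp (b * t) * g (T - t))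
        = ∫ u in Set.Ioi (0:ℝ), Set.indicator (Set.Ioc (0:ℝ) T)
            (fun u => Real.exp (-b * u) * g u) u := by
      rw [hindic]
      calc Real.exp (-b * T) * (∫ t in (0:ℝ)..T, Real.exp (b * t) * g (T - t))
          = Real.exp (-b * T) * ∫ x in (0:ℝ)..T, Real.exp (b * (T - x)) * g x := by
            rw [hsub3]
        _ = ∫ x in (0:ℝ)..T, Real.exp (-b * T) * (Real.exp (b * (T - x)) * g x) :=
            (intervalIntegral.integral_const_mul _ _).symm
        _ = ∫ x in (0:ℝ)..T, Real.exp (-b * x) * g x := by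
            refine intervalIntegral.integral_congr fun x _ => ?_
            rw [← mul_assoc, ← Real.exp_add,
              show -b * T + b * (T - x) = -b * x from by ring]
        _ = ∫ u in Set.Ioc (0:ℝ) T, Real.exp (-b * u) * g u :=
            intervalIntegral.integral_of_le hTnn
    have hsplit : ∫ t in (0:ℝ)..T, Real.exp (b * t) * ((g T + g t - g (T - t)) / 2)
        = g T / 2 * (∫ t in (0:ℝ)..T, Real.exp (b * t))
          + (1/2) * (∫ t in (0:ℝ)..T, Real.exp (b * t) * g t)
          - (1/2) * (∫ t in (0:ℝ)..T, Real.exp (b * t) * g (T - t)) := by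
      have h6 : (fun t => Real.exp (b * t) * ((g T + g t - g (T - t)) / 2))
          = fun t => (g T / 2 * Real.exp (b * t) + (1/2) * (Real.exp (b * t) * g t))
              - (1/2) * (Real.exp (b * t) * g (T - t)) := funext fun t => by ring
      rw [h6, intervalIntegral.integral_sub ((hint1.const_mul _).add (hint2.const_mul _))
        (hint3.const_mul _), intervalIntegral.integral_add (hint1.const_mul _)
        (hint2.const_mul _), intervalIntegral.integral_const_mul,
        intervalIntegral.integral_const_mul, intervalIntegral.integral_const_mul]
    have hkey : Real.exp (-b * T) * ((Real.exp (b * T) - 1) / b)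
        = (1 - Real.exp (-b * T)) / b := by
      have h7 : Real.exp (-b * T) * (Real.exp (b * T) - 1) = 1 - Real.exp (-b * T) := by
        rw [mul_sub, ← Real.exp_add, mul_one, show -b * T + b * T = 0 from by ring,
          Real.exp_zero]
      calc Real.exp (-b * T) * ((Real.exp (b * T) - 1) / b)
          = Real.exp (-b * T) * (Real.exp (b * T) - 1) / b := by ring
        _ = (1 - Real.exp (-b * T)) / b := by rw [h7]
    rw [← intervalIntegral.integral_of_le hTnn]
    calc Real.exp (-b * T) *
          (∫ t in (0:ℝ)..T, Real.exp (b * t) * ((g T + g t - g (T - t)) / 2))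
        = g T / 2 * (Real.exp (-b * T) * ((Real.exp (b * T) - 1) / b))
          + (Real.exp (-b * T) * (∫ t in (0:ℝ)..T, Real.exp (b * t) * g t)) / 2
          - (Real.exp (-b * T) * (∫ t in (0:ℝ)..T, Real.exp (b * t) * g (T - t))) / 2 := by
          rw [hsplit, hI1]; ring
      _ = _ := by rw [hkey, hI2, hI3]
  have hIg : ∫ u in Set.Ioi (0:ℝ), Real.exp (-b * u) * g u = 2 * β2 / b := by
    rw [hβ2]
    field_simp
  have htot : Tendsto (fun T : ℝ => g T / 2 * ((1 - Real.exp (-b * T)) / b)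
      + (∫ u in Set.Ioi (0:ℝ), Set.indicator (Set.Ioc (0:ℝ) T)
          (fun u => Real.exp (-b * u) * g (T - u)) u) / 2
      - (∫ u in Set.Ioi (0:ℝ), Set.indicator (Set.Ioc (0:ℝ) T)
          (fun u => Real.exp (-b * u) * g u) u) / 2) atTop (nhds ((α2 - β2) / b)) := by
    have h1 : Tendsto (fun T : ℝ => g T / 2 * ((1 - Real.exp (-b * T)) / b)) atTop
        (nhds (α2 / 2 * ((1 - 0) / b))) :=
      (hg_lim.div_const 2).mul ((tendsto_const_nhds.sub hexp0).div_const b)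
    rw [hIg] at hdct3
    have h8 := (h1.add (hdct2.div_const 2)).sub (hdct3.div_const 2)
    have h9 : α2 / 2 * ((1 - 0) / b) + α2 * (1 / b) / 2 - 2 * β2 / b / 2 = (α2 - β2) / b := by
      field_simp
      ring
    rw [h9] at h8
    exact h8
  refine Tendsto.congr' ?_ htot
  filter_upwards [eventually_gt_atTop (0:ℝ)] with T hT
  exact (haux T hT).symm.trans (main_eq T hT).symm
end

section
/- lim_{T → ∞} E[B_T V_T] = β². In particular, since β² > 0, the second condition of hypothesis (A₅) of Es-Sebaiy et al. fails for this process. -/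
open MeasureTheory Filter

theorem cov_BV_limit
    {Ω : Type*} [MeasurableSpace Ω] (P : Measure Ω) [IsProbabilityMeasure P]
    (b α2 β2 : ℝ) (hb : 0 < b) (hα2 : 0 < α2)
    (g : ℝ → ℝ)
    (hg_cont : ContinuousOn g (Set.Ici 0))
    (hg_bdd : ∃ C, ∀ t, 0 ≤ t → |g t| ≤ C)
    (hg_nonneg : ∀ t, 0 ≤ t → 0 ≤ g t)
    (hg_zero : g 0 = 0)
    (hg_lim : Tendsto g atTop (nhds α2))
    (hβ2 : β2 = b / 2 * ∫ u in Set.Ioi (0:ℝ), Real.exp (-b * u) * g u)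
    (B : ℝ → Ω → ℝ)
    (hB_meas : Measurable fun p : ℝ × Ω => B p.1 p.2)
    (hB_cont : ∀ᵐ ω ∂P, Continuous fun t => B t ω)
    (hB_zero : ∀ ω, B 0 ω = 0)
    (hB_mean : ∀ t, 0 ≤ t → ∫ ω, B t ω ∂P = 0)
    (hB_cov : ∀ s, 0 ≤ s → ∀ t, 0 ≤ t →
      ∫ ω, B s ω * B t ω ∂P = (g t + g s - g |t - s|) / 2)
    (U : ℝ → Ω → ℝ)
    (hU : ∀ T ω, U T ω = Real.exp (-b * T) * ∫ t in (0:ℝ)..T, Real.exp (b * t) * B t ω)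
    (V : ℝ → Ω → ℝ)
    (hV : ∀ T ω, V T ω = B T ω - b * U T ω)
    :
    Tendsto (fun T => ∫ ω, B T ω * V T ω ∂P) atTop (nhds β2) ∧
    0 < β2 ∧
    ¬ Tendsto (fun T => ∫ ω, B T ω * V T ω ∂P) atTop (nhds 0) := by
  obtain ⟨C, hC⟩ := hg_bdd
  have hC0 : 0 ≤ C := le_trans (abs_nonneg _) (hC 0 le_rfl)
  have hBtm : ∀ t : ℝ, Measurable fun ω => B t ω := fun t =>
    hB_meas.comp measurable_prodMk_left
  -- second moment identity
  have hBB : ∀ t, 0 ≤ t → ∫ ω, B t ω * B t ω ∂P = g t := by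
    intro t ht
    have h := hB_cov t ht t ht
    rw [sub_self, abs_zero, hg_zero] at h
    rw [h]; ring
  have hsq : ∀ t, 0 ≤ t → g t ≠ 0 → Integrable (fun ω => B t ω * B t ω) P := by
    intro t ht hgt
    by_contra h
    exact hgt (by rw [← hBB t ht, integral_undef h])
  -- positivity of g on (0, ∞)
  have hgpos : ∀ t, 0 < t → 0 < g t := by
    by_contra h
    push_neg at h
    obtain ⟨t₀, ht₀, hgt₀⟩ := h
    have ht₀S : 0 < t₀ ∧ g t₀ = 0 := ⟨ht₀, le_antisymm hgt₀ (hg_nonneg t₀ ht₀.le)⟩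
    set S : Set ℝ := {t | 0 < t ∧ g t = 0} with hSdef
    have hSne : S.Nonempty := ⟨t₀, ht₀S⟩
    obtain ⟨M, hM⟩ : ∃ M, ∀ t ≥ M, α2 / 2 < g t := by
      have := hg_lim.eventually (eventually_gt_nhds (show α2 / 2 < α2 by linarith))
      exact eventually_atTop.mp this
    have hSbdd : BddAbove S := by
      refine ⟨M, fun s hs => ?_⟩
      by_contra hc
      push_neg at hc
      have := hM s (le_of_lt hc)
      rw [hs.2] at this
      linarith
    set c := sSup S with hcdef
    have hct₀ : t₀ ≤ c := le_csSup hSbdd ht₀S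
    have hcpos : 0 < c := lt_of_lt_of_le ht₀ hct₀
    have hgcont_at : ∀ x : ℝ, 0 < x → ContinuousAt g x := fun x hx =>
      hg_cont.continuousAt (Ici_mem_nhds hx)
    have hgc : g c = 0 := by
      obtain ⟨u, hum, hut, huS⟩ := exists_seq_tendsto_sSup hSne hSbdd
      have h1 : Tendsto (fun n => g (u n)) atTop (nhds (g c)) :=
        ((hgcont_at c hcpos).tendsto).comp hut
      have h2 : (fun n => g (u n)) = fun _ => 0 := funext fun n => (huS n).2
      rw [h2] at h1
      exact tendsto_nhds_unique h1 tendsto_const_nhds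
    set s : ℕ → ℝ := fun n => c + 1 / (n + 1) with hsdef
    have hsc : ∀ n, c < s n := fun n => lt_add_of_pos_right _ (by positivity)
    have hspos : ∀ n, 0 < s n := fun n => hcpos.trans (hsc n)
    have hgs : ∀ n, g (s n) ≠ 0 := fun n hg0 =>
      absurd (le_csSup hSbdd (⟨hspos n, hg0⟩ : s n ∈ S)) (not_le.mpr (hsc n))
    have hst : Tendsto s atTop (nhds c) := by
      rw [hsdef]
      have h0 := (tendsto_const_nhds : Tendsto (fun _ : ℕ => c) atTop (nhds c)).add
        tendsto_one_div_add_atTop_nhds_zero_nat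
      simpa using h0
    have hgst : Tendsto (fun n => g (s n)) atTop (nhds 0) := by
      rw [← hgc]
      exact (hgcont_at c hcpos).tendsto.comp hst
    have hBc0 : ∀ᵐ ω ∂P, B c ω = 0 := by
      have hmeas : ∀ n, Measurable fun ω => ENNReal.ofReal (B (s n) ω * B (s n) ω) :=
        fun n => ((hBtm _).mul (hBtm _)).ennreal_ofReal
      have hle := lintegral_liminf_le (μ := P) (u := atTop) hmeas
      have heq : (fun ω => ENNReal.ofReal (B c ω * B c ω)) =ᵐ[P]
          fun ω => Filter.liminf (fun n => ENNReal.ofReal (B (s n) ω * B (s n) ω)) atTop := by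
        filter_upwards [hB_cont] with ω hω
        have h1 : Tendsto (fun n => B (s n) ω) atTop (nhds (B c ω)) :=
          ((hω.tendsto c).comp hst)
        have h2 : Tendsto (fun n => ENNReal.ofReal (B (s n) ω * B (s n) ω)) atTop
            (nhds (ENNReal.ofReal (B c ω * B c ω))) :=
          (ENNReal.continuous_ofReal.tendsto _).comp (h1.mul h1)
        exact h2.liminf_eq.symm
      have hvals : ∀ n, ∫⁻ ω, ENNReal.ofReal (B (s n) ω * B (s n) ω) ∂P
          = ENNReal.ofReal (g (s n)) := by
        intro n
        rw [← ofReal_integral_eq_lintegral_ofReal (hsq (s n) (hspos n).le (hgs n))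
          (ae_of_all _ fun ω => mul_self_nonneg _), hBB (s n) (hspos n).le]
      have hlim0 : Filter.liminf
          (fun n => ∫⁻ ω, ENNReal.ofReal (B (s n) ω * B (s n) ω) ∂P) atTop = 0 := by
        simp_rw [hvals]
        have h3 : Tendsto (fun n => ENNReal.ofReal (g (s n))) atTop
            (nhds (ENNReal.ofReal 0)) := (ENNReal.continuous_ofReal.tendsto _).comp hgst
        simpa using h3.liminf_eq
      have h0 : ∫⁻ ω, ENNReal.ofReal (B c ω * B c ω) ∂P = 0 := by
        refine le_antisymm ?_ zero_le
        calc ∫⁻ ω, ENNReal.ofReal (B c ω * B c ω) ∂P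
            = ∫⁻ ω, Filter.liminf (fun n => ENNReal.ofReal (B (s n) ω * B (s n) ω)) atTop ∂P :=
              lintegral_congr_ae heq
          _ ≤ Filter.liminf (fun n => ∫⁻ ω, ENNReal.ofReal (B (s n) ω * B (s n) ω) ∂P) atTop :=
              hle
          _ = 0 := hlim0
      have hae := (lintegral_eq_zero_iff ((hBtm c).mul (hBtm c)).ennreal_ofReal).mp h0
      filter_upwards [hae] with ω hω
      simp only [Pi.zero_apply, ENNReal.ofReal_eq_zero] at hω
      have : B c ω * B c ω = 0 := le_antisymm hω (mul_self_nonneg _)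
      exact mul_self_eq_zero.mp this
    have hper : g (c + c) = g c := by
      have hcov := hB_cov (c + c) (by linarith) c hcpos.le
      have hz : ∫ ω, B (c + c) ω * B c ω ∂P = 0 := by
        have hz' : (fun ω => B (c + c) ω * B c ω) =ᵐ[P] fun _ => 0 :=
          hBc0.mono fun ω h => by simp [h]
        rw [integral_congr_ae hz', integral_zero]
      rw [hz, show c - (c + c) = -c by ring, abs_neg, abs_of_pos hcpos] at hcov
      linarith
    have h2c : c + c ≤ c := le_csSup hSbdd ⟨by linarith, by rw [hper, hgc]⟩
    linarith
  -- integrability of squares and products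
  have hsqint : ∀ t, 0 ≤ t → Integrable (fun ω => B t ω * B t ω) P := by
    intro t ht
    rcases eq_or_lt_of_le ht with h | h
    · have h' : (fun ω => B t ω * B t ω) = fun _ => (0:ℝ) := by
        funext ω; rw [← h, hB_zero, zero_mul]
      rw [h']
      exact integrable_const 0
    · exact hsq t ht (hgpos t h).ne'
  have hprodbd : ∀ s t : ℝ, ∀ ω, |B s ω * B t ω| ≤ (B s ω * B s ω + B t ω * B t ω) / 2 := by
    intro s t ω
    rw [abs_mul]
    nlinarith [sq_nonneg (|B s ω| - |B t ω|), abs_mul_abs_self (B s ω),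
      abs_mul_abs_self (B t ω), abs_nonneg (B s ω), abs_nonneg (B t ω)]
  have hmulint : ∀ s t, 0 ≤ s → 0 ≤ t → Integrable (fun ω => B s ω * B t ω) P := by
    intro s t hs ht
    refine Integrable.mono' (((hsqint s hs).add (hsqint t ht)).div_const 2)
      (((hBtm s).mul (hBtm t)).aestronglyMeasurable) (ae_of_all _ fun ω => ?_)
    rw [Real.norm_eq_abs]
    exact hprodbd s t ω
  have habsint : ∀ s t, 0 ≤ s → 0 ≤ t → ∫ ω, |B s ω * B t ω| ∂P ≤ C := by
    intro s t hs ht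
    have h1 : ∫ ω, |B s ω * B t ω| ∂P ≤ ∫ ω, (B s ω * B s ω + B t ω * B t ω) / 2 ∂P :=
      integral_mono ((hmulint s t hs ht).abs)
        (((hsqint s hs).add (hsqint t ht)).div_const 2) (fun ω => hprodbd s t ω)
    have h2 : ∫ ω, (B s ω * B s ω + B t ω * B t ω) / 2 ∂P = (g s + g t) / 2 := by
      rw [integral_div, integral_add (hsqint s hs) (hsqint t ht), hBB s hs, hBB t ht]
    have h3 : g s ≤ C := le_trans (le_abs_self _) (hC s hs)
    have h4 : g t ≤ C := le_trans (le_abs_self _) (hC t ht)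
    rw [h2] at h1
    linarith
  -- a globally continuous version of g
  set gm : ℝ → ℝ := fun x => g (max x 0) with hgmdef
  have hgm_eq : ∀ x, 0 ≤ x → gm x = g x := fun x hx => by
    simp only [hgmdef, max_eq_left hx]
  have hgm_cont : Continuous gm :=
    hg_cont.comp_continuous (continuous_id.max continuous_const) fun x => le_max_right x 0
  have hgm_bdd : ∀ x, |gm x| ≤ C := fun x => hC _ (le_max_right x 0)
  have hgm_nonneg : ∀ x, 0 ≤ gm x := fun x => hg_nonneg _ (le_max_right x 0)
  have hgm_lim : Tendsto gm atTop (nhds α2) :=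
    hg_lim.congr' ((eventually_ge_atTop (0:ℝ)).mono fun x hx => (hgm_eq x hx).symm)
  -- exponential facts
  have hcont_en : Continuous fun u : ℝ => Real.exp (-b * u) :=
    Real.continuous_exp.comp (continuous_const.mul continuous_id)
  have hcont_eb : Continuous fun t : ℝ => Real.exp (b * t) :=
    Real.continuous_exp.comp (continuous_const.mul continuous_id)
  have hexp0 : Tendsto (fun T : ℝ => Real.exp (-b * T)) atTop (nhds 0) := by
    have h1 : Tendsto (fun T : ℝ => b * T) atTop atTop :=
      Tendsto.const_mul_atTop hb tendsto_id
    have h2 := Real.tendsto_exp_neg_atTop_nhds_zero.comp h1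
    simpa [Function.comp_def, neg_mul] using h2
  have hint_en : ∀ T : ℝ, ∫ u in (0:ℝ)..T, Real.exp (-b * u) = (1 - Real.exp (-b * T)) / b := by
    intro T
    have hd : ∀ x ∈ Set.uIcc (0:ℝ) T,
        HasDerivAt (fun u => -Real.exp (-b * u) / b) (Real.exp (-b * x)) x := by
      intro x _
      have h1 : HasDerivAt (fun u : ℝ => -b * u) (-b) x := by
        simpa using (hasDerivAt_id x).const_mul (-b)
      have h2 := (Real.hasDerivAt_exp (-b * x)).comp x h1
      have h3 := (h2.div_const b).neg
      have h4 : -(Real.exp (-b * x) * -b / b) = Real.exp (-b * x) := by field_simp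
      simpa only [h4, neg_div, Function.comp_def, Pi.neg_def] using h3
    rw [intervalIntegral.integral_eq_sub_of_hasDerivAt hd (hcont_en.intervalIntegrable _ _)]
    rw [mul_zero, Real.exp_zero]
    ring
  have hint_eb : ∀ T : ℝ, ∫ t in (0:ℝ)..T, Real.exp (b * t) = (Real.exp (b * T) - 1) / b := by
    intro T
    have hd : ∀ x ∈ Set.uIcc (0:ℝ) T,
        HasDerivAt (fun u => Real.exp (b * u) / b) (Real.exp (b * x)) x := by
      intro x _
      have h1 : HasDerivAt (fun u : ℝ => b * u) b x := by
        simpa using (hasDerivAt_id x).const_mul b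
      have h2 := (Real.hasDerivAt_exp (b * x)).comp x h1
      have h3 := h2.div_const b
      have h4 : Real.exp (b * x) * b / b = Real.exp (b * x) := by field_simp
      simpa only [h4, Function.comp_def] using h3
    rw [intervalIntegral.integral_eq_sub_of_hasDerivAt hd (hcont_eb.intervalIntegrable _ _)]
    rw [mul_zero, Real.exp_zero]
    ring
  have hIoi_en : ∫ u in Set.Ioi (0:ℝ), Real.exp (-b * u) = 1 / b := by
    have h1 := intervalIntegral_tendsto_integral_Ioi (μ := volume) 0
      (exp_neg_integrableOn_Ioi 0 hb) (tendsto_id (α := ℝ))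
    have h2 : Tendsto (fun T : ℝ => ∫ u in (0:ℝ)..T, Real.exp (-b * u)) atTop
        (nhds ((1 - 0) / b)) := by
      simp_rw [hint_en]
      exact (tendsto_const_nhds.sub hexp0).div_const b
    have h3 := tendsto_nhds_unique h1 h2
    rw [h3]
    norm_num
  have hDint : IntegrableOn (fun u => Real.exp (-b * u) * gm u) (Set.Ioi (0:ℝ)) volume := by
    refine Integrable.mono' ((exp_neg_integrableOn_Ioi 0 hb).const_mul C)
      ((hcont_en.mul hgm_cont).aestronglyMeasurable) (ae_of_all _ fun u => ?_)
    rw [Real.norm_eq_abs, abs_mul, Real.abs_exp, mul_comm C]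
    exact mul_le_mul_of_nonneg_left (hgm_bdd u) (Real.exp_nonneg _)
  -- main identity for T > 0
  have key : ∀ T : ℝ, 0 < T →
      (∫ ω, B T ω * V T ω ∂P) = gm T * (1 + Real.exp (-b * T)) / 2
        - b / 2 * (∫ u in (0:ℝ)..T, Real.exp (-b * u) * gm (T - u))
        + b / 2 * (∫ u in (0:ℝ)..T, Real.exp (-b * u) * gm u) := by
    intro T hT
    have hT0 : (0:ℝ) ≤ T := hT.le
    set μT := volume.restrict (Set.Ioc (0:ℝ) T) with hμTdef
    have hfm : Measurable (fun p : ℝ × Ω => Real.exp (b * p.1) * (B T p.2 * B p.1 p.2)) :=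
      (Real.measurable_exp.comp (measurable_const.mul measurable_fst)).mul
        ((hB_meas.comp (measurable_const.prodMk measurable_snd)).mul hB_meas)
    have hfint : Integrable (fun p : ℝ × Ω => Real.exp (b * p.1) * (B T p.2 * B p.1 p.2))
        (μT.prod P) := by
      rw [integrable_prod_iff hfm.aestronglyMeasurable]
      constructor
      · filter_upwards [ae_restrict_mem measurableSet_Ioc] with t ht
        exact (hmulint T t hT0 ht.1.le).const_mul _
      · refine Integrable.mono' (integrable_const (Real.exp (b * T) * C))
          (hfm.norm.aestronglyMeasurable.integral_prod_right') ?_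
        filter_upwards [ae_restrict_mem measurableSet_Ioc] with t ht
        have h1 : ∫ ω, ‖Real.exp (b * t) * (B T ω * B t ω)‖ ∂P
            = Real.exp (b * t) * ∫ ω, |B T ω * B t ω| ∂P := by
          simp_rw [norm_mul, Real.norm_eq_abs, Real.abs_exp, ← abs_mul]
          exact integral_const_mul _ _
        have h4 : 0 ≤ ∫ ω, |B T ω * B t ω| ∂P := integral_nonneg fun ω => abs_nonneg _
        rw [Real.norm_eq_abs, h1, abs_of_nonneg (mul_nonneg (Real.exp_nonneg _) h4)]
        exact mul_le_mul (Real.exp_le_exp.mpr (mul_le_mul_of_nonneg_left ht.2 hb.le))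
          (habsint T t hT0 ht.1.le) h4 (Real.exp_nonneg _)
    have hBU : ∀ ω, B T ω * U T ω
        = Real.exp (-b * T) * ∫ t in Set.Ioc (0:ℝ) T, Real.exp (b * t) * (B T ω * B t ω) := by
      intro ω
      rw [hU T ω, intervalIntegral.integral_of_le hT0]
      rw [show (fun t => Real.exp (b * t) * (B T ω * B t ω))
          = fun t => B T ω * (Real.exp (b * t) * B t ω) from funext fun t => by ring]
      rw [integral_const_mul]
      ring
    have hIBU : Integrable (fun ω => B T ω * U T ω) P := by
      have h1 := (hfint.integral_prod_right).const_mul (Real.exp (-b * T))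
      exact h1.congr (ae_of_all _ fun ω => (hBU ω).symm)
    have hVsplit : ∫ ω, B T ω * V T ω ∂P
        = (∫ ω, B T ω * B T ω ∂P) - b * ∫ ω, B T ω * U T ω ∂P := by
      have h : (fun ω => B T ω * V T ω)
          = fun ω => B T ω * B T ω - b * (B T ω * U T ω) := funext fun ω => by
        rw [hV T ω]; ring
      rw [h, integral_sub (hsqint T hT0) (hIBU.const_mul b), integral_const_mul]
    have hswap : ∫ ω, B T ω * U T ω ∂P
        = Real.exp (-b * T)
          * ∫ t in Set.Ioc (0:ℝ) T, (∫ ω, Real.exp (b * t) * (B T ω * B t ω) ∂P) := by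
      simp_rw [hBU]
      rw [integral_const_mul]
      congr 1
      exact (integral_integral_swap hfint).symm
    have hinner : ∫ t in Set.Ioc (0:ℝ) T, (∫ ω, Real.exp (b * t) * (B T ω * B t ω) ∂P)
        = ∫ t in (0:ℝ)..T, Real.exp (b * t) * ((gm t + gm T - gm (T - t)) / 2) := by
      rw [intervalIntegral.integral_of_le hT0]
      refine setIntegral_congr_fun measurableSet_Ioc fun t ht => ?_
      have h2 : t ≤ T := ht.2
      calc ∫ ω, Real.exp (b * t) * (B T ω * B t ω) ∂P
          = Real.exp (b * t) * ((g t + g T - g (T - t)) / 2) := by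
            rw [integral_const_mul, hB_cov T hT0 t ht.1.le, abs_sub_comm,
              abs_of_nonneg (sub_nonneg.mpr h2)]
        _ = Real.exp (b * t) * ((gm t + gm T - gm (T - t)) / 2) := by
            rw [hgm_eq t ht.1.le, hgm_eq T hT0, hgm_eq _ (sub_nonneg.mpr h2)]
    have hi0 : IntervalIntegrable (fun t => Real.exp (b * t)) volume 0 T :=
      hcont_eb.intervalIntegrable _ _
    have hi1 : IntervalIntegrable (fun t => Real.exp (b * t) * gm t) volume 0 T :=
      (hcont_eb.mul hgm_cont).intervalIntegrable _ _
    have hi2 : IntervalIntegrable (fun t => Real.exp (b * t) * gm (T - t)) volume 0 T :=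
      (hcont_eb.mul (hgm_cont.comp (continuous_const.sub continuous_id))).intervalIntegrable _ _
    have hsplit : ∫ t in (0:ℝ)..T, Real.exp (b * t) * ((gm t + gm T - gm (T - t)) / 2)
        = ((∫ t in (0:ℝ)..T, Real.exp (b * t) * gm t)
            + gm T * (∫ t in (0:ℝ)..T, Real.exp (b * t))
            - (∫ t in (0:ℝ)..T, Real.exp (b * t) * gm (T - t))) / 2 := by
      rw [show (fun t => Real.exp (b * t) * ((gm t + gm T - gm (T - t)) / 2))
          = fun t => (Real.exp (b * t) * gm t + gm T * Real.exp (b * t)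
            - Real.exp (b * t) * gm (T - t)) / 2 from funext fun t => by ring]
      rw [intervalIntegral.integral_div, intervalIntegral.integral_sub
        (hi1.add (hi0.const_mul _)) hi2, intervalIntegral.integral_add hi1 (hi0.const_mul _),
        intervalIntegral.integral_const_mul]
    have hA : Real.exp (-b * T) * ∫ t in (0:ℝ)..T, Real.exp (b * t) * gm t
        = ∫ u in (0:ℝ)..T, Real.exp (-b * u) * gm (T - u) := by
      have h1 : ∫ u in (0:ℝ)..T, Real.exp (-b * u) * gm (T - u)
          = ∫ u in (0:ℝ)..T, (fun x => Real.exp (-b * (T - x)) * gm x) (T - u) := by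
        refine intervalIntegral.integral_congr fun u _ => ?_
        simp only []
        rw [show T - (T - u) = u by ring]
      rw [h1, intervalIntegral.integral_comp_sub_left (fun x => Real.exp (-b * (T - x)) * gm x) T,
        sub_self, sub_zero]
      rw [show (fun x => Real.exp (-b * (T - x)) * gm x)
          = fun x => Real.exp (-b * T) * (Real.exp (b * x) * gm x) from funext fun x => by
        rw [show -b * (T - x) = -b * T + b * x by ring, Real.exp_add, mul_assoc]]
      rw [intervalIntegral.integral_const_mul]
    have hD2 : Real.exp (-b * T) * ∫ t in (0:ℝ)..T, Real.exp (b * t) * gm (T - t)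
        = ∫ u in (0:ℝ)..T, Real.exp (-b * u) * gm u := by
      have h1 : ∫ t in (0:ℝ)..T, Real.exp (b * t) * gm (T - t)
          = ∫ t in (0:ℝ)..T, (fun x => Real.exp (b * (T - x)) * gm x) (T - t) := by
        refine intervalIntegral.integral_congr fun t _ => ?_
        simp only []
        rw [show T - (T - t) = t by ring]
      rw [h1, intervalIntegral.integral_comp_sub_left (fun x => Real.exp (b * (T - x)) * gm x) T,
        sub_self, sub_zero]
      rw [show (fun x => Real.exp (b * (T - x)) * gm x)
          = fun x => Real.exp (b * T) * (Real.exp (-b * x) * gm x) from funext fun x => by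
        rw [show b * (T - x) = b * T + -b * x by ring, Real.exp_add, mul_assoc]]
      rw [intervalIntegral.integral_const_mul, ← mul_assoc, ← Real.exp_add,
        show -b * T + b * T = 0 by ring, Real.exp_zero, one_mul]
    have he : Real.exp (-b * T) * Real.exp (b * T) = 1 := by
      rw [← Real.exp_add, show -b * T + b * T = 0 by ring, Real.exp_zero]
    have hb0 : b * (Real.exp (-b * T) * ∫ t in (0:ℝ)..T, Real.exp (b * t))
        = 1 - Real.exp (-b * T) := by
      rw [hint_eb T]
      have he' : Real.exp (-(b * T)) * Real.exp (b * T) = 1 := by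
        rw [← Real.exp_add, neg_add_cancel, Real.exp_zero]
      simp only [neg_mul]
      field_simp
      linear_combination he'
    rw [hVsplit, hBB T hT0, hswap, hinner, hsplit, ← hgm_eq T hT0, ← hA, ← hD2]
    linear_combination (-(gm T / 2)) * hb0
  -- limits
  have hA_lim : Tendsto (fun T : ℝ => ∫ u in (0:ℝ)..T, Real.exp (-b * u) * gm (T - u)) atTop
      (nhds (α2 * (1 / b))) := by
    have hDCT := tendsto_integral_filter_of_dominated_convergence
      (μ := volume.restrict (Set.Ioi (0:ℝ)))
      (F := fun T : ℝ => Set.indicator (Set.Ioc (0:ℝ) T)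
        (fun u => Real.exp (-b * u) * gm (T - u)))
      (f := fun u => Real.exp (-b * u) * α2)
      (bound := fun u => C * Real.exp (-b * u))
      (Eventually.of_forall fun T =>
        ((hcont_en.mul (hgm_cont.comp (continuous_const.sub continuous_id))).aestronglyMeasurable).indicator
          measurableSet_Ioc)
      (Eventually.of_forall fun T => ae_of_all _ fun u => by
        simp only [Set.indicator_apply]
        split_ifs with h
        · rw [Real.norm_eq_abs, abs_mul, Real.abs_exp, mul_comm C]
          exact mul_le_mul_of_nonneg_left (hgm_bdd _) (Real.exp_nonneg _)
        · rw [norm_zero]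
          positivity)
      ((exp_neg_integrableOn_Ioi 0 hb).const_mul C)
      (by
        filter_upwards [ae_restrict_mem measurableSet_Ioi] with u hu
        have h1 : Tendsto (fun T : ℝ => T - u) atTop atTop :=
          tendsto_atTop_add_const_right atTop (-u) tendsto_id
        have h2 : Tendsto (fun T : ℝ => Real.exp (-b * u) * gm (T - u)) atTop
            (nhds (Real.exp (-b * u) * α2)) :=
          tendsto_const_nhds.mul (hgm_lim.comp h1)
        refine h2.congr' ?_
        filter_upwards [eventually_ge_atTop u] with T hT
        have hmem : u ∈ Set.Ioc (0:ℝ) T := ⟨hu, hT⟩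
        show Real.exp (-b * u) * gm (T - u)
          = Set.indicator (Set.Ioc (0:ℝ) T) (fun u => Real.exp (-b * u) * gm (T - u)) u
        rw [Set.indicator_of_mem hmem])
    have hval : ∫ u in Set.Ioi (0:ℝ), Real.exp (-b * u) * α2 = α2 * (1 / b) := by
      rw [integral_mul_const, hIoi_en]
      ring
    rw [hval] at hDCT
    refine hDCT.congr' ?_
    filter_upwards [eventually_gt_atTop (0:ℝ)] with T hT
    show (∫ u in Set.Ioi (0:ℝ),
        Set.indicator (Set.Ioc (0:ℝ) T) (fun u => Real.exp (-b * u) * gm (T - u)) u)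
      = ∫ u in (0:ℝ)..T, Real.exp (-b * u) * gm (T - u)
    rw [setIntegral_indicator measurableSet_Ioc,
      Set.inter_eq_self_of_subset_right Set.Ioc_subset_Ioi_self,
      ← intervalIntegral.integral_of_le hT.le]
  have hD_lim : Tendsto (fun T : ℝ => ∫ u in (0:ℝ)..T, Real.exp (-b * u) * gm u) atTop
      (nhds (∫ u in Set.Ioi (0:ℝ), Real.exp (-b * u) * gm u)) :=
    intervalIntegral_tendsto_integral_Ioi 0 hDint tendsto_id
  have hID : ∫ u in Set.Ioi (0:ℝ), Real.exp (-b * u) * gm u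
      = ∫ u in Set.Ioi (0:ℝ), Real.exp (-b * u) * g u :=
    setIntegral_congr_fun measurableSet_Ioi fun u hu => by
      show Real.exp (-b * u) * gm u = Real.exp (-b * u) * g u
      rw [hgm_eq u (le_of_lt hu)]
  have hmain : Tendsto (fun T => ∫ ω, B T ω * V T ω ∂P) atTop (nhds β2) := by
    have h1 : Tendsto (fun T : ℝ => gm T * (1 + Real.exp (-b * T)) / 2
        - b / 2 * (∫ u in (0:ℝ)..T, Real.exp (-b * u) * gm (T - u))
        + b / 2 * (∫ u in (0:ℝ)..T, Real.exp (-b * u) * gm u)) atTop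
        (nhds (α2 * (1 + 0) / 2 - b / 2 * (α2 * (1 / b))
          + b / 2 * (∫ u in Set.Ioi (0:ℝ), Real.exp (-b * u) * gm u))) := by
      refine Tendsto.add (Tendsto.sub ?_ ?_) ?_
      · exact (hgm_lim.mul (tendsto_const_nhds.add hexp0)).div_const 2
      · exact hA_lim.const_mul (b / 2)
      · exact hD_lim.const_mul (b / 2)
    have hval : α2 * (1 + 0) / 2 - b / 2 * (α2 * (1 / b))
        + b / 2 * (∫ u in Set.Ioi (0:ℝ), Real.exp (-b * u) * gm u) = β2 := by
      rw [hID, hβ2]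
      field_simp
      ring
    rw [hval] at h1
    refine h1.congr' ?_
    filter_upwards [eventually_gt_atTop (0:ℝ)] with T hT
    exact (key T hT).symm
  have hpos : 0 < ∫ u in Set.Ioi (0:ℝ), Real.exp (-b * u) * g u := by
    have hDint' : IntegrableOn (fun u => Real.exp (-b * u) * g u) (Set.Ioi (0:ℝ)) volume :=
      hDint.congr ((ae_restrict_mem measurableSet_Ioi).mono fun u hu => by
        show Real.exp (-b * u) * gm u = Real.exp (-b * u) * g u
        rw [hgm_eq u (le_of_lt hu)])
    have hnn : 0 ≤ᵐ[volume.restrict (Set.Ioi (0:ℝ))] fun u => Real.exp (-b * u) * g u := by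
      filter_upwards [ae_restrict_mem measurableSet_Ioi] with u hu
      exact mul_nonneg (Real.exp_nonneg _) (hg_nonneg u (le_of_lt hu))
    rw [setIntegral_pos_iff_support_of_nonneg_ae hnn hDint']
    have hsub : Set.Ioi (0:ℝ) ⊆ Function.support (fun u => Real.exp (-b * u) * g u) ∩
        Set.Ioi 0 := fun u hu =>
      ⟨(mul_pos (Real.exp_pos _) (hgpos u hu)).ne', hu⟩
    refine lt_of_lt_of_le ?_ (measure_mono hsub)
    rw [Real.volume_Ioi]
    exact ENNReal.zero_lt_top
  have hβpos : 0 < β2 := by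
    rw [hβ2]
    exact mul_pos (by positivity) hpos
  refine ⟨hmain, hβpos, fun h => ?_⟩
  have := tendsto_nhds_unique hmain h
  linarith
end

section
/- For every T > 0, E[B_T U_T] = (1/(2b)) g(T) − (1/(2b)) e^{−bT} g(T) + ½ e^{−bT} ∫₀^T e^{bs} g(s) ds − ½ ∫₀^T e^{−bs} g(s) ds. -/
open MeasureTheory Filter

lemma g_pos_aux
    {Ω : Type*} [MeasurableSpace Ω] (P : Measure Ω) [IsProbabilityMeasure P]
    (α2 : ℝ) (hα2 : 0 < α2)
    (g : ℝ → ℝ)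
    (hg_cont : ContinuousOn g (Set.Ici 0))
    (hg_nonneg : ∀ t, 0 ≤ t → 0 ≤ g t)
    (hg_zero : g 0 = 0)
    (hg_lim : Tendsto g atTop (nhds α2))
    (B : ℝ → Ω → ℝ)
    (hB_meas : Measurable fun p : ℝ × Ω => B p.1 p.2)
    (hB_cont : ∀ᵐ ω ∂P, Continuous fun t => B t ω)
    (hB_cov : ∀ s, 0 ≤ s → ∀ t, 0 ≤ t →
      ∫ ω, B s ω * B t ω ∂P = (g t + g s - g |t - s|) / 2) :
    ∀ t, 0 < t → 0 < g t := by
  intro t0 ht0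
  by_contra h
  have hgt0 : g t0 = 0 := le_antisymm (not_lt.1 h) (hg_nonneg t0 ht0.le)
  set Z : Set ℝ := {t | 0 ≤ t ∧ g t = 0} with hZdef
  have hZne : Z.Nonempty := ⟨t0, ht0.le, hgt0⟩
  have hZbdd : BddAbove Z := by
    obtain ⟨N, hN⟩ : ∃ N, ∀ u ≥ N, α2 / 2 < g u := by
      have := hg_lim.eventually (eventually_gt_nhds (by linarith : α2 / 2 < α2))
      exact eventually_atTop.1 this
    refine ⟨N, fun u hu => ?_⟩
    by_contra hc
    push_neg at hc
    have := hN u hc.le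
    rw [hu.2] at this
    linarith
  have hZclosed : IsClosed Z := by
    have : Z = Set.Ici (0:ℝ) ∩ g ⁻¹' {0} := by
      ext x; simp [hZdef, Set.mem_setOf_eq]
    rw [this]
    exact hg_cont.preimage_isClosed_of_isClosed isClosed_Ici isClosed_singleton
  set c := sSup Z with hcdef
  have hcmem : c ∈ Z := hZclosed.csSup_mem hZne hZbdd
  have hc0 : 0 ≤ c := hcmem.1
  have hgc : g c = 0 := hcmem.2
  have hcpos : 0 < c := lt_of_lt_of_le ht0 (le_csSup hZbdd ⟨ht0.le, hgt0⟩)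
  have hBt : ∀ t : ℝ, Measurable (fun ω => B t ω) := fun t =>
    hB_meas.comp (measurable_const.prodMk measurable_id)
  -- sequence approaching c from above
  set u : ℕ → ℝ := fun n => c + 1 / (n + 1) with hudef
  have hu_pos : ∀ n, 0 ≤ u n := fun n => by positivity
  have hu_gt : ∀ n, c < u n := fun n => by
    have : (0:ℝ) < 1 / (n + 1) := by positivity
    simp [hudef]; linarith
  have hgu_ne : ∀ n, g (u n) ≠ 0 := fun n hgu => by
    have : u n ≤ c := le_csSup hZbdd ⟨hu_pos n, hgu⟩
    exact absurd this (not_le.2 (hu_gt n))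
  have hval : ∀ t : ℝ, 0 ≤ t → ∫ ω, B t ω * B t ω ∂P = g t := by
    intro t ht
    rw [hB_cov t ht t ht, sub_self, abs_zero, hg_zero]
    ring
  have hInt : ∀ n, Integrable (fun ω => B (u n) ω * B (u n) ω) P := by
    intro n
    by_contra hni
    have h0 := integral_undef hni
    rw [hval (u n) (hu_pos n)] at h0
    exact hgu_ne n h0
  have hu_tend : Tendsto u atTop (nhds c) := by
    have h1 := tendsto_one_div_add_atTop_nhds_zero_nat (𝕜 := ℝ)
    have := tendsto_const_nhds.add h1 (f := fun _ : ℕ => c) (x := atTop)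
    simpa [hudef] using this
  have key : ∀ᵐ ω ∂P, B c ω = 0 := by
    have hmeasn : ∀ n, Measurable (fun ω => ENNReal.ofReal (B (u n) ω * B (u n) ω)) :=
      fun n => ENNReal.measurable_ofReal.comp ((hBt _).mul (hBt _))
    have hFatou := lintegral_liminf_le (μ := P) (u := atTop) hmeasn
    have h1 : ∀ᵐ ω ∂P, Filter.liminf (fun n => ENNReal.ofReal (B (u n) ω * B (u n) ω)) atTop
        = ENNReal.ofReal (B c ω * B c ω) := by
      filter_upwards [hB_cont] with ω hω
      have hbc : Tendsto (fun n => B (u n) ω) atTop (nhds (B c ω)) :=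
        ((hω.tendsto c).comp hu_tend)
      exact ((ENNReal.continuous_ofReal.tendsto _).comp (hbc.mul hbc)).liminf_eq
    rw [lintegral_congr_ae h1] at hFatou
    have h2 : (fun n => ∫⁻ ω, ENNReal.ofReal (B (u n) ω * B (u n) ω) ∂P)
        = fun n => ENNReal.ofReal (g (u n)) := by
      funext n
      rw [← ofReal_integral_eq_lintegral_ofReal (hInt n)
        (Filter.Eventually.of_forall fun ω => mul_self_nonneg _), hval (u n) (hu_pos n)]
    rw [h2] at hFatou
    have h3 : Tendsto (fun n => ENNReal.ofReal (g (u n))) atTop (nhds 0) := by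
      have hgcont : Tendsto (fun n => g (u n)) atTop (nhds (g c)) := by
        have hcw : ContinuousWithinAt g (Set.Ici 0) c := hg_cont c hc0
        refine hcw.tendsto.comp ?_
        exact tendsto_nhdsWithin_iff.2 ⟨hu_tend, Filter.Eventually.of_forall hu_pos⟩
      rw [hgc] at hgcont
      have := (ENNReal.continuous_ofReal.tendsto 0).comp hgcont
      simpa [Function.comp_def] using this
    rw [h3.liminf_eq] at hFatou
    have h5 : ∫⁻ ω, ENNReal.ofReal (B c ω * B c ω) ∂P = 0 :=
      le_antisymm hFatou zero_le
    have h6 := (lintegral_eq_zero_iff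
      (ENNReal.measurable_ofReal.comp ((hBt c).mul (hBt c)))).1 h5
    filter_upwards [h6] with ω hω
    have hle : B c ω * B c ω ≤ 0 := by
      simpa [ENNReal.ofReal_eq_zero] using hω
    have : B c ω * B c ω = 0 := le_antisymm hle (mul_self_nonneg _)
    exact mul_self_eq_zero.1 this
  have hper : ∀ x : ℝ, 0 ≤ x → g (x + c) = g x := by
    intro x hx
    have hzero : ∫ ω, B c ω * B (x + c) ω ∂P = 0 := by
      have heq : (fun ω => B c ω * B (x + c) ω) =ᵐ[P] fun _ => 0 := by
        filter_upwards [key] with ω hω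
        simp [hω]
      rw [integral_congr_ae heq, integral_zero]
    have hcov := hB_cov c hc0 (x + c) (by linarith)
    rw [hzero] at hcov
    have habs : |x + c - c| = x := by
      rw [add_sub_cancel_right, abs_of_nonneg hx]
    rw [habs, hgc] at hcov
    linarith
  have hiter : ∀ n : ℕ, g (t0 + n * c) = 0 := by
    intro n
    induction n with
    | zero => simpa using hgt0
    | succ n ih =>
      have hrw : t0 + ((n:ℕ) + 1 : ℕ) * c = (t0 + n * c) + c := by push_cast; ring
      rw [hrw, hper _ (by positivity)]
      exact ih
  have htend : Tendsto (fun n : ℕ => g (t0 + n * c)) atTop (nhds α2) :=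
    hg_lim.comp (tendsto_atTop_add_const_left _ t0
      (tendsto_natCast_atTop_atTop.atTop_mul_const hcpos))
  have hzero : Tendsto (fun n : ℕ => g (t0 + n * c)) atTop (nhds 0) := by
    have : (fun n : ℕ => g (t0 + n * c)) = fun _ => (0:ℝ) := funext hiter
    rw [this]
    exact tendsto_const_nhds
  have : α2 = 0 := tendsto_nhds_unique htend hzero
  linarith

theorem cov_BU_formula
    {Ω : Type*} [MeasurableSpace Ω] (P : Measure Ω) [IsProbabilityMeasure P]
    (b α2 : ℝ) (hb : 0 < b) (hα2 : 0 < α2)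
    (g : ℝ → ℝ)
    (hg_cont : ContinuousOn g (Set.Ici 0))
    (hg_bdd : ∃ C, ∀ t, 0 ≤ t → |g t| ≤ C)
    (hg_nonneg : ∀ t, 0 ≤ t → 0 ≤ g t)
    (hg_zero : g 0 = 0)
    (hg_lim : Tendsto g atTop (nhds α2))
    (B : ℝ → Ω → ℝ)
    (hB_meas : Measurable fun p : ℝ × Ω => B p.1 p.2)
    (hB_cont : ∀ᵐ ω ∂P, Continuous fun t => B t ω)
    (hB_zero : ∀ ω, B 0 ω = 0)
    (hB_mean : ∀ t, 0 ≤ t → ∫ ω, B t ω ∂P = 0)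
    (hB_cov : ∀ s, 0 ≤ s → ∀ t, 0 ≤ t →
      ∫ ω, B s ω * B t ω ∂P = (g t + g s - g |t - s|) / 2)
    (U : ℝ → Ω → ℝ)
    (hU : ∀ T ω, U T ω = Real.exp (-b * T) * ∫ t in (0:ℝ)..T, Real.exp (b * t) * B t ω)
    :
    ∀ T, 0 < T →
      ∫ ω, B T ω * U T ω ∂P =
        1 / (2 * b) * g T - 1 / (2 * b) * Real.exp (-b * T) * g T
          + 1 / 2 * Real.exp (-b * T) * (∫ s in (0:ℝ)..T, Real.exp (b * s) * g s)
          - 1 / 2 * ∫ s in (0:ℝ)..T, Real.exp (-b * s) * g s := by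
  intro T hT
  have hgpos : ∀ t, 0 < t → 0 < g t :=
    g_pos_aux P α2 hα2 g hg_cont hg_nonneg hg_zero hg_lim B hB_meas hB_cont hB_cov
  obtain ⟨C, hC⟩ := hg_bdd
  have hC0 : 0 ≤ C := (abs_nonneg _).trans (hC 0 le_rfl)
  have hBt : ∀ t : ℝ, Measurable (fun ω => B t ω) := fun t =>
    hB_meas.comp (measurable_const.prodMk measurable_id)
  have hval : ∀ t : ℝ, 0 ≤ t → ∫ ω, B t ω * B t ω ∂P = g t := by
    intro t ht
    rw [hB_cov t ht t ht, sub_self, abs_zero, hg_zero]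
    ring
  have hIsq : ∀ t, 0 < t → Integrable (fun ω => B t ω * B t ω) P := by
    intro t ht
    by_contra hni
    have h0 := integral_undef hni
    rw [hval t ht.le] at h0
    exact absurd h0 (hgpos t ht).ne'
  have hIT : Integrable (fun ω => B T ω * B T ω) P := hIsq T hT
  have hprodle : ∀ t ω, |B T ω * B t ω| ≤ (B T ω * B T ω + B t ω * B t ω) / 2 := by
    intro t ω
    nlinarith [abs_mul (B T ω) (B t ω), sq_nonneg (|B T ω| - |B t ω|),
      sq_abs (B T ω), sq_abs (B t ω), abs_nonneg (B T ω), abs_nonneg (B t ω),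
      sq (B T ω)]
  have hIprod : ∀ t, 0 < t → Integrable (fun ω => B T ω * B t ω) P := by
    intro t ht
    refine Integrable.mono' ((hIT.add (hIsq t ht)).div_const 2)
      (((hBt T).mul (hBt t)).aestronglyMeasurable)
      (Filter.Eventually.of_forall fun ω => ?_)
    rw [Real.norm_eq_abs]
    exact hprodle t ω
  have hprodval : ∀ t, 0 < t → t ≤ T →
      ∫ ω, B T ω * B t ω ∂P = (g t + g T - g (T - t)) / 2 := by
    intro t ht htT
    rw [hB_cov T hT.le t ht.le, abs_sub_comm, abs_of_nonneg (by linarith : (0:ℝ) ≤ T - t)]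
  have hnormbound : ∀ t, 0 < t → t ≤ T → ∫ ω, |B T ω * B t ω| ∂P ≤ C := by
    intro t ht htT
    have h1 : ∫ ω, |B T ω * B t ω| ∂P ≤ ∫ ω, (B T ω * B T ω + B t ω * B t ω) / 2 ∂P :=
      integral_mono (hIprod t ht).abs ((hIT.add (hIsq t ht)).div_const 2) (hprodle t)
    have h2 : ∫ ω, (B T ω * B T ω + B t ω * B t ω) / 2 ∂P = (g T + g t) / 2 := by
      rw [integral_div, integral_add hIT (hIsq t ht), hval T hT.le, hval t ht.le]
    have hgTC := (abs_le.1 (hC T hT.le)).2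
    have hgtC := (abs_le.1 (hC t ht.le)).2
    rw [h2] at h1
    linarith
  -- Fubini setup
  set ν : Measure ℝ := volume.restrict (Set.Ioc (0:ℝ) T) with hνdef
  haveI : IsFiniteMeasure ν := ⟨by rw [Measure.restrict_apply_univ]; exact measure_Ioc_lt_top⟩
  set f : Ω → ℝ → ℝ := fun ω t => Real.exp (b * t) * (B T ω * B t ω) with hfdef
  have hfmeas : Measurable (Function.uncurry f) := by
    apply Measurable.mul
    · exact Real.measurable_exp.comp (measurable_const.mul measurable_snd)
    · exact ((hBt T).comp measurable_fst).mul (hB_meas.comp measurable_swap)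
  have hfint : Integrable (Function.uncurry f) (P.prod ν) := by
    refine (integrable_prod_iff' hfmeas.aestronglyMeasurable).2 ⟨?_, ?_⟩
    · refine (ae_restrict_iff' measurableSet_Ioc).2 (Filter.Eventually.of_forall fun t ht => ?_)
      show Integrable (fun ω => Real.exp (b * t) * (B T ω * B t ω)) P
      exact (hIprod t ht.1).const_mul _
    · refine Integrable.mono' (integrable_const (Real.exp (b * T) * C))
        (hfmeas.norm.stronglyMeasurable.integral_prod_left').aestronglyMeasurable ?_
      refine (ae_restrict_iff' measurableSet_Ioc).2 (Filter.Eventually.of_forall fun t ht => ?_)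
      have h1 : ∫ ω, ‖Function.uncurry f (ω, t)‖ ∂P
          = Real.exp (b * t) * ∫ ω, |B T ω * B t ω| ∂P := by
        rw [← MeasureTheory.integral_const_mul]
        congr 1
        funext ω
        simp only [Function.uncurry, hfdef, Real.norm_eq_abs, abs_mul,
          abs_of_pos (Real.exp_pos _)]
      rw [h1, Real.norm_eq_abs, abs_of_nonneg (mul_nonneg (Real.exp_pos _).le
        (integral_nonneg fun ω => abs_nonneg _))]
      have he : Real.exp (b * t) ≤ Real.exp (b * T) :=
        Real.exp_le_exp.2 (mul_le_mul_of_nonneg_left ht.2 hb.le)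
      exact mul_le_mul he (hnormbound t ht.1 ht.2)
        (integral_nonneg fun ω => abs_nonneg _) (Real.exp_pos _).le
  -- Main chain
  have step1 : ∫ ω, B T ω * U T ω ∂P
      = Real.exp (-b * T) * ∫ ω, ∫ t, f ω t ∂ν ∂P := by
    rw [← MeasureTheory.integral_const_mul]
    refine integral_congr_ae (Filter.Eventually.of_forall fun ω => ?_)
    show B T ω * U T ω = Real.exp (-b * T) * ∫ t, f ω t ∂ν
    rw [hU T ω]
    have h2 : ∫ t in (0:ℝ)..T, Real.exp (b * t) * (B T ω * B t ω)
        = B T ω * ∫ t in (0:ℝ)..T, Real.exp (b * t) * B t ω := by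
      rw [← intervalIntegral.integral_const_mul]
      congr 1
      funext t
      ring
    have h3 : ∫ t, f ω t ∂ν = ∫ t in (0:ℝ)..T, Real.exp (b * t) * (B T ω * B t ω) := by
      rw [intervalIntegral.integral_of_le hT.le]
    rw [h3, h2]
    ring
  have step2 : ∫ ω, ∫ t, f ω t ∂ν ∂P = ∫ t, ∫ ω, f ω t ∂P ∂ν :=
    integral_integral_swap hfint
  have step3 : ∫ t, ∫ ω, f ω t ∂P ∂ν
      = ∫ t in (0:ℝ)..T, Real.exp (b * t) * ((g t + g T - g (T - t)) / 2) := by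
    rw [intervalIntegral.integral_of_le hT.le]
    refine setIntegral_congr_fun measurableSet_Ioc fun t ht => ?_
    show ∫ ω, Real.exp (b * t) * (B T ω * B t ω) ∂P = _
    rw [MeasureTheory.integral_const_mul, hprodval t ht.1 ht.2]
  -- calculus
  have hKIcc : Set.uIcc (0:ℝ) T = Set.Icc 0 T := Set.uIcc_of_le hT.le
  have hgI : ContinuousOn g (Set.Icc 0 T) := hg_cont.mono (fun x hx => hx.1)
  have hexpc : Continuous (fun t : ℝ => Real.exp (b * t)) :=
    Real.continuous_exp.comp (continuous_const.mul continuous_id)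
  have hint1 : IntervalIntegrable (fun t => Real.exp (b * t)) volume 0 T :=
    hexpc.intervalIntegrable 0 T
  have hint2 : IntervalIntegrable (fun t => Real.exp (b * t) * g t) volume 0 T := by
    apply ContinuousOn.intervalIntegrable
    rw [hKIcc]
    exact hexpc.continuousOn.mul hgI
  have hint3 : IntervalIntegrable (fun t => Real.exp (b * t) * g (T - t)) volume 0 T := by
    apply ContinuousOn.intervalIntegrable
    rw [hKIcc]
    refine hexpc.continuousOn.mul (hg_cont.comp (continuous_const.sub continuous_id).continuousOn ?_)
    intro x hx
    simp only [Set.mem_Icc] at hx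
    exact Set.mem_Ici.2 (by linarith [hx.2])
  have hI1 : ∫ t in (0:ℝ)..T, Real.exp (b * t) = (Real.exp (b * T) - 1) / b := by
    rw [intervalIntegral.integral_comp_mul_left Real.exp hb.ne']
    rw [mul_zero, integral_exp, Real.exp_zero, smul_eq_mul]
    field_simp
  have hI3 : ∫ t in (0:ℝ)..T, Real.exp (b * t) * g (T - t)
      = Real.exp (b * T) * ∫ s in (0:ℝ)..T, Real.exp (-b * s) * g s := by
    have h1 : ∀ t, Real.exp (b * t) * g (T - t)
        = (fun s => Real.exp (b * T) * (Real.exp (-b * s) * g s)) (T - t) := by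
      intro t
      show _ = Real.exp (b * T) * (Real.exp (-b * (T - t)) * g (T - t))
      rw [← mul_assoc, ← Real.exp_add]
      ring_nf
    calc ∫ t in (0:ℝ)..T, Real.exp (b * t) * g (T - t)
        = ∫ t in (0:ℝ)..T, (fun s => Real.exp (b * T) * (Real.exp (-b * s) * g s)) (T - t) :=
          intervalIntegral.integral_congr (fun t _ => h1 t)
      _ = ∫ s in T - T..T - 0, Real.exp (b * T) * (Real.exp (-b * s) * g s) :=
          intervalIntegral.integral_comp_sub_left
            (fun s => Real.exp (b * T) * (Real.exp (-b * s) * g s)) T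
      _ = Real.exp (b * T) * ∫ s in (0:ℝ)..T, Real.exp (-b * s) * g s := by
          rw [sub_self, sub_zero, intervalIntegral.integral_const_mul]
  have hsplit : (fun t => Real.exp (b * t) * ((g t + g T - g (T - t)) / 2))
      = fun t => (g T / 2 * Real.exp (b * t) + 1 / 2 * (Real.exp (b * t) * g t))
          - 1 / 2 * (Real.exp (b * t) * g (T - t)) := funext fun t => by ring
  have hmain : ∫ t in (0:ℝ)..T, Real.exp (b * t) * ((g t + g T - g (T - t)) / 2)
      = g T / 2 * ((Real.exp (b * T) - 1) / b)
        + 1 / 2 * (∫ s in (0:ℝ)..T, Real.exp (b * s) * g s)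
        - 1 / 2 * (Real.exp (b * T) * ∫ s in (0:ℝ)..T, Real.exp (-b * s) * g s) := by
    rw [hsplit, intervalIntegral.integral_sub ((hint1.const_mul _).add (hint2.const_mul _))
      (hint3.const_mul _), intervalIntegral.integral_add (hint1.const_mul _) (hint2.const_mul _),
      intervalIntegral.integral_const_mul, intervalIntegral.integral_const_mul,
      intervalIntegral.integral_const_mul, hI1, hI3]
  rw [step1, step2, step3, hmain]
  have hexpne := Real.exp_ne_zero (b * T)
  rw [neg_mul, Real.exp_neg]
  field_simp
end
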